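/- arXiv:1101.4442 — 8 statements merged into one kernel-verified Lean document; each statement's English description precedes it below -/
import Mathlib

section
/- There exist infinitely many squarefree integers D > 1 with D ≡ 1 (mod 4) such that the ring of integers O_K of the real quadratic field K = ℚ(√D) contains a nonzero ideal I for which the planar lattice Λ_K(I) is well-rounded. -/
open NumberField

/-- The squared Euclidean norm of the image of `x : K` under the embedding
`σ : K → ℝ^d`, `σ(x) = (σ₁(x),…,σ_{r₁}(x), Re τ₁(x), Im τ₁(x),…)`; it equals
the sum over all infinite places `w` of `K` of `(w x)^2`. -/
noncomputable def sqNorm (K : Type*) [Field K] [NumberField K] (x : K) : ℝ :=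
  ∑ w : InfinitePlace K, (w x) ^ 2

/-- The minimum `|Λ|` of the lattice `σ(S)`: the infimum of the squared Euclidean
norms of images of nonzero elements of `S ⊆ K`. -/
noncomputable def latMin (K : Type*) [Field K] [NumberField K] (S : Set K) : ℝ :=
  sInf {r : ℝ | ∃ x ∈ S, x ≠ 0 ∧ sqNorm K x = r}

/-- The elements of `S ⊆ K` whose images under `σ` are minimal vectors of the
lattice `σ(S)`. -/
def minVecs (K : Type*) [Field K] [NumberField K] (S : Set K) : Set K :=
  {x ∈ S | sqNorm K x = latMin K S}

/-- The lattice `σ(S) ⊆ ℝ^d` is well-rounded: its minimal vectors span `ℝ^d`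
(identified with the mixed space `ℝ^{r₁} × ℂ^{r₂}`). -/
def IsWellRounded (K : Type*) [Field K] [NumberField K] (S : Set K) : Prop :=
  Submodule.span ℝ (mixedEmbedding K '' minVecs K S) = ⊤



section Aux

variable {K : Type} [Field K] [NumberField K]

lemma ratcast_ne_of_sq (D : ℤ) (hsf : Squarefree D) (hD1 : 1 < D) (α : K)
    (hα : α ^ 2 = (D : K)) (q : ℚ) : (q : K) ≠ α := by
  intro h
  have hq2 : (q : ℚ) ^ 2 = (D : ℚ) := by
    have h2 : ((q ^ 2 : ℚ) : K) = ((D : ℚ) : K) := by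
      push_cast
      rw [h, hα]
    exact_mod_cast h2
  have hint : IsIntegral ℤ q := by
    refine ⟨Polynomial.X ^ 2 - Polynomial.C D, ?_, ?_⟩
    · apply Polynomial.monic_X_pow_sub
      exact Polynomial.degree_C_le.trans_lt (by norm_num)
    · rw [Polynomial.eval₂_sub, Polynomial.eval₂_pow, Polynomial.eval₂_X, Polynomial.eval₂_C]
      simp [hq2]
  obtain ⟨k, hk⟩ := IsIntegrallyClosed.isIntegral_iff.mp hint
  have hk' : (k : ℚ) = q := hk
  have hkD : k * k = D := by
    have h3 : ((k * k : ℤ) : ℚ) = ((D : ℤ) : ℚ) := by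
      push_cast [← hk'] at hq2 ⊢
      nlinarith [hq2]
    exact_mod_cast h3
  have hu := hsf k ⟨1, by rw [mul_one, hkD]⟩
  rcases Int.isUnit_iff.mp hu with h1 | h1 <;> rw [h1] at hkD <;> norm_num at hkD <;> omega

lemma li_one_alpha (D : ℤ) (hsf : Squarefree D) (hD1 : 1 < D) (α : K)
    (hα : α ^ 2 = (D : K)) : LinearIndependent ℚ ![(1 : K), α] := by
  rw [LinearIndependent.pair_iff]
  intro s t hst
  rw [Rat.smul_def, Rat.smul_def, mul_one] at hst
  by_cases ht : t = 0
  · subst ht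
    norm_num at hst
    exact ⟨by exact_mod_cast hst, rfl⟩
  · exfalso
    apply ratcast_ne_of_sq D hsf hD1 α hα (-s / t)
    have htK : (t : K) ≠ 0 := by exact_mod_cast ht
    rw [Rat.cast_div, Rat.cast_neg, div_eq_iff htK]
    linear_combination -hst

variable (D : ℤ) (α : K)

omit [NumberField K] in
lemma range_pair : Set.range ![(1 : K), α] = {(1 : K), α} := by
  ext z
  simp [Fin.exists_fin_two, or_comm]

lemma coords (hsf : Squarefree D) (hD1 : 1 < D) (hα : α ^ 2 = (D : K))
    (hrank : Module.finrank ℚ K = 2) (x : K) :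
    ∃ c d : ℚ, x = (c : K) + (d : K) * α := by
  have hli := li_one_alpha D hsf hD1 α hα
  have hsp := hli.span_eq_top_of_card_eq_finrank (by simp [hrank])
  have hx : x ∈ Submodule.span ℚ {(1 : K), α} := by
    rw [← range_pair α, hsp]
    trivial
  obtain ⟨a, b, hab⟩ := Submodule.mem_span_pair.mp hx
  exact ⟨a, b, by rw [← hab, Rat.smul_def, Rat.smul_def, mul_one]⟩

lemma coords_unique (hsf : Squarefree D) (hD1 : 1 < D) (hα : α ^ 2 = (D : K))
    {c d c' d' : ℚ} (h : (c : K) + (d : K) * α = (c' : K) + (d' : K) * α) :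
    c = c' ∧ d = d' := by
  have hli := li_one_alpha D hsf hD1 α hα
  have h2 := LinearIndependent.pair_iff.mp hli (c - c') (d - d') ?_
  · constructor <;> [linarith [h2.1]; linarith [h2.2]]
  · rw [Rat.smul_def, Rat.smul_def, mul_one]
    push_cast
    linear_combination h

end Aux

open NumberField

section Aux2
variable {K : Type} [Field K] [NumberField K] (D : ℤ) (α : K)

omit [NumberField K] in
lemma embed_eval (χ : K →+* ℂ) (c d : ℚ) :
    χ ((c : K) + (d : K) * α) = (c : ℂ) + (d : ℂ) * χ α := by
  rw [map_add, map_mul, map_ratCast, map_ratCast]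

lemma two_embeddings (hsf : Squarefree D) (hD1 : 1 < D) (hα : α ^ 2 = (D : K))
    (hrank : Module.finrank ℚ K = 2) :
    ∃ φ ψ : K →+* ℂ, φ ≠ ψ ∧ (∀ χ : K →+* ℂ, χ = φ ∨ χ = ψ) ∧ ψ α = -(φ α) ∧
      (φ α) ^ 2 = (D : ℂ) ∧ (∀ χ : K →+* ℂ, ComplexEmbedding.IsReal χ) := by
  classical
  have hD1R : (1 : ℝ) < (D : ℝ) := by exact_mod_cast hD1
  have hsq : ∀ χ : K →+* ℂ, (χ α) ^ 2 = (D : ℂ) := fun χ => by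
    rw [← map_pow, hα, map_intCast]
  have him : ∀ χ : K →+* ℂ, (χ α).im = 0 := by
    intro χ
    have h := hsq χ
    rw [sq] at h
    have h1 : (χ α).re * (χ α).re - (χ α).im * (χ α).im = (D : ℝ) := by
      have := congrArg Complex.re h
      rwa [Complex.mul_re, Complex.intCast_re] at this
    have h2 : (χ α).re * (χ α).im + (χ α).im * (χ α).re = 0 := by
      have := congrArg Complex.im h
      rwa [Complex.mul_im, Complex.intCast_im] at this
    have h3 : (χ α).re * (χ α).im = 0 := by linarith
    rcases mul_eq_zero.mp h3 with h4 | h4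
    · nlinarith
    · exact h4
  have hreal : ∀ χ : K →+* ℂ, ComplexEmbedding.IsReal χ := by
    intro χ
    rw [NumberField.ComplexEmbedding.isReal_iff]
    ext x
    obtain ⟨c, d, hx⟩ := coords D α hsf hD1 hα hrank x
    rw [ComplexEmbedding.conjugate_coe_eq, hx, embed_eval, map_add, map_mul]
    simp [Complex.conj_eq_iff_im.mpr (him χ)]
  have hcard : Fintype.card (K →+* ℂ) = 2 := by
    rw [NumberField.Embeddings.card K ℂ, hrank]
  have : Nontrivial (K →+* ℂ) := Fintype.one_lt_card_iff_nontrivial.mp (by omega)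
  obtain ⟨φ, ψ, hne⟩ := exists_pair_ne (K →+* ℂ)
  have huniv : ∀ χ : K →+* ℂ, χ = φ ∨ χ = ψ := by
    intro χ
    have hU : ({φ, ψ} : Finset (K →+* ℂ)) = Finset.univ :=
      Finset.eq_univ_of_card _ (by rw [Finset.card_pair hne, hcard])
    have : χ ∈ ({φ, ψ} : Finset (K →+* ℂ)) := by rw [hU]; exact Finset.mem_univ χ
    simpa using this
  refine ⟨φ, ψ, hne, huniv, ?_, hsq φ, hreal⟩
  have hz : (ψ α - φ α) * (ψ α + φ α) = 0 := by
    linear_combination hsq ψ - hsq φ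
  rcases mul_eq_zero.mp hz with h | h
  · exfalso
    apply hne
    ext x
    obtain ⟨c, d, hx⟩ := coords D α hsf hD1 hα hrank x
    rw [hx, embed_eval, embed_eval]
    have heq : φ α = ψ α := (sub_eq_zero.mp h).symm
    rw [heq]
  · linear_combination h

lemma sqNorm_formula (hsf : Squarefree D) (hD1 : 1 < D) (hα : α ^ 2 = (D : K))
    (hrank : Module.finrank ℚ K = 2) (c d : ℚ) :
    sqNorm K ((c : K) + (d : K) * α) = 2 * (c : ℝ) ^ 2 + 2 * (d : ℝ) ^ 2 * (D : ℝ) := by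
  classical
  obtain ⟨φ, ψ, hne, huniv, hopp, hsqφ, hreal⟩ := two_embeddings D α hsf hD1 hα hrank
  have hbij : Function.Bijective (InfinitePlace.mk : (K →+* ℂ) → InfinitePlace K) := by
    constructor
    · intro χ₁ χ₂ h
      rcases InfinitePlace.mk_eq_iff.mp h with h | h
      · exact h
      · rw [← h, NumberField.ComplexEmbedding.isReal_iff.mp (hreal χ₁)]
    · intro w
      exact ⟨w.embedding, InfinitePlace.mk_embedding w⟩
  set x : K := (c : K) + (d : K) * α with hxdef
  have hsum : sqNorm K x = ∑ χ : K →+* ℂ, (‖χ x‖) ^ 2 := by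
    unfold sqNorm
    exact (Fintype.sum_bijective _ hbij _ _ (fun χ => by rw [InfinitePlace.apply])).symm
  have huniv' : (Finset.univ : Finset (K →+* ℂ)) = {φ, ψ} := by
    ext χ; simp [huniv χ]
  rw [hsum, huniv', Finset.sum_pair hne]
  have hz : (φ α).re ^ 2 + (φ α).im ^ 2 = (D : ℝ) := by
    have h1 : Complex.normSq (φ α) = ‖(φ α) ^ 2‖ := by
      rw [norm_pow, ← Complex.sq_norm]
    rw [hsqφ] at h1
    have h2 : ‖((D : ℤ) : ℂ)‖ = (D : ℝ) := by
      rw [Complex.norm_intCast]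
      exact_mod_cast abs_of_nonneg (by omega : (0:ℤ) ≤ D)
    have := h1.trans h2
    simpa [Complex.normSq_apply, sq] using this
  rw [hxdef, embed_eval, embed_eval, hopp]
  rw [Complex.sq_norm, Complex.sq_norm]
  simp only [Complex.normSq_apply, Complex.add_re, Complex.add_im, Complex.mul_re,
    Complex.mul_im, Complex.ratCast_re, Complex.ratCast_im, Complex.neg_re, Complex.neg_im]
  ring_nf
  nlinarith [hz]

end Aux2

section Aux3
variable {K : Type} [Field K] [NumberField K] (D : ℤ) (α : K)

lemma integral_coords (hsf : Squarefree D) (hD1 : 1 < D) (hα : α ^ 2 = (D : K))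
    (hrank : Module.finrank ℚ K = 2) (hDodd : D % 2 = 1) (x : K) (hx : IsIntegral ℤ x) :
    ∃ m n : ℤ, x = ((m : K) + (n : K) * α) / 2 ∧ m % 2 = n % 2 := by
  obtain ⟨c, d, hcd⟩ := coords D α hsf hD1 hα hrank x
  by_cases hd : d = 0
  · have hcK : x = ((c : ℚ) : K) := by rw [hcd, hd]; push_cast; ring
    have hci : IsIntegral ℤ c := by
      rw [hcK, show ((c : ℚ) : K) = algebraMap ℚ K c from (eq_ratCast (algebraMap ℚ K) c).symm]
        at hx
      exact (isIntegral_algebraMap_iff (algebraMap ℚ K).injective).mp hx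
    obtain ⟨k, hk⟩ := IsIntegrallyClosed.isIntegral_iff.mp hci
    refine ⟨2 * k, 0, ?_, by omega⟩
    have hk' : (k : ℚ) = c := hk
    rw [hcK, ← hk']
    push_cast
    ring
  · set b : ℚ := -(2 * c) with hb
    set e : ℚ := c ^ 2 - (D : ℚ) * d ^ 2 with he
    set p : Polynomial ℚ := Polynomial.X ^ 2 +
      (Polynomial.C b * Polynomial.X + Polynomial.C e) with hp
    have hpmonic : p.Monic := by
      apply Polynomial.monic_X_pow_add
      exact Polynomial.degree_linear_le.trans_lt (by norm_num)
    have hdeg2 : p.natDegree = 2 := by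
      rw [hp]
      compute_degree!
    have hroot : Polynomial.aeval x p = 0 := by
      simp only [hp, map_add, map_mul, map_pow, Polynomial.aeval_X, Polynomial.aeval_C]
      rw [eq_ratCast, eq_ratCast, hcd, hb, he]
      push_cast
      linear_combination ((d : K) ^ 2) * hα
    have hxQ : IsIntegral ℚ x := IsIntegral.of_finite ℚ x
    have hmono := minpoly.monic hxQ
    have hdvd := minpoly.dvd ℚ x hroot
    have hdle : (minpoly ℚ x).natDegree ≤ 2 := by
      rw [← hdeg2]
      exact Polynomial.natDegree_le_of_dvd hdvd hpmonic.ne_zero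
    have hdpos : 0 < (minpoly ℚ x).natDegree := minpoly.natDegree_pos hxQ
    by_cases h1 : (minpoly ℚ x).natDegree = 1
    · exfalso
      have hXC := hmono.eq_X_add_C h1
      have : Polynomial.aeval x (minpoly ℚ x) = 0 := minpoly.aeval ℚ x
      rw [hXC] at this
      simp only [map_add, Polynomial.aeval_X, Polynomial.aeval_C] at this
      set a : ℚ := (minpoly ℚ x).coeff 0
      rw [eq_ratCast] at this
      rw [hcd] at this
      apply ratcast_ne_of_sq D hsf hD1 α hα ((-a - c) / d)
      have hdK : (d : K) ≠ 0 := by exact_mod_cast hd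
      rw [Rat.cast_div, div_eq_iff hdK]
      push_cast
      linear_combination -this
    · have h2 : (minpoly ℚ x).natDegree = 2 := by omega
      have hpeq : minpoly ℚ x = p := by
        apply Polynomial.eq_of_dvd_of_natDegree_le_of_leadingCoeff hdvd
        · omega
        · rw [hmono.leadingCoeff, hpmonic.leadingCoeff]
      have hmap := minpoly.isIntegrallyClosed_eq_field_fractions' ℚ hx
      set P : Polynomial ℤ := minpoly ℤ x with hP
      have hcoeff1 : ((P.coeff 1 : ℤ) : ℚ) = b := by
        have := congrArg (fun q => Polynomial.coeff q 1) (hpeq.symm.trans hmap)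
        simpa [hp, Polynomial.coeff_map] using this.symm
      have hcoeff0 : ((P.coeff 0 : ℤ) : ℚ) = e := by
        have := congrArg (fun q => Polynomial.coeff q 0) (hpeq.symm.trans hmap)
        simpa [hp, Polynomial.coeff_map] using this.symm
      set m : ℤ := -(P.coeff 1) with hm
      have hmc : (m : ℚ) = 2 * c := by rw [hm]; push_cast [hcoeff1]; rw [hb]; ring
      set F : ℤ := m ^ 2 - 4 * P.coeff 0 with hF
      set r : ℚ := 2 * d with hr
      have hrF : (D : ℚ) * r ^ 2 = (F : ℚ) := by
        rw [hr, hF]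
        push_cast [hcoeff0]
        rw [he]
        linear_combination (-(m : ℚ) - 2 * c) * hmc
      have hden : r.den = 1 := by
        have hrd : ((r.den : ℤ) : ℚ) ≠ 0 := by
          exact_mod_cast (Nat.cast_ne_zero (R := ℚ)).mpr r.den_ne_zero
        have hrr : r = (r.num : ℚ) / ((r.den : ℤ) : ℚ) := by
          rw [Int.cast_natCast, Rat.num_div_den r]
        rw [hrr] at hrF
        field_simp at hrF
        have h3 : D * r.num ^ 2 = F * (r.den : ℤ) ^ 2 := by rw [mul_comm F]; exact_mod_cast hrF
        have hdvd2 : ((r.den : ℤ)) ^ 2 ∣ D * r.num ^ 2 := ⟨F, by linarith⟩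
        have hcop : IsCoprime ((r.den : ℤ)) r.num := by
          rw [Int.isCoprime_iff_gcd_eq_one]
          have : Int.gcd ((r.den : ℤ)) r.num = Nat.gcd r.den r.num.natAbs := by
            simp [Int.gcd]
          rw [this]
          exact Nat.Coprime.symm r.reduced
        have hdvdD : ((r.den : ℤ)) ^ 2 ∣ D :=
          (hcop.pow (n := 2) (m := 2)).dvd_of_dvd_mul_right hdvd2
        have hu := hsf ((r.den : ℤ)) (by rwa [← sq])
        rcases Int.isUnit_iff.mp hu with h | h <;> omega
      set n : ℤ := r.num with hn
      have hnd : (n : ℚ) = 2 * d := by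
        rw [hn, ← hr]
        have := Rat.num_div_den r
        rw [hden] at this
        simpa using this
      refine ⟨m, n, ?_, ?_⟩
      · rw [hcd]
        have h2K : (2 : K) ≠ 0 := two_ne_zero
        field_simp
        have hmK : ((m : ℤ) : K) = 2 * (c : K) := by exact_mod_cast (by exact_mod_cast hmc : ((m : ℚ) : K) = ((2 * c : ℚ) : K))
        have hnK : ((n : ℤ) : K) = 2 * (d : K) := by exact_mod_cast (by exact_mod_cast hnd : ((n : ℚ) : K) = ((2 * d : ℚ) : K))
        rw [hmK, hnK]
        ring
      · have hEq : m ^ 2 - D * n ^ 2 = 4 * P.coeff 0 := by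
          have : ((m ^ 2 - D * n ^ 2 : ℤ) : ℚ) = ((4 * P.coeff 0 : ℤ) : ℚ) := by
            push_cast [hmc, hnd, hcoeff0]
            rw [he]
            ring
          exact_mod_cast this
        have hmm : ∀ a : ℤ, a ^ 2 % 2 = a % 2 := by
          intro a
          have h2 : a ^ 2 % 2 = ((a % 2) * (a % 2)) % 2 := by rw [sq, Int.mul_emod]
          have ha : a % 2 = 0 ∨ a % 2 = 1 := by omega
          rcases ha with h | h <;> rw [h2, h] <;> norm_num
        have hnn : (D * n ^ 2) % 2 = n % 2 := by
          have h2 : (D * n ^ 2) % 2 = ((D % 2) * (n ^ 2 % 2)) % 2 := by rw [Int.mul_emod]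
          rw [h2, hDodd, hmm n]
          omega
        have := hmm m
        omega
end Aux3

section Main

lemma range_pair2 {β : Type*} (x y : β) : Set.range ![x, y] = {x, y} := by
  ext z
  simp [Fin.exists_fin_two, or_comm]

set_option maxHeartbeats 1000000 in
lemma main_construction (s t D : ℤ) (hs1 : 1 ≤ s) (ht1 : 1 ≤ t)
    (hsodd : s % 2 = 1) (htodd : t % 2 = 1)
    (hts : t ≤ 3 * s) (hst3 : s ≤ 3 * t) (hD : D = s * t)
    (hsf : Squarefree D) (hD1 : 1 < D) (hD4 : D % 4 = 1)
    (K : Type) [Field K] [NumberField K] (hrank : Module.finrank ℚ K = 2)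
    (α : K) (hα : α ^ 2 = (D : K)) :
    ∃ I : Ideal (𝓞 K), I ≠ ⊥ ∧
      IsWellRounded K (algebraMap (𝓞 K) K '' (I : Set (𝓞 K))) := by
  classical
  have hDodd : D % 2 = 1 := by omega
  have hs4t : s % 4 = t % 4 := by
    have h := Int.mul_emod s t 4
    rw [← hD] at h
    have hs4 : s % 4 = 1 ∨ s % 4 = 3 := by omega
    have ht4 : t % 4 = 1 ∨ t % 4 = 3 := by omega
    rcases hs4 with h1 | h1 <;> rcases ht4 with h2 | h2 <;> rw [h1, h2] at h <;>
      norm_num at h <;> omega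
  obtain ⟨j, hj⟩ : ∃ j : ℤ, s - t = 4 * j := ⟨(s - t) / 4, by omega⟩
  have hα' : α ^ 2 = (s : K) * (t : K) := by rw [hα, hD]; push_cast; ring
  have hj' : (s : K) - (t : K) = 4 * (j : K) := by exact_mod_cast congrArg (Int.cast : ℤ → K) hj
  set μ : K := ((s : K) + α) / 2 with hμ
  have hμint : IsIntegral ℤ μ := by
    refine ⟨Polynomial.X ^ 2 + (Polynomial.C (-s) * Polynomial.X + Polynomial.C (s * j)), ?_, ?_⟩
    · apply Polynomial.monic_X_pow_add
      exact Polynomial.degree_linear_le.trans_lt (by norm_num)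
    · rw [Polynomial.eval₂_add, Polynomial.eval₂_add, Polynomial.eval₂_mul,
        Polynomial.eval₂_pow, Polynomial.eval₂_X, Polynomial.eval₂_C, Polynomial.eval₂_C]
      simp only [eq_intCast]
      rw [hμ]
      push_cast
      linear_combination (norm := (push_cast; ring1)) (1 / 4 : K) * hα' - ((s : K) / 4) * hj'
  set sO : 𝓞 K := (s : 𝓞 K) with hsOdef
  have hsO : algebraMap (𝓞 K) K sO = (s : K) := map_intCast (algebraMap (𝓞 K) K) s
  set μO : 𝓞 K := ⟨μ, hμint⟩ with hμOdef
  have hμO : algebraMap (𝓞 K) K μO = μ := rfl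
  set I : Ideal (𝓞 K) := Ideal.span {sO, μO} with hIdef
  have hsmem : sO ∈ I := Ideal.subset_span (by simp)
  have hμmemI : μO ∈ I := Ideal.subset_span (by simp)
  have hsK0 : (s : K) ≠ 0 := Int.cast_ne_zero.mpr (by omega)
  have hIne : I ≠ ⊥ := by
    intro h
    rw [h, Ideal.mem_bot] at hsmem
    apply hsK0
    rw [← hsO, hsmem, map_zero]
  set ν : K := ((s : K) - α) / 2 with hν
  have hνO : algebraMap (𝓞 K) K (sO - μO) = ν := by
    rw [map_sub, hsO, hμO, hμ, hν]
    ring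
  have hprod : μO * (sO - μO) = sO * (j : 𝓞 K) := by
    apply RingOfIntegers.ext
    rw [RingOfIntegers.coe_eq_algebraMap, RingOfIntegers.coe_eq_algebraMap,
      map_mul, map_mul, hνO, hsO, hμO, map_intCast, hμ, hν]
    linear_combination (norm := (push_cast; ring1)) (-1 / 4 : K) * hα' + ((s : K) / 4) * hj'
  -- decomposition of elements of I
  have hmem : ∀ y : 𝓞 K, y ∈ I → algebraMap (𝓞 K) K y ≠ 0 →
      ∃ m n : ℤ, algebraMap (𝓞 K) K y = ((m : K) + (n : K) * α) / 2 ∧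
        m % 2 = n % 2 ∧ s ∣ m ∧ ¬(m = 0 ∧ n = 0) := by
    intro y hy hy0
    obtain ⟨m, n, hmn, hpar⟩ := integral_coords D α hsf hD1 hα hrank hDodd _
      (RingOfIntegers.isIntegral_coe y)
    obtain ⟨u, v, huv⟩ := Ideal.mem_span_pair.mp hy
    have hz : ∃ z : 𝓞 K, y * (sO - μO) = sO * z := by
      refine ⟨u * (sO - μO) + v * (j : 𝓞 K), ?_⟩
      rw [← huv]
      linear_combination v * hprod
    obtain ⟨z, hz⟩ := hz
    obtain ⟨g, h, hgh, _⟩ := integral_coords D α hsf hD1 hα hrank hDodd _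
      (RingOfIntegers.isIntegral_coe z)
    have hzK : (((m : K) + (n : K) * α) / 2) * ν = (s : K) * (((g : K) + (h : K) * α) / 2) := by
      have h0 := congrArg (algebraMap (𝓞 K) K) hz
      rw [map_mul, map_mul, hνO, hsO, hgh, hmn] at h0
      exact h0
    have E : (((m * s - n * D : ℚ) / 4 : ℚ) : K) + (((n * s - m : ℚ) / 4 : ℚ) : K) * α
        = (((s * g : ℚ) / 2 : ℚ) : K) + (((s * h : ℚ) / 2 : ℚ) : K) * α := by
      push_cast
      rw [hν] at hzK
      linear_combination hzK + ((n : K) / 4) * hα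
    have hcu := coords_unique D α hsf hD1 hα E
    have hm2 : (m : ℚ) = (s : ℚ) * ((n : ℚ) - 2 * (h : ℚ)) := by
      have h2 := hcu.2
      field_simp at h2
      linarith
    have hsm : s ∣ m := ⟨n - 2 * h, by exact_mod_cast hm2⟩
    refine ⟨m, n, hmn, hpar, hsm, ?_⟩
    rintro ⟨rfl, rfl⟩
    apply hy0
    rw [hmn]
    norm_num
  -- sqNorm on half-integer coordinates
  have hsq_val : ∀ m n : ℤ, sqNorm K (((m : K) + (n : K) * α) / 2)
      = ((m ^ 2 + D * n ^ 2 : ℤ) : ℝ) / 2 := by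
    intro m n
    have hx : (((m : K) + (n : K) * α) / 2 : K)
        = (((m / 2 : ℚ) : K)) + (((n / 2 : ℚ) : K)) * α := by push_cast; ring
    rw [hx, sqNorm_formula D α hsf hD1 hα hrank]
    push_cast
    ring
  set ℓ : ℝ := ((s ^ 2 + D : ℤ) : ℝ) / 2 with hℓ
  have hlb : ∀ m n : ℤ, m % 2 = n % 2 → s ∣ m → ¬(m = 0 ∧ n = 0) →
      (s ^ 2 + D : ℤ) ≤ m ^ 2 + D * n ^ 2 := by
    intro m n hpar hsm hmn0
    obtain ⟨w, hw⟩ := hsm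
    rw [hD]
    by_cases hn : n = 0
    · subst hn
      have hm0 : m ≠ 0 := by tauto
      have hmeven : m % 2 = 0 := by omega
      have hweven : w % 2 = 0 := by
        have h2 := Int.mul_emod s w 2
        rw [← hw, hsodd, one_mul] at h2
        omega
      have hw0 : w ≠ 0 := by rintro rfl; simp at hw; omega
      have hw4 : 4 ≤ w ^ 2 := by
        rcases (by omega : w ≤ -2 ∨ 2 ≤ w) with h' | h' <;> nlinarith
      rw [hw]
      nlinarith [hw4, hts, hs1, sq_nonneg s]
    · have hn1 : 1 ≤ n ^ 2 := by
        rcases (by omega : n ≤ -1 ∨ 1 ≤ n) with h' | h' <;> nlinarith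
      by_cases hm : m = 0
      · have hneven : n % 2 = 0 := by omega
        have hn4 : 4 ≤ n ^ 2 := by
          rcases (by omega : n ≤ -2 ∨ 2 ≤ n) with h' | h' <;> nlinarith
        subst hm
        nlinarith [hst3, hs1, ht1, hn4]
      · have hw0 : w ≠ 0 := by rintro rfl; simp at hw; omega
        have hw1 : 1 ≤ w ^ 2 := by
          rcases (by omega : w ≤ -1 ∨ 1 ≤ w) with h' | h' <;> nlinarith
        have hm1 : s ^ 2 ≤ m ^ 2 := by rw [hw]; nlinarith [sq_nonneg s]
        nlinarith [hn1, hm1, hs1, ht1]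
  set S : Set K := algebraMap (𝓞 K) K '' (I : Set (𝓞 K)) with hS
  have hμS : μ ∈ S := ⟨μO, hμmemI, hμO⟩
  have hνS : ν ∈ S := ⟨sO - μO, Ideal.sub_mem I hsmem hμmemI, hνO⟩
  have hμ0 : μ ≠ 0 := by
    intro h0
    apply ratcast_ne_of_sq D hsf hD1 α hα (-(s : ℚ))
    have h2 : (s : K) + α = 0 := by
      rw [hμ, div_eq_zero_iff] at h0
      rcases h0 with h0 | h0
      · exact h0
      · norm_num at h0
    push_cast
    linear_combination -h2
  have hν0 : ν ≠ 0 := by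
    intro h0
    apply ratcast_ne_of_sq D hsf hD1 α hα (s : ℚ)
    have h2 : (s : K) - α = 0 := by
      rw [hν, div_eq_zero_iff] at h0
      rcases h0 with h0 | h0
      · exact h0
      · norm_num at h0
    push_cast
    linear_combination h2
  have hμcoord : μ = (((s : ℤ) : K) + ((1 : ℤ) : K) * α) / 2 := by rw [hμ]; push_cast; ring
  have hνcoord : ν = (((s : ℤ) : K) + ((-1 : ℤ) : K) * α) / 2 := by rw [hν]; push_cast; ring
  have hμsq : sqNorm K μ = ℓ := by
    rw [hμcoord, hsq_val s 1, hℓ]; norm_num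
  have hνsq : sqNorm K ν = ℓ := by
    rw [hνcoord, hsq_val s (-1), hℓ]; norm_num
  have hlow : ∀ r ∈ {r : ℝ | ∃ x ∈ S, x ≠ 0 ∧ sqNorm K x = r}, ℓ ≤ r := by
    rintro r ⟨x, hxS, hx0, rfl⟩
    obtain ⟨y, hyI, hyx⟩ := hxS
    obtain ⟨m, n, hmn, hpar, hsm, hmn0⟩ := hmem y hyI (by rw [hyx]; exact hx0)
    rw [← hyx, hmn, hsq_val, hℓ]
    have hZ := hlb m n hpar hsm hmn0
    have hZR : ((s ^ 2 + D : ℤ) : ℝ) ≤ ((m ^ 2 + D * n ^ 2 : ℤ) : ℝ) := by exact_mod_cast hZ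
    linarith
  have hlat : latMin K S = ℓ := by
    unfold latMin
    apply le_antisymm
    · exact csInf_le ⟨ℓ, hlow⟩ ⟨μ, hμS, hμ0, hμsq⟩
    · exact le_csInf ⟨sqNorm K μ, μ, hμS, hμ0, rfl⟩ hlow
  have hμmin : μ ∈ minVecs K S := ⟨hμS, hμsq.trans hlat.symm⟩
  have hνmin : ν ∈ minVecs K S := ⟨hνS, hνsq.trans hlat.symm⟩
  refine ⟨I, hIne, ?_⟩
  unfold IsWellRounded
  obtain ⟨φ, ψ, hne, huniv, hopp, hsqφ, hreal⟩ := two_embeddings D α hsf hD1 hα hrank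
  have hw1r : InfinitePlace.IsReal (InfinitePlace.mk φ) :=
    InfinitePlace.isReal_mk_iff.mpr (hreal φ)
  have hw2r : InfinitePlace.IsReal (InfinitePlace.mk ψ) :=
    InfinitePlace.isReal_mk_iff.mpr (hreal ψ)
  have hembφ : InfinitePlace.embedding (InfinitePlace.mk φ) = φ := by
    rcases InfinitePlace.mk_eq_iff.mp (InfinitePlace.mk_embedding (InfinitePlace.mk φ)) with
      h1 | h1
    · exact h1
    · rw [ComplexEmbedding.isReal_iff.mp (hreal _)] at h1; exact h1
  have hembψ : InfinitePlace.embedding (InfinitePlace.mk ψ) = ψ := by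
    rcases InfinitePlace.mk_eq_iff.mp (InfinitePlace.mk_embedding (InfinitePlace.mk ψ)) with
      h1 | h1
    · exact h1
    · rw [ComplexEmbedding.isReal_iff.mp (hreal _)] at h1; exact h1
  have hzφ : φ α ≠ 0 := by
    intro h0
    rw [h0] at hsqφ
    have hD0 : ((D : ℤ) : ℂ) = 0 := by rw [← hsqφ]; norm_num
    have : (D : ℤ) = 0 := by exact_mod_cast hD0
    omega
  have hEval : ∀ (x : K) (w : InfinitePlace K) (hw : InfinitePlace.IsReal w) (χ : K →+* ℂ),
      InfinitePlace.embedding w = χ →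
      (((mixedEmbedding K x).1 ⟨w, hw⟩ : ℝ) : ℂ) = χ x := by
    intro x w hw χ hχ
    rw [NumberField.mixedEmbedding.mixedEmbedding_apply_isReal,
      InfinitePlace.embedding_of_isReal_apply, hχ]
  have hfin : Fintype.card (Fin 2) = Module.finrank ℝ (NumberField.mixedEmbedding.mixedSpace K) := by
    rw [NumberField.mixedEmbedding.finrank, hrank, Fintype.card_fin]
  have hli2 : LinearIndependent ℝ ![mixedEmbedding K μ, mixedEmbedding K ν] := by
    rw [LinearIndependent.pair_iff]
    intro a b hab
    have hC : ∀ (w : InfinitePlace K) (hw : InfinitePlace.IsReal w) (χ : K →+* ℂ),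
        InfinitePlace.embedding w = χ → (a : ℂ) * χ μ + (b : ℂ) * χ ν = 0 := by
      intro w hw χ hχ
      have h1 := congrArg (fun v : NumberField.mixedEmbedding.mixedSpace K => v.1 ⟨w, hw⟩) hab
      simp only [Prod.fst_add, Prod.smul_fst, Pi.add_apply, Pi.smul_apply, smul_eq_mul,
        Prod.fst_zero, Pi.zero_apply] at h1
      have h2 := congrArg (fun r : ℝ => (r : ℂ)) h1
      push_cast at h2
      rw [hEval μ w hw χ hχ, hEval ν w hw χ hχ] at h2
      exact h2
    have e1 := hC _ hw1r φ hembφ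
    have e2 := hC _ hw2r ψ hembψ
    have hφμ : φ μ = ((s : ℂ) + φ α) / 2 := by
      rw [hμ, map_div₀, map_add, map_intCast, map_ofNat]
    have hφν : φ ν = ((s : ℂ) - φ α) / 2 := by
      rw [hν, map_div₀, map_sub, map_intCast, map_ofNat]
    have hψμ : ψ μ = ((s : ℂ) - φ α) / 2 := by
      rw [hμ, map_div₀, map_add, map_intCast, map_ofNat, hopp]
      ring
    have hψν : ψ ν = ((s : ℂ) + φ α) / 2 := by
      rw [hν, map_div₀, map_sub, map_intCast, map_ofNat, hopp]
      ring
    rw [hφμ, hφν] at e1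
    rw [hψμ, hψν] at e2
    have hsC : ((s : ℤ) : ℂ) ≠ 0 := Int.cast_ne_zero.mpr (by omega)
    have hsum : ((a : ℝ) : ℂ) + ((b : ℝ) : ℂ) = 0 := by
      have h3 : (((a : ℝ) : ℂ) + ((b : ℝ) : ℂ)) * (s : ℂ) = 0 := by
        linear_combination e1 + e2
      exact (mul_eq_zero.mp h3).resolve_right hsC
    have hdiff : ((a : ℝ) : ℂ) - ((b : ℝ) : ℂ) = 0 := by
      have h3 : (((a : ℝ) : ℂ) - ((b : ℝ) : ℂ)) * φ α = 0 := by
        linear_combination e1 - e2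
      exact (mul_eq_zero.mp h3).resolve_right hzφ
    constructor
    · exact_mod_cast (by linear_combination (hsum + hdiff) / 2 : ((a : ℝ) : ℂ) = 0)
    · exact_mod_cast (by linear_combination (hsum - hdiff) / 2 : ((b : ℝ) : ℂ) = 0)
  have hsp2 := hli2.span_eq_top_of_card_eq_finrank hfin
  rw [range_pair2] at hsp2
  rw [eq_top_iff, ← hsp2]
  apply Submodule.span_mono
  intro v hv
  rcases hv with h | h
  · exact ⟨μ, hμmin, h.symm⟩
  · exact ⟨ν, hνmin, h.symm⟩
end Main

section Final

theorem statement1' :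
    {D : ℤ | 1 < D ∧ Squarefree D ∧ D % 4 = 1 ∧
      ∀ (K : Type) [Field K] [NumberField K],
        Module.finrank ℚ K = 2 → (∃ α : K, α ^ 2 = ((D : ℤ) : K)) →
        ∃ I : Ideal (𝓞 K), I ≠ ⊥ ∧
          IsWellRounded K (algebraMap (𝓞 K) K '' (I : Set (𝓞 K)))}.Infinite := by
  set T : Set ℤ := {D : ℤ | 1 < D ∧ Squarefree D ∧ D % 4 = 1 ∧
      ∀ (K : Type) [Field K] [NumberField K],
        Module.finrank ℚ K = 2 → (∃ α : K, α ^ 2 = ((D : ℤ) : K)) →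
        ∃ I : Ideal (𝓞 K), I ≠ ⊥ ∧
          IsWellRounded K (algebraMap (𝓞 K) K '' (I : Set (𝓞 K)))} with hT
  have hmemT : ∀ s t : ℤ, 1 ≤ s → 1 ≤ t → s % 2 = 1 → t % 2 = 1 → t ≤ 3 * s → s ≤ 3 * t →
      Squarefree (s * t) → 1 < s * t → (s * t) % 4 = 1 → (s * t) ∈ T := by
    intro s t hs1 ht1 hso hto hts hst hsf h1 h4
    refine ⟨h1, hsf, h4, ?_⟩
    intro K _ _ hrank hex
    obtain ⟨α, hα⟩ := hex
    exact main_construction s t (s * t) hs1 ht1 hso hto hts hst rfl hsf h1 h4 K hrank α hα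
  apply Set.infinite_of_not_bddAbove
  rintro ⟨B, hB⟩
  obtain ⟨p, hpgt, hp⟩ := Nat.exists_infinite_primes (max (B.toNat + 1) 5)
  have hp5 : 5 ≤ p := le_trans (le_max_right _ _) hpgt
  have hpB : B < (p : ℤ) := by
    have h1 : B ≤ (B.toNat : ℤ) := Int.self_le_toNat B
    have h2 : B.toNat + 1 ≤ p := le_trans (le_max_left _ _) hpgt
    omega
  obtain ⟨q, hq, hpq, hq2p⟩ := Nat.exists_prime_lt_and_le_two_mul p (by omega)
  have hpodd : p % 2 = 1 := Nat.odd_iff.mp (hp.odd_of_ne_two (by omega))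
  have hqodd : q % 2 = 1 := Nat.odd_iff.mp (hq.odd_of_ne_two (by omega))
  have hne : p ≠ q := by omega
  have hsfpq : Squarefree ((p * q : ℕ) : ℤ) := by
    rw [Int.squarefree_natCast]
    exact (Nat.squarefree_mul ((Nat.coprime_primes hp hq).mpr hne)).mpr
      ⟨hp.squarefree, hq.squarefree⟩
  set P : ℤ := (p : ℤ) with hP
  set Q : ℤ := (q : ℤ) with hQ
  have hP5 : 5 ≤ P := by rw [hP]; exact_mod_cast hp5
  have hQP : P < Q := by rw [hP, hQ]; exact_mod_cast hpq
  have hQ2P : Q ≤ 2 * P := by rw [hP, hQ]; exact_mod_cast hq2p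
  have hPodd : P % 2 = 1 := by omega
  have hQodd : Q % 2 = 1 := by omega
  have hPQodd : (P * Q) % 2 = 1 := by
    have := Int.mul_emod P Q 2
    rw [hPodd, hQodd] at this
    omega
  have hPQgt : 1 < P * Q := by nlinarith
  have hPQB : B < P * Q := by nlinarith
  by_cases h4 : (P * Q) % 4 = 1
  · have hmem : P * Q ∈ T := by
      apply hmemT P Q (by omega) (by omega) hPodd hQodd (by omega) (by omega) ?_ hPQgt h4
      · have : P * Q = ((p * q : ℕ) : ℤ) := by push_cast; ring
        rw [this]
        exact hsfpq
    have := hB hmem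
    omega
  · have h43 : (P * Q) % 4 = 3 := by omega
    have hsf3 : Squarefree ((3 * P) * Q) := by
      have heq : (3 * P) * Q = ((3 * (p * q) : ℕ) : ℤ) := by push_cast; ring
      rw [heq, Int.squarefree_natCast]
      have hc3p : Nat.Coprime 3 p := (Nat.coprime_primes (by norm_num) hp).mpr (by omega)
      have hc3q : Nat.Coprime 3 q := (Nat.coprime_primes (by norm_num) hq).mpr (by omega)
      have hcpq : Nat.Coprime p q := (Nat.coprime_primes hp hq).mpr hne
      rw [Nat.squarefree_mul (hc3p.mul_right hc3q)]
      exact ⟨Nat.prime_three.squarefree, (Nat.squarefree_mul hcpq).mpr ⟨hp.squarefree, hq.squarefree⟩⟩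
    have h41 : ((3 * P) * Q) % 4 = 1 := by
      have h := Int.mul_emod 3 (P * Q) 4
      rw [h43] at h
      have : (3 * P) * Q = 3 * (P * Q) := by ring
      rw [this]
      omega
    have hmem : (3 * P) * Q ∈ T := by
      apply hmemT (3 * P) Q (by omega) (by omega) (by omega) hQodd (by omega) (by omega)
        hsf3 (by nlinarith) h41
    have := hB hmem
    nlinarith
end Final


/-- There exist infinitely many squarefree integers `D > 1` with `D ≡ 1 (mod 4)`
such that the ring of integers of the real quadratic field `K = ℚ(√D)` contains
a nonzero ideal `I` for which the planar lattice `Λ_K(I)` is well-rounded. -/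
theorem statement1 :
    {D : ℤ | 1 < D ∧ Squarefree D ∧ D % 4 = 1 ∧
      ∀ (K : Type) [Field K] [NumberField K],
        Module.finrank ℚ K = 2 → (∃ α : K, α ^ 2 = ((D : ℤ) : K)) →
        ∃ I : Ideal (𝓞 K), I ≠ ⊥ ∧
          IsWellRounded K (algebraMap (𝓞 K) K '' (I : Set (𝓞 K)))}.Infinite :=
  statement1'
end

section
/- Let K = ℚ(ζ_k) for some primitive k-th root of unity ζ_k with k ≥ 2, and let I be a nonzero fractional ideal of O_K. Then the lattice Λ_K(I) = σ(I) ⊂ ℝ^{φ(k)} is well-rounded. -/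
open NumberField
open scoped nonZeroDivisors Classical

section aux

variable (K : Type*) [Field K] [NumberField K]

lemma sqNorm_nonneg (x : K) : 0 ≤ sqNorm K x :=
  Finset.sum_nonneg fun w _ ↦ sq_nonneg _

lemma place_root_eq_one {k : ℕ} (hk : 2 ≤ k) {ζ : K} (hζ : IsPrimitiveRoot ζ k)
    (w : InfinitePlace K) : w ζ = 1 := by
  have hk0 : k ≠ 0 := by omega
  have h1 : (w ζ) ^ k = 1 := by rw [← map_pow, hζ.pow_eq_one, map_one]
  have h0 : 0 ≤ w ζ := apply_nonneg w ζ
  rcases lt_trichotomy (w ζ) 1 with h | h | h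
  · have := pow_lt_one₀ h0 h hk0
    simp [h1] at this
  · exact h
  · have := one_lt_pow₀ h hk0
    simp [h1] at this

lemma sqNorm_root_mul {k : ℕ} (hk : 2 ≤ k) {ζ : K} (hζ : IsPrimitiveRoot ζ k)
    (n : ℕ) (x : K) : sqNorm K (ζ ^ n * x) = sqNorm K x := by
  unfold sqNorm
  refine Finset.sum_congr rfl fun w _ ↦ ?_
  rw [map_mul, map_pow, place_root_eq_one K hk hζ w, one_pow, one_mul]

/-- Norm bound: if `sqNorm K x ≤ r` then `‖mixedEmbedding K x‖ ≤ √r`. -/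
lemma norm_mixedEmbedding_le_of_sqNorm_le {x : K} {r : ℝ} (h : sqNorm K x ≤ r) :
    ‖mixedEmbedding K x‖ ≤ Real.sqrt r := by
  rw [mixedEmbedding.norm_eq_sup'_normAtPlace]
  refine Finset.sup'_le _ _ fun w _ ↦ ?_
  rw [mixedEmbedding.normAtPlace_apply]
  have h1 : (w x) ^ 2 ≤ r := by
    refine le_trans ?_ h
    exact Finset.single_le_sum (f := fun w : InfinitePlace K ↦ (w x) ^ 2)
      (fun w _ ↦ sq_nonneg _) (Finset.mem_univ w)
  have := Real.sqrt_le_sqrt h1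
  rwa [Real.sqrt_sq (apply_nonneg w x)] at this

/-- Finitely many elements of a nonzero fractional ideal with bounded `sqNorm`. -/
lemma finite_sqNorm_le (I : FractionalIdeal (𝓞 K)⁰ K) (hI : I ≠ 0) (r : ℝ) :
    {x : K | x ∈ I ∧ sqNorm K x ≤ r}.Finite := by
  classical
  set U : (FractionalIdeal (𝓞 K)⁰ K)ˣ := Units.mk0 I hI with hU
  have hUI : (U : FractionalIdeal (𝓞 K)⁰ K) = I := rfl
  set L : Submodule ℤ (mixedEmbedding.mixedSpace K) :=
    Submodule.span ℤ (Set.range (mixedEmbedding.fractionalIdealLatticeBasis K U)) with hL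
  haveI hdisc : DiscreteTopology L := inferInstanceAs (DiscreteTopology
    (Submodule.span ℤ (Set.range (mixedEmbedding.fractionalIdealLatticeBasis K U))))
  have hclosed : IsClosed (L : Set (mixedEmbedding.mixedSpace K)) := by
    haveI : DiscreteTopology L.toAddSubgroup := hdisc
    exact AddSubgroup.isClosed_of_discrete (H := L.toAddSubgroup)
  have hfin : (Metric.closedBall (0 : mixedEmbedding.mixedSpace K) (Real.sqrt r) ∩ (L : Set (mixedEmbedding.mixedSpace K))).Finite :=
    Metric.finite_isBounded_inter_isClosed DiscreteTopology.isDiscrete Metric.isBounded_closedBall hclosed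
  have hinj : Set.InjOn (mixedEmbedding K) {x : K | x ∈ I ∧ sqNorm K x ≤ r} :=
    fun a _ b _ h ↦ (mixedEmbedding_injective K) h
  refine Set.Finite.of_finite_image (f := mixedEmbedding K) ?_ hinj
  refine hfin.subset ?_
  rintro - ⟨x, ⟨hxI, hxr⟩, rfl⟩
  constructor
  · rw [Metric.mem_closedBall, dist_zero_right]
    exact norm_mixedEmbedding_le_of_sqNorm_le K hxr
  · rw [SetLike.mem_coe, hL, mixedEmbedding.mem_span_fractionalIdealLatticeBasis]
    exact ⟨x, by rwa [hUI], rfl⟩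

/-- The minimum of the lattice of a nonzero fractional ideal is attained. -/
lemma latMin_attained (I : FractionalIdeal (𝓞 K)⁰ K) (hI : I ≠ 0) :
    ∃ x₀, x₀ ∈ I ∧ x₀ ≠ 0 ∧
      sqNorm K x₀ = latMin K ((I : Submodule (𝓞 K) K) : Set K) := by
  classical
  set S : Set K := ((I : Submodule (𝓞 K) K) : Set K) with hS
  have hmemS : ∀ x : K, x ∈ S ↔ x ∈ I := fun x ↦ FractionalIdeal.mem_coe
  set A : Set ℝ := {r : ℝ | ∃ x ∈ S, x ≠ 0 ∧ sqNorm K x = r} with hA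
  -- A is nonempty
  obtain ⟨y, hyI, hy0⟩ : ∃ y, y ∈ I ∧ y ≠ 0 := by
    by_contra h
    push_neg at h
    apply hI
    rw [← FractionalIdeal.coeToSubmodule_injective.eq_iff]
    rw [FractionalIdeal.coe_zero, eq_bot_iff]
    intro x hx
    have := h x (FractionalIdeal.mem_coe.mp hx)
    simpa using this
  have hyA : sqNorm K y ∈ A := ⟨y, (hmemS y).mpr hyI, hy0, rfl⟩
  -- the set of elements realizing values ≤ sqNorm K y is finite and nonempty
  set T : Set K := {x : K | (x ∈ I ∧ sqNorm K x ≤ sqNorm K y) ∧ x ≠ 0} with hT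
  have hTfin : T.Finite := ((finite_sqNorm_le K I hI (sqNorm K y)).subset
    (fun x hx ↦ hx.1))
  have hTne : T.Nonempty := ⟨y, ⟨⟨hyI, le_refl _⟩, hy0⟩⟩
  -- take the minimizer over T
  obtain ⟨x₀, hx₀T, hx₀min⟩ := Set.exists_min_image T (sqNorm K) hTfin hTne
  have hx₀A : sqNorm K x₀ ∈ A := ⟨x₀, (hmemS x₀).mpr hx₀T.1.1, hx₀T.2, rfl⟩
  have hlb : ∀ r ∈ A, sqNorm K x₀ ≤ r := by
    rintro r ⟨x, hxS, hx0, rfl⟩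
    by_cases hxy : sqNorm K x ≤ sqNorm K y
    · exact hx₀min x ⟨⟨(hmemS x).mp hxS, hxy⟩, hx0⟩
    · exact le_trans (le_trans hx₀T.1.2 (le_of_not_ge hxy)) (le_refl _)
  have : IsLeast A (sqNorm K x₀) := ⟨hx₀A, hlb⟩
  refine ⟨x₀, hx₀T.1.1, hx₀T.2, ?_⟩
  rw [latMin, ← hA]
  exact (this.csInf_eq).symm

end aux

/-- If `K = ℚ(ζ_k)` for a primitive `k`-th root of unity `ζ_k`, `k ≥ 2`, and `I`
is a nonzero fractional ideal of `O_K`, then the lattice `Λ_K(I) = σ(I)` is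
well-rounded. -/
theorem statement6 (K : Type*) [Field K] [NumberField K] (k : ℕ) (hk : 2 ≤ k)
    (ζ : K) (hζ : IsPrimitiveRoot ζ k) (hgen : Algebra.adjoin ℚ {ζ} = ⊤)
    (I : FractionalIdeal (𝓞 K)⁰ K) (hI : I ≠ 0) :
    IsWellRounded K ((I : Submodule (𝓞 K) K) : Set K) := by
  classical
  set S : Set K := ((I : Submodule (𝓞 K) K) : Set K) with hS
  obtain ⟨x₀, hx₀I, hx₀0, hx₀min⟩ := latMin_attained K I hI
  -- ζ is an algebraic integer
  have hζint : IsIntegral ℤ ζ := hζ.isIntegral (by omega)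
  set u : 𝓞 K := ⟨ζ, hζint⟩ with hu
  -- all ζ^n * x₀ are minimal vectors
  have hmem : ∀ n : ℕ, ζ ^ n * x₀ ∈ minVecs K S := by
    intro n
    have h1 : ζ ^ n * x₀ ∈ S := by
      have : (u ^ n) • x₀ ∈ (I : Submodule (𝓞 K) K) :=
        Submodule.smul_mem _ _ (FractionalIdeal.mem_coe.mpr hx₀I)
      simpa [Algebra.smul_def, show algebraMap (𝓞 K) K (u ^ n) = ζ ^ n from rfl, hS] using this
    refine ⟨h1, ?_⟩
    rw [sqNorm_root_mul K hk hζ n x₀, hx₀min]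
  -- the ℚ-span of the powers of ζ times x₀ is all of K
  have hspanQ : Submodule.span ℚ (Set.range fun n : ℕ ↦ ζ ^ n * x₀) = ⊤ := by
    have hpow : Submodule.span ℚ (Set.range fun n : ℕ ↦ ζ ^ n) = ⊤ := by
      have h1 : Subalgebra.toSubmodule (Algebra.adjoin ℚ ({ζ} : Set K)) =
          Submodule.span ℚ (Submonoid.closure ({ζ} : Set K)) := Algebra.adjoin_eq_span ℚ _
      have h2 : (Submonoid.closure ({ζ} : Set K) : Set K) = Set.range fun n : ℕ ↦ ζ ^ n := by
        rw [← Submonoid.powers_eq_closure]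
        ext x
        simp [Submonoid.mem_powers_iff]
      rw [hgen] at h1
      rw [← h2]
      exact h1.symm.trans rfl |>.symm ▸ (by rw [← h1, h2] at *; rw [← h1]; rfl)
    have hmap : Submodule.map (LinearMap.mulRight ℚ x₀)
        (Submodule.span ℚ (Set.range fun n : ℕ ↦ ζ ^ n)) =
        Submodule.span ℚ (Set.range fun n : ℕ ↦ ζ ^ n * x₀) := by
      rw [Submodule.map_span]
      congr 1
      ext z
      simp [LinearMap.mulRight_apply]
    have hsurj : Function.Surjective (LinearMap.mulRight ℚ x₀ : K →ₗ[ℚ] K) := by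
      intro z
      exact ⟨z * x₀⁻¹, by simp [LinearMap.mulRight_apply, hx₀0]⟩
    rw [← hmap, hpow, Submodule.map_top, LinearMap.range_eq_top.mpr hsurj]
  -- conclude the ℝ-span of the minimal vectors is everything
  rw [IsWellRounded, eq_top_iff]
  set M : Submodule ℝ (mixedEmbedding.mixedSpace K) :=
    Submodule.span ℝ (mixedEmbedding K '' minVecs K S) with hM
  rw [← Module.Basis.span_eq (mixedEmbedding.latticeBasis K)]
  refine Submodule.span_le.mpr ?_
  rintro - ⟨i, rfl⟩
  rw [mixedEmbedding.latticeBasis_apply]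
  -- push through the ℚ-linear map
  set L : K →ₗ[ℚ] mixedEmbedding.mixedSpace K := (mixedEmbedding K).toRatAlgHom.toLinearMap with hLdef
  have hLapp : ∀ x : K, L x = mixedEmbedding K x := fun x ↦ rfl
  have h3 : integralBasis K i ∈ Submodule.span ℚ (Set.range fun n : ℕ ↦ ζ ^ n * x₀) := by
    rw [hspanQ]; trivial
  have h4 : mixedEmbedding K (integralBasis K i) ∈
      Submodule.span ℚ (L '' (Set.range fun n : ℕ ↦ ζ ^ n * x₀)) := by
    rw [← Submodule.map_span]
    exact ⟨integralBasis K i, h3, rfl⟩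
  have h5 : Submodule.span ℚ (L '' (Set.range fun n : ℕ ↦ ζ ^ n * x₀)) ≤
      Submodule.restrictScalars ℚ M := by
    rw [Submodule.span_le]
    rintro - ⟨-, ⟨n, rfl⟩, rfl⟩
    rw [Submodule.coe_restrictScalars, hM]
    exact Submodule.subset_span ⟨ζ ^ n * x₀, hmem n, rfl⟩
  exact h5 h4
end

section
/- A full-rank lattice Λ ⊂ ℝ² has exactly 6 minimal vectors if and only if Λ is similar to the hexagonal lattice Λ_h. -/
set_option maxHeartbeats 1000000

open scoped RealInnerProductSpace Pointwise

/-- The minimum `|Λ|` of a planar lattice `Λ = S ⊆ ℝ²`: the infimum of squared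
Euclidean norms of nonzero points. -/
noncomputable def pMin (S : Set (EuclideanSpace ℝ (Fin 2))) : ℝ :=
  sInf {r : ℝ | ∃ x ∈ S, x ≠ 0 ∧ ‖x‖ ^ 2 = r}

/-- The set of minimal vectors `S(Λ)` of a planar lattice. -/
def pMinVecs (S : Set (EuclideanSpace ℝ (Fin 2))) : Set (EuclideanSpace ℝ (Fin 2)) :=
  {x ∈ S | ‖x‖ ^ 2 = pMin S}

/-- A planar lattice is well-rounded if its minimal vectors span `ℝ²`. -/
def pIsWellRounded (S : Set (EuclideanSpace ℝ (Fin 2))) : Prop :=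
  Submodule.span ℝ (pMinVecs S) = ⊤

/-- Two subsets of `ℝ²` are similar if one is obtained from the other by applying
an orthogonal transformation and multiplying by a nonzero scalar. -/
def pSimilar (S T : Set (EuclideanSpace ℝ (Fin 2))) : Prop :=
  ∃ (α : ℝ) (f : EuclideanSpace ℝ (Fin 2) ≃ₗᵢ[ℝ] EuclideanSpace ℝ (Fin 2)),
    α ≠ 0 ∧ T = (fun x => α • f x) '' S

/-- The vector `(a, b)` in `ℝ²` with its Euclidean structure. -/
noncomputable def vec2 (a b : ℝ) : EuclideanSpace ℝ (Fin 2) :=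
  (WithLp.equiv 2 (Fin 2 → ℝ)).symm ![a, b]

/-- The hexagonal lattice, spanned over `ℤ` by `(1,0)` and `(1/2, √3/2)`. -/
noncomputable def hexLattice : Submodule ℤ (EuclideanSpace ℝ (Fin 2)) :=
  Submodule.span ℤ {vec2 1 0, vec2 (1/2) (Real.sqrt 3 / 2)}

lemma inner_vec2 (a b c d : ℝ) : ⟪vec2 a b, vec2 c d⟫ = a*c + b*d := by
  simp [vec2, PiLp.inner_apply, Fin.sum_univ_two]; ring

lemma norm_sq_combo (x y : EuclideanSpace ℝ (Fin 2)) (s t : ℝ) :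
    ‖s•x + t•y‖^2 = s^2*‖x‖^2 + 2*s*t*⟪x,y⟫ + t^2*‖y‖^2 := by
  simp only [← real_inner_self_eq_norm_sq, inner_add_left, inner_add_right,
    real_inner_smul_left, real_inner_smul_right]
  rw [real_inner_comm y x]; ring

/-- scaling an isometry: behaviour of `pMin`. -/
lemma pMin_image (S : Set (EuclideanSpace ℝ (Fin 2))) (α : ℝ) (hα : α ≠ 0)
    (f : EuclideanSpace ℝ (Fin 2) ≃ₗᵢ[ℝ] EuclideanSpace ℝ (Fin 2)) :
    pMin ((fun x => α • f x) '' S) = α^2 * pMin S := by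
  have hset : {r : ℝ | ∃ x ∈ ((fun x => α • f x) '' S), x ≠ 0 ∧ ‖x‖ ^ 2 = r}
      = (α^2) • {r : ℝ | ∃ x ∈ S, x ≠ 0 ∧ ‖x‖ ^ 2 = r} := by
    ext r
    constructor
    · rintro ⟨y, ⟨x, hxS, rfl⟩, hy0, rfl⟩
      refine ⟨‖x‖^2, ⟨x, hxS, ?_, rfl⟩, ?_⟩
      · rintro rfl; simp at hy0
      · simp only [smul_eq_mul]
        rw [norm_smul, f.norm_map]
        simp [mul_pow, sq_abs]
    · rintro ⟨r, ⟨x, hxS, hx0, rfl⟩, rfl⟩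
      refine ⟨α • f x, ⟨x, hxS, rfl⟩, ?_, ?_⟩
      · rw [smul_ne_zero_iff]
        exact ⟨hα, fun h => hx0 (by simpa using congrArg f.symm h)⟩
      · simp only [smul_eq_mul]
        rw [norm_smul, f.norm_map]
        simp [mul_pow, sq_abs]
  rw [pMin, hset, Real.sInf_smul_of_nonneg (sq_nonneg α)]
  rfl

lemma pMinVecs_image (S : Set (EuclideanSpace ℝ (Fin 2))) (α : ℝ) (hα : α ≠ 0)
    (f : EuclideanSpace ℝ (Fin 2) ≃ₗᵢ[ℝ] EuclideanSpace ℝ (Fin 2)) :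
    pMinVecs ((fun x => α • f x) '' S) = (fun x => α • f x) '' pMinVecs S := by
  have hnorm : ∀ x : EuclideanSpace ℝ (Fin 2), ‖α • f x‖^2 = α^2 * ‖x‖^2 := by
    intro x; rw [norm_smul, f.norm_map]; simp [mul_pow, sq_abs]
  ext y
  constructor
  · rintro ⟨⟨x, hxS, rfl⟩, hmin⟩
    refine ⟨x, ⟨hxS, ?_⟩, rfl⟩
    rw [hnorm, pMin_image S α hα f] at hmin
    exact mul_left_cancel₀ (pow_ne_zero 2 hα) hmin
  · rintro ⟨x, ⟨hxS, hmin⟩, rfl⟩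
    refine ⟨⟨x, hxS, rfl⟩, ?_⟩
    rw [hnorm, pMin_image S α hα f, hmin]

lemma ncard_pMinVecs_image (S : Set (EuclideanSpace ℝ (Fin 2))) (α : ℝ) (hα : α ≠ 0)
    (f : EuclideanSpace ℝ (Fin 2) ≃ₗᵢ[ℝ] EuclideanSpace ℝ (Fin 2)) :
    (pMinVecs ((fun x => α • f x) '' S)).ncard = (pMinVecs S).ncard := by
  rw [pMinVecs_image S α hα f]
  apply Set.ncard_image_of_injective
  intro x y hxy
  simp only at hxy
  have := smul_right_injective (EuclideanSpace ℝ (Fin 2)) hα hxy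
  exact f.injective this


noncomputable def hexV : EuclideanSpace ℝ (Fin 2) := vec2 1 0
noncomputable def hexW : EuclideanSpace ℝ (Fin 2) := vec2 (1/2) (Real.sqrt 3 / 2)

lemma hexV_norm_sq : ‖hexV‖^2 = 1 := by
  rw [← real_inner_self_eq_norm_sq, hexV, inner_vec2]; norm_num

lemma hexW_norm_sq : ‖hexW‖^2 = 1 := by
  rw [← real_inner_self_eq_norm_sq, hexW, inner_vec2]
  have : Real.sqrt 3 * Real.sqrt 3 = 3 := Real.mul_self_sqrt (by norm_num)
  field_simp
  nlinarith [this]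

lemma hexVW_inner : ⟪hexV, hexW⟫ = 1/2 := by
  rw [hexV, hexW, inner_vec2]; norm_num

lemma hex_norm_sq (m n : ℤ) :
    ‖m • hexV + n • hexW‖^2 = ((m^2 + m*n + n^2 : ℤ) : ℝ) := by
  rw [← Int.cast_smul_eq_zsmul ℝ m hexV, ← Int.cast_smul_eq_zsmul ℝ n hexW,
    norm_sq_combo, hexV_norm_sq, hexW_norm_sq, hexVW_inner]
  push_cast; ring

lemma hex_form_ge (m n : ℤ) (h : ¬(m = 0 ∧ n = 0)) : 1 ≤ m^2 + m*n + n^2 := by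
  push_neg at h
  have h4 : 4*(m^2 + m*n + n^2) = (2*m+n)^2 + 3*n^2 := by ring
  have hpos : 0 < m^2 + m*n + n^2 := by
    rcases eq_or_ne n 0 with hn | hn
    · subst hn
      have hm : m ≠ 0 := by tauto
      have : 1 ≤ m^2 := by nlinarith [Int.one_le_abs hm, sq_abs m]
      nlinarith
    · have : 1 ≤ n^2 := by nlinarith [Int.one_le_abs hn, sq_abs n]
      nlinarith [sq_nonneg (2*m+n)]
  omega

lemma hex_eq_zero {m n : ℤ} (h : m • hexV + n • hexW = 0) : m = 0 ∧ n = 0 := by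
  by_contra hc
  have h1 := hex_norm_sq m n
  rw [h] at h1
  simp only [norm_zero] at h1
  have : (0:ℝ) = ((m^2 + m*n + n^2 : ℤ) : ℝ) := by simpa using h1
  have h0 : m^2 + m*n + n^2 = 0 := by exact_mod_cast this.symm
  have := hex_form_ge m n hc
  omega

lemma hex_phi_inj {m n m' n' : ℤ} (h : m • hexV + n • hexW = m' • hexV + n' • hexW) :
    m = m' ∧ n = n' := by
  have : (m - m') • hexV + (n - n') • hexW = 0 := by
    rw [sub_smul, sub_smul]
    rw [sub_add_sub_comm, h, sub_self]
  have := hex_eq_zero this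
  omega

lemma hexV_ne_zero : hexV ≠ 0 := by
  intro h
  have := hexV_norm_sq
  rw [h] at this; simp at this

lemma pMin_hex : pMin (hexLattice : Set (EuclideanSpace ℝ (Fin 2))) = 1 := by
  have hVmem : hexV ∈ hexLattice := Submodule.subset_span (by left; rfl)
  refine le_antisymm ?_ ?_
  · apply csInf_le
    · exact ⟨0, fun r ⟨x, _, _, hx⟩ => hx ▸ sq_nonneg _⟩
    · exact ⟨hexV, hVmem, hexV_ne_zero, hexV_norm_sq⟩
  · apply le_csInf
    · exact ⟨1, hexV, hVmem, hexV_ne_zero, hexV_norm_sq⟩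
    · rintro r ⟨x, hxmem, hx0, rfl⟩
      rw [SetLike.mem_coe, hexLattice, Submodule.mem_span_pair] at hxmem
      obtain ⟨m, n, rfl⟩ := hxmem
      rw [show vec2 1 0 = hexV from rfl, show vec2 (1/2) (Real.sqrt 3/2) = hexW from rfl] at hx0 ⊢
      rw [hex_norm_sq]
      have hmn : ¬(m = 0 ∧ n = 0) := by
        rintro ⟨rfl, rfl⟩; simp at hx0
      exact_mod_cast hex_form_ge m n hmn

def hexSolutions : Finset (ℤ × ℤ) := {(1,0),(0,1),(-1,1),(-1,0),(0,-1),(1,-1)}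

lemma hex_minvecs :
    pMinVecs (hexLattice : Set (EuclideanSpace ℝ (Fin 2)))
      = (fun p : ℤ × ℤ => p.1 • hexV + p.2 • hexW) '' ↑hexSolutions := by
  ext z
  simp only [pMinVecs, Set.mem_setOf_eq, pMin_hex, SetLike.mem_coe]
  constructor
  · rintro ⟨hzmem, hznorm⟩
    rw [hexLattice, Submodule.mem_span_pair] at hzmem
    obtain ⟨m, n, rfl⟩ := hzmem
    rw [show vec2 1 0 = hexV from rfl, show vec2 (1/2) (Real.sqrt 3/2) = hexW from rfl] at hznorm ⊢
    rw [hex_norm_sq] at hznorm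
    have hk : m^2 + m*n + n^2 = 1 := by exact_mod_cast hznorm
    refine ⟨(m, n), ?_, rfl⟩
    have hn2 : n^2 ≤ 1 := by nlinarith [sq_nonneg (2*m+n)]
    have hm2 : m^2 ≤ 1 := by nlinarith [sq_nonneg (2*n+m)]
    have hn : -1 ≤ n ∧ n ≤ 1 := by constructor <;> nlinarith
    have hm : -1 ≤ m ∧ m ≤ 1 := by constructor <;> nlinarith
    simp only [hexSolutions, Finset.coe_insert, Set.mem_insert_iff, Finset.coe_singleton,
      Set.mem_singleton_iff, Prod.mk.injEq, Prod.ext_iff]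
    obtain ⟨hn1, hn2'⟩ := hn; obtain ⟨hm1, hm2'⟩ := hm
    interval_cases m <;> interval_cases n <;> omega
  · rintro ⟨⟨m, n⟩, hp, rfl⟩
    rw [Finset.mem_coe] at hp
    constructor
    · rw [hexLattice, Submodule.mem_span_pair]
      exact ⟨m, n, rfl⟩
    · rw [hex_norm_sq]
      fin_cases hp <;> norm_num

lemma hex_count : (pMinVecs (hexLattice : Set (EuclideanSpace ℝ (Fin 2)))).ncard = 6 := by
  rw [hex_minvecs]
  rw [Set.ncard_image_of_injective _ (fun p q h => ?_)]
  · simp [Set.ncard_coe_finset]; rfl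
  · obtain ⟨h1, h2⟩ := hex_phi_inj h
    exact Prod.ext h1 h2


section Forward

variable (L : Submodule ℤ (EuclideanSpace ℝ (Fin 2)))

lemma pMin_bddBelow :
    BddBelow {r : ℝ | ∃ x ∈ (L : Set (EuclideanSpace ℝ (Fin 2))), x ≠ 0 ∧ ‖x‖ ^ 2 = r} :=
  ⟨0, fun r ⟨x, _, _, hx⟩ => hx ▸ sq_nonneg _⟩

lemma pMin_le {z : EuclideanSpace ℝ (Fin 2)} (hz : z ∈ L) (h0 : z ≠ 0) :
    pMin (L : Set (EuclideanSpace ℝ (Fin 2))) ≤ ‖z‖ ^ 2 :=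
  csInf_le (pMin_bddBelow L) ⟨z, hz, h0, rfl⟩

lemma pMin_pos [DiscreteTopology L] [IsZLattice ℝ L] :
    0 < pMin (L : Set (EuclideanSpace ℝ (Fin 2))) := by
  -- a nonzero element of L
  have hne : ∃ x ∈ (L : Set (EuclideanSpace ℝ (Fin 2))), x ≠ 0 := by
    by_contra h
    push_neg at h
    have hsub : (L : Set (EuclideanSpace ℝ (Fin 2))) ⊆ {0} := fun x hx => h x hx
    have := IsZLattice.span_top (K := ℝ) (L := L)
    have hle : Submodule.span ℝ (L : Set (EuclideanSpace ℝ (Fin 2))) ≤ ⊥ := by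
      rw [← Submodule.span_zero_singleton ℝ]
      exact Submodule.span_mono hsub
    rw [this] at hle
    have : (vec2 1 0 : EuclideanSpace ℝ (Fin 2)) = 0 := by
      have : vec2 1 0 ∈ (⊥ : Submodule ℝ (EuclideanSpace ℝ (Fin 2))) := hle trivial
      simpa using this
    have h1 := inner_vec2 1 0 1 0
    rw [this] at h1
    simp at h1
  -- discreteness
  have hopen : IsOpen ({0} : Set L) := isOpen_discrete _
  rw [Metric.isOpen_iff] at hopen
  obtain ⟨ε, hε, hball⟩ := hopen 0 rfl
  have hsmall : ∀ x ∈ L, ‖x‖ < ε → x = 0 := by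
    intro x hx hlt
    have hmem : (⟨x, hx⟩ : L) ∈ Metric.ball (0 : L) ε := by
      rw [Metric.mem_ball, Subtype.dist_eq]
      simpa using hlt
    have := hball hmem
    simpa [Subtype.ext_iff] using this
  obtain ⟨x₀, hx₀L, hx₀⟩ := hne
  have hlb : ∀ r ∈ {r : ℝ | ∃ x ∈ (L : Set (EuclideanSpace ℝ (Fin 2))), x ≠ 0 ∧ ‖x‖ ^ 2 = r},
      ε^2 ≤ r := by
    rintro r ⟨x, hxL, hx0, rfl⟩
    have : ε ≤ ‖x‖ := by
      by_contra hc
      push_neg at hc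
      exact hx0 (hsmall x hxL hc)
    have := pow_le_pow_left₀ (le_of_lt hε) this 2
    linarith
  have : ε^2 ≤ pMin (L : Set (EuclideanSpace ℝ (Fin 2))) :=
    le_csInf ⟨‖x₀‖^2, x₀, hx₀L, hx₀, rfl⟩ hlb
  nlinarith

/-- A pair of vectors of equal square-norm `m` with inner product `< m` in absolute
value spans the plane. -/
lemma span_pair_top (m : ℝ) (hm : 0 < m) (x y : EuclideanSpace ℝ (Fin 2))
    (hx : ‖x‖^2 = m) (hy : ‖y‖^2 = m) (hp : |⟪x,y⟫| < m) :
    Submodule.span ℝ ({x, y} : Set (EuclideanSpace ℝ (Fin 2))) = ⊤ := by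
  have hpsq : ⟪x,y⟫^2 < m^2 := by
    rcases abs_lt.mp hp with ⟨h1, h2⟩
    nlinarith
  have hli : LinearIndependent ℝ ![x, y] := by
    rw [LinearIndependent.pair_iff]
    intro s t hst
    have h1 : ⟪x, s•x + t•y⟫ = 0 := by rw [hst, inner_zero_right]
    have h2 : ⟪y, s•x + t•y⟫ = 0 := by rw [hst, inner_zero_right]
    rw [inner_add_right, real_inner_smul_right, real_inner_smul_right,
      real_inner_self_eq_norm_sq, hx] at h1
    rw [inner_add_right, real_inner_smul_right, real_inner_smul_right,
      real_inner_self_eq_norm_sq, hy, real_inner_comm x y] at h2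
    constructor
    · have hs : s * (m^2 - ⟪x,y⟫^2) = 0 := by linear_combination m*h1 - ⟪x,y⟫*h2
      rcases mul_eq_zero.mp hs with h | h
      · exact h
      · exfalso; nlinarith
    · have ht : t * (m^2 - ⟪x,y⟫^2) = 0 := by linear_combination m*h2 - ⟪x,y⟫*h1
      rcases mul_eq_zero.mp ht with h | h
      · exact h
      · exfalso; nlinarith
  have hrange : Set.range ![x, y] = {x, y} := by
    simp only [Matrix.range_cons, Matrix.range_empty]
    rw [Set.pair_comm]
    simp
  apply Submodule.eq_top_of_finrank_eq
  rw [← hrange, finrank_span_eq_card hli]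
  simp [finrank_euclideanSpace_fin]

end Forward

lemma vec2_single (a b : ℝ) :
    vec2 a b = a • EuclideanSpace.single (0 : Fin 2) (1:ℝ)
      + b • EuclideanSpace.single (1 : Fin 2) (1:ℝ) := by
  ext i
  fin_cases i <;>
    simp [vec2, EuclideanSpace.single_apply, PiLp.toLp_apply]

lemma similar_of_basis (L : Submodule ℤ (EuclideanSpace ℝ (Fin 2)))
    (m : ℝ) (hm : 0 < m) (hmin : pMin (L : Set (EuclideanSpace ℝ (Fin 2))) = m)
    (x y : EuclideanSpace ℝ (Fin 2)) (hxL : x ∈ L) (hyL : y ∈ L)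
    (hx : ‖x‖^2 = m) (hy : ‖y‖^2 = m) (hxy : ⟪x,y⟫ = m/2) :
    pSimilar (L : Set (EuclideanSpace ℝ (Fin 2)))
      (hexLattice : Set (EuclideanSpace ℝ (Fin 2))) := by
  have habs : |⟪x,y⟫| < m := by
    rw [hxy, abs_of_pos (by linarith)]; linarith
  have hspan := span_pair_top m hm x y hx hy habs
  -- Step 1 : L = span ℤ {x, y}
  have hLspan : L = Submodule.span ℤ ({x, y} : Set (EuclideanSpace ℝ (Fin 2))) := by
    refine le_antisymm ?_ (Submodule.span_le.mpr ?_)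
    · intro z hz
      have hz2 : z ∈ Submodule.span ℝ ({x, y} : Set (EuclideanSpace ℝ (Fin 2))) := by
        rw [hspan]; trivial
      rw [Submodule.mem_span_pair] at hz2
      obtain ⟨s, t, rfl⟩ := hz2
      set a : ℤ := round s with ha
      set b : ℤ := round t with hb
      have hmem : a • x + b • y ∈ L := L.add_mem (L.smul_mem a hxL) (L.smul_mem b hyL)
      have hd : s • x + t • y - (a • x + b • y) = (s - a) • x + (t - b) • y := by
        rw [← Int.cast_smul_eq_zsmul ℝ a x, ← Int.cast_smul_eq_zsmul ℝ b y,
          sub_smul, sub_smul]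
        abel
      have hsa : |s - (a:ℝ)| ≤ 1/2 := abs_sub_round s
      have htb : |t - (b:ℝ)| ≤ 1/2 := abs_sub_round t
      have heq0 : s • x + t • y - (a • x + b • y) = 0 := by
        by_contra hne
        have hmem2 : s • x + t • y - (a • x + b • y) ∈ L := L.sub_mem hz hmem
        have hle := pMin_le L hmem2 hne
        rw [hmin, hd, norm_sq_combo, hx, hy, hxy] at hle
        have h1 : (s-(a:ℝ))^2 ≤ 1/4 := by
          nlinarith [abs_nonneg (s-(a:ℝ)), sq_abs (s-(a:ℝ))]
        have h2 : (t-(b:ℝ))^2 ≤ 1/4 := by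
          nlinarith [abs_nonneg (t-(b:ℝ)), sq_abs (t-(b:ℝ))]
        have h3 : (s-(a:ℝ))*(t-(b:ℝ)) ≤ 1/4 := by
          calc (s-(a:ℝ))*(t-(b:ℝ)) ≤ |(s-(a:ℝ))*(t-(b:ℝ))| := le_abs_self _
          _ = |s-(a:ℝ)| * |t-(b:ℝ)| := abs_mul _ _
          _ ≤ (1/2)*(1/2) := mul_le_mul hsa htb (abs_nonneg _) (by norm_num)
          _ = 1/4 := by norm_num
        nlinarith
      have heq : s • x + t • y = a • x + b • y := by
        rwa [sub_eq_zero] at heq0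
      rw [heq]
      exact Submodule.mem_span_pair.mpr ⟨a, b, rfl⟩
    · rintro z (rfl | rfl)
      · exact hxL
      · exact hyL
  -- Step 2 : orthonormal basis adapted to x, y
  set r := Real.sqrt m with hrdef
  have hr0 : 0 < r := Real.sqrt_pos.mpr hm
  have hr2 : r^2 = m := Real.sq_sqrt hm.le
  set u := (2:ℝ) • y - x with hudef
  have hxu : ⟪x, u⟫ = 0 := by
    rw [hudef, inner_sub_right, real_inner_smul_right, real_inner_self_eq_norm_sq, hx, hxy]
    ring
  have hu2 : ‖u‖^2 = 3*m := by
    have huc : u = (-1 : ℝ) • x + (2:ℝ) • y := by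
      rw [hudef]; simp [neg_smul]; abel
    rw [huc, norm_sq_combo, hx, hy, hxy]; ring
  set s3 := Real.sqrt (3*m) with hs3def
  have hs30 : 0 < s3 := Real.sqrt_pos.mpr (by linarith)
  have hs32 : s3^2 = 3*m := Real.sq_sqrt (by linarith)
  set e1 := r⁻¹ • x with he1
  set e2 := s3⁻¹ • u with he2
  have hxe1 : x = r • e1 := by
    rw [he1, smul_smul, mul_inv_cancel₀ hr0.ne', one_smul]
  have hue2 : u = s3 • e2 := by
    rw [he2, smul_smul, mul_inv_cancel₀ hs30.ne', one_smul]
  have hye : y = (2:ℝ)⁻¹ • (x + u) := by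
    rw [hudef]
    have : x + ((2:ℝ) • y - x) = (2:ℝ) • y := by abel
    rw [this, smul_smul]
    norm_num
  have key00 : ⟪e1, e1⟫ = 1 := by
    rw [he1, real_inner_smul_left, real_inner_smul_right, real_inner_self_eq_norm_sq, hx, ← hr2]
    field_simp
  have key01 : ⟪e1, e2⟫ = 0 := by
    rw [he1, he2, real_inner_smul_left, real_inner_smul_right, hxu]; ring
  have key10 : ⟪e2, e1⟫ = 0 := by rw [real_inner_comm]; exact key01
  have key11 : ⟪e2, e2⟫ = 1 := by
    rw [he2, real_inner_smul_left, real_inner_smul_right, real_inner_self_eq_norm_sq, hu2, ← hs32]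
    field_simp
  have honb : Orthonormal ℝ ![e1, e2] := by
    rw [orthonormal_iff_ite]
    intro i j
    fin_cases i <;> fin_cases j <;>
      simp [key00, key01, key10, key11,
        (by rw [norm_eq_sqrt_real_inner, key00, Real.sqrt_one] : ‖e1‖ = 1),
        (by rw [norm_eq_sqrt_real_inner, key11, Real.sqrt_one] : ‖e2‖ = 1)]
  have hrange12 : Set.range ![e1, e2] = {e1, e2} := by
    simp only [Matrix.range_cons, Matrix.range_empty]
    rw [Set.pair_comm]
    simp
  have hx_mem : x ∈ Submodule.span ℝ ({e1, e2} : Set (EuclideanSpace ℝ (Fin 2))) := by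
    rw [hxe1]
    exact Submodule.smul_mem _ _ (Submodule.subset_span (Or.inl rfl))
  have hu_mem : u ∈ Submodule.span ℝ ({e1, e2} : Set (EuclideanSpace ℝ (Fin 2))) := by
    rw [hue2]
    exact Submodule.smul_mem _ _ (Submodule.subset_span (Or.inr rfl))
  have hy_mem : y ∈ Submodule.span ℝ ({e1, e2} : Set (EuclideanSpace ℝ (Fin 2))) := by
    rw [hye]
    exact Submodule.smul_mem _ _ (Submodule.add_mem _ hx_mem hu_mem)
  have hsp : ⊤ ≤ Submodule.span ℝ (Set.range ![e1, e2]) := by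
    rw [hrange12, ← hspan]
    apply Submodule.span_le.mpr
    rintro z (rfl | rfl)
    · exact hx_mem
    · exact hy_mem
  set onb : OrthonormalBasis (Fin 2) ℝ (EuclideanSpace ℝ (Fin 2)) :=
    OrthonormalBasis.mk honb hsp with honbdef
  set f := onb.repr with hfdef
  have hfe1 : f e1 = EuclideanSpace.single (0 : Fin 2) (1:ℝ) := by
    have := onb.repr_self 0
    simpa [honbdef, OrthonormalBasis.coe_mk] using this
  have hfe2 : f e2 = EuclideanSpace.single (1 : Fin 2) (1:ℝ) := by
    have := onb.repr_self 1
    simpa [honbdef, OrthonormalBasis.coe_mk] using this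
  have hfx : f x = r • EuclideanSpace.single (0 : Fin 2) (1:ℝ) := by
    rw [hxe1, map_smul, hfe1]
  have hfu : f u = s3 • EuclideanSpace.single (1 : Fin 2) (1:ℝ) := by
    rw [hue2, map_smul, hfe2]
  have hfy : f y = (2:ℝ)⁻¹ • (r • EuclideanSpace.single (0 : Fin 2) (1:ℝ)
      + s3 • EuclideanSpace.single (1 : Fin 2) (1:ℝ)) := by
    rw [hye, map_smul, map_add, hfx, hfu]
  -- the similarity
  refine ⟨r⁻¹, f, inv_ne_zero hr0.ne', ?_⟩
  have hs3r : r⁻¹ * s3 = Real.sqrt 3 := by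
    rw [hs3def, hrdef, Real.sqrt_mul (by norm_num : (0:ℝ) ≤ 3) m]
    field_simp [(Real.sqrt_pos.mpr hm).ne']
  have hTx : r⁻¹ • f x = vec2 1 0 := by
    rw [hfx, smul_smul, inv_mul_cancel₀ hr0.ne', one_smul, vec2_single]
    simp
  have hTy : r⁻¹ • f y = vec2 (1/2) (Real.sqrt 3 / 2) := by
    rw [hfy, vec2_single, smul_add, smul_add, smul_smul, smul_smul, smul_smul, smul_smul]
    congr 1
    · congr 1
      field_simp
    · congr 1
      rw [← hs3r]
      ring
  -- image computation
  set Tlin : EuclideanSpace ℝ (Fin 2) →ₗ[ℝ] EuclideanSpace ℝ (Fin 2) :=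
    r⁻¹ • (f.toLinearEquiv.toLinearMap) with hTlin
  set T : EuclideanSpace ℝ (Fin 2) →ₗ[ℤ] EuclideanSpace ℝ (Fin 2) :=
    Tlin.restrictScalars ℤ with hT
  have hTapp : ∀ z, T z = r⁻¹ • f z := fun z => rfl
  have himg : (fun z => r⁻¹ • f z) '' (L : Set (EuclideanSpace ℝ (Fin 2)))
      = (Submodule.map T L : Set (EuclideanSpace ℝ (Fin 2))) := by
    rw [Submodule.map_coe]
    apply Set.image_congr
    intro z _
    exact (hTapp z).symm
  rw [himg]
  have : Submodule.map T L = hexLattice := by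
    rw [hLspan, Submodule.map_span, Set.image_pair, hTapp, hTapp, hTx, hTy, hexLattice]
  rw [this]

lemma forward_dir (L : Submodule ℤ (EuclideanSpace ℝ (Fin 2)))
    [DiscreteTopology L] [IsZLattice ℝ L]
    (h6 : (pMinVecs (L : Set (EuclideanSpace ℝ (Fin 2)))).ncard = 6) :
    pSimilar (L : Set (EuclideanSpace ℝ (Fin 2)))
      (hexLattice : Set (EuclideanSpace ℝ (Fin 2))) := by
  set m := pMin (L : Set (EuclideanSpace ℝ (Fin 2))) with hmdef
  have hm : 0 < m := pMin_pos L
  set S := pMinVecs (L : Set (EuclideanSpace ℝ (Fin 2))) with hSdef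
  have hSP : ∀ z ∈ S, z ∈ L ∧ z ≠ 0 ∧ ‖z‖^2 = m := by
    rintro z ⟨hzL, hzn⟩
    refine ⟨hzL, ?_, hzn⟩
    rintro rfl
    rw [norm_zero] at hzn
    simp only [ne_eq, OfNat.ofNat_ne_zero, not_false_eq_true, zero_pow] at hzn
    linarith [hzn ▸ hm]
  have hneg : ∀ z ∈ S, -z ∈ S := by
    rintro z ⟨h1, h2⟩
    exact ⟨L.neg_mem h1, by simpa using h2⟩
  -- pick three pairwise non-(anti)equal minimal vectors
  have hne : S.Nonempty := Set.nonempty_of_ncard_ne_zero (by omega)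
  obtain ⟨a, ha⟩ := hne
  have hbne : (S \ ({a, -a} : Set _)).Nonempty := by
    rw [Set.diff_nonempty]
    intro hsub
    have h1 := Set.ncard_le_ncard hsub (Set.toFinite _)
    have h2 := Set.ncard_insert_le a ({-a} : Set (EuclideanSpace ℝ (Fin 2)))
    simp [Set.ncard_singleton] at h2
    omega
  obtain ⟨b, hbS, hbmem⟩ := hbne
  have hcne : (S \ ({a, -a, b, -b} : Set _)).Nonempty := by
    rw [Set.diff_nonempty]
    intro hsub
    have h1 := Set.ncard_le_ncard hsub (Set.toFinite _)
    have h2 := Set.ncard_insert_le a ({-a, b, -b} : Set (EuclideanSpace ℝ (Fin 2)))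
    have h3 := Set.ncard_insert_le (-a) ({b, -b} : Set (EuclideanSpace ℝ (Fin 2)))
    have h4 := Set.ncard_insert_le b ({-b} : Set (EuclideanSpace ℝ (Fin 2)))
    simp [Set.ncard_singleton] at h2 h3 h4
    omega
  obtain ⟨c, hcS, hcmem⟩ := hcne
  simp only [Set.mem_insert_iff, Set.mem_singleton_iff, not_or] at hbmem hcmem
  obtain ⟨hba, hba'⟩ := hbmem
  obtain ⟨hca, hca', hcb, hcb'⟩ := hcmem
  -- inner product bounds
  have key : ∀ u v : EuclideanSpace ℝ (Fin 2), u ∈ S → v ∈ S → u ≠ v → u ≠ -v →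
      |⟪u,v⟫| ≤ m/2 := by
    intro u v hu hv huv huv'
    obtain ⟨huL, hu0, hun⟩ := hSP u hu
    obtain ⟨hvL, hv0, hvn⟩ := hSP v hv
    have hsub : u - v ∈ L := L.sub_mem huL hvL
    have hsub0 : u - v ≠ 0 := sub_ne_zero.mpr huv
    have h1 := pMin_le L hsub hsub0
    have hadd : u + v ∈ L := L.add_mem huL hvL
    have hadd0 : u + v ≠ 0 := by
      intro h
      exact huv' (eq_neg_of_add_eq_zero_left h)
    have h2 := pMin_le L hadd hadd0
    rw [← hmdef] at h1 h2
    rw [norm_sub_sq_real, hun, hvn] at h1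
    rw [norm_add_sq_real, hun, hvn] at h2
    rw [abs_le]
    constructor <;> linarith
  have haS := ha
  obtain ⟨haL, ha0, han⟩ := hSP a haS
  obtain ⟨hbL, hb0, hbn⟩ := hSP b hbS
  obtain ⟨hcL, hc0, hcn⟩ := hSP c hcS
  have hab : a ≠ b := Ne.symm hba
  have hab' : a ≠ -b := by
    intro h; apply hba'; rw [h, neg_neg]
  have hP := key a b haS hbS hab hab'
  have hQ := key a c haS hcS (Ne.symm hca) (by intro h; apply hca'; rw [h, neg_neg])
  have hR := key b c hbS hcS (Ne.symm hcb) (by intro h; apply hcb'; rw [h, neg_neg])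
  -- c in the real span of a, b
  have hPlt : |⟪a,b⟫| < m := lt_of_le_of_lt hP (by linarith)
  have hspanab := span_pair_top m hm a b han hbn hPlt
  have hc' : c ∈ Submodule.span ℝ ({a, b} : Set (EuclideanSpace ℝ (Fin 2))) := by
    rw [hspanab]; trivial
  obtain ⟨s, t, hst⟩ := Submodule.mem_span_pair.mp hc'
  set P := ⟪a,b⟫ with hPdef
  set Q := ⟪a,c⟫ with hQdef
  set R := ⟪b,c⟫ with hRdef
  have hq : Q = s*m + t*P := by
    rw [hQdef, hPdef, ← hst, inner_add_right, real_inner_smul_right, real_inner_smul_right,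
      real_inner_self_eq_norm_sq, han]
  have hr : R = s*P + t*m := by
    rw [hRdef, hPdef, ← hst, inner_add_right, real_inner_smul_right, real_inner_smul_right,
      real_inner_self_eq_norm_sq, hbn, real_inner_comm a b]
  have hcc : m = s^2*m + 2*s*t*P + t^2*m := by
    have h := norm_sq_combo a b s t
    rw [hst, han, hbn, hcn] at h
    rw [hPdef]
    linarith [h]
  have hident : m*(P^2+Q^2+R^2) = m^3 + 2*P*Q*R := by
    rw [hq, hr]
    linear_combination (P^2 - m^2) * hcc
  have sqb : ∀ w:ℝ, |w| ≤ m/2 → w^2 ≤ m^2/4 := by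
    intro w hw
    nlinarith [abs_nonneg w, sq_abs w]
  have hPsq := sqb P hP
  have hQsq := sqb Q hQ
  have hRsq := sqb R hR
  have hPQ : |P*Q| ≤ m^2/4 := by
    rw [abs_mul]
    calc |P| * |Q| ≤ (m/2)*(m/2) := mul_le_mul hP hQ (abs_nonneg _) (by linarith)
    _ = m^2/4 := by ring
  have hPQR : |P*Q*R| ≤ m^3/8 := by
    rw [abs_mul]
    calc |P*Q| * |R| ≤ (m^2/4)*(m/2) := mul_le_mul hPQ hR (abs_nonneg _) (by positivity)
    _ = m^3/8 := by ring
  have h2pqr : -(m^3/4) ≤ 2*(P*Q*R) := by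
    have := neg_abs_le (P*Q*R)
    nlinarith
  have ht1 : m*Q^2 ≤ m*(m^2/4) := mul_le_mul_of_nonneg_left hQsq hm.le
  have ht2 : m*R^2 ≤ m*(m^2/4) := mul_le_mul_of_nonneg_left hRsq hm.le
  have hmp : m*(m^2/4) ≤ m*P^2 := by nlinarith
  have hpge : m^2/4 ≤ P^2 := le_of_mul_le_mul_left hmp hm
  have hpeq : P^2 = m^2/4 := le_antisymm hPsq hpge
  have hfac : (P - m/2)*(P + m/2) = 0 := by linear_combination hpeq
  rcases mul_eq_zero.mp hfac with h | h
  · have hPval : P = m/2 := by linarith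
    exact similar_of_basis L m hm hmdef.symm a b haL hbL han hbn hPval
  · have hPval : ⟪a, -b⟫ = m/2 := by
      rw [inner_neg_right]
      rw [hPdef] at h
      linarith
    exact similar_of_basis L m hm hmdef.symm a (-b) haL (L.neg_mem hbL) han
      (by rw [norm_neg]; exact hbn) hPval


/-- A full-rank lattice `Λ ⊂ ℝ²` has exactly 6 minimal vectors if and only if `Λ`
is similar to the hexagonal lattice. -/
theorem statement8 (L : Submodule ℤ (EuclideanSpace ℝ (Fin 2)))
    [DiscreteTopology L] [IsZLattice ℝ L] :
    (pMinVecs (L : Set (EuclideanSpace ℝ (Fin 2)))).ncard = 6 ↔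
      pSimilar (L : Set (EuclideanSpace ℝ (Fin 2)))
        (hexLattice : Set (EuclideanSpace ℝ (Fin 2))) := by
  constructor
  · exact forward_dir L
  · rintro ⟨α, f, hα, hT⟩
    have h := ncard_pMinVecs_image (L : Set (EuclideanSpace ℝ (Fin 2))) α hα f
    rw [← hT, hex_count] at h
    exact h.symm
end

section
/- There are infinitely many pairwise non-similar well-rounded full-rank lattices in ℝ² each having exactly 4 minimal vectors. -/
noncomputable def cc (n : ℕ) : ℝ := 1 / (n + 3)
noncomputable def ss (n : ℕ) : ℝ := Real.sqrt (1 - cc n ^ 2)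

noncomputable def vec (a b : ℝ) : EuclideanSpace ℝ (Fin 2) := WithLp.toLp 2 ![a, b]

@[simp] lemma vec_zero (a b : ℝ) : vec a b 0 = a := rfl
@[simp] lemma vec_one (a b : ℝ) : vec a b 1 = b := rfl

lemma norm_sq (x : EuclideanSpace ℝ (Fin 2)) : ‖x‖ ^ 2 = x 0 ^ 2 + x 1 ^ 2 := by
  rw [EuclideanSpace.norm_eq, Real.sq_sqrt (by positivity)]
  simp [Fin.sum_univ_two, sq_abs]

lemma inner_formula (x y : EuclideanSpace ℝ (Fin 2)) :
    inner ℝ x y = x 0 * y 0 + x 1 * y 1 := by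
  simp [PiLp.inner_apply, Fin.sum_univ_two, RCLike.inner_apply, mul_comm]

lemma cc_pos (n : ℕ) : 0 < cc n := by unfold cc; positivity
lemma cc_lt_half (n : ℕ) : cc n < 1/2 := by
  unfold cc
  rw [div_lt_div_iff₀ (by positivity) (by norm_num)]
  linarith [Nat.cast_nonneg (α := ℝ) n]
lemma cc_sq_add_ss_sq (n : ℕ) : cc n ^ 2 + ss n ^ 2 = 1 := by
  have h : cc n ^ 2 ≤ 1 := by nlinarith [cc_pos n, cc_lt_half n]
  unfold ss; rw [Real.sq_sqrt (by linarith)]; ring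
lemma ss_pos (n : ℕ) : 0 < ss n := by
  unfold ss
  apply Real.sqrt_pos.2
  nlinarith [cc_pos n, cc_lt_half n]
lemma cc_inj : Function.Injective cc := by
  intro m n h
  unfold cc at h
  field_simp at h
  exact_mod_cast (by linarith : (m : ℝ) = n)

noncomputable def e1 : EuclideanSpace ℝ (Fin 2) := vec 1 0
noncomputable def vv (n : ℕ) : EuclideanSpace ℝ (Fin 2) := vec (cc n) (ss n)

noncomputable def lat (n : ℕ) : Submodule ℤ (EuclideanSpace ℝ (Fin 2)) :=
  Submodule.span ℤ {e1, vv n}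

lemma e1_ne_zero : e1 ≠ 0 := by
  intro h
  have := congrArg (fun v : EuclideanSpace ℝ (Fin 2) => v 0) h
  simp [e1] at this

lemma mem_lat_iff {n : ℕ} {x : EuclideanSpace ℝ (Fin 2)} :
    x ∈ lat n ↔ ∃ a b : ℤ, x = (a : ℝ) • e1 + (b : ℝ) • vv n := by
  rw [lat, Submodule.mem_span_pair]
  constructor
  · rintro ⟨a, b, rfl⟩
    exact ⟨a, b, by rw [Int.cast_smul_eq_zsmul, Int.cast_smul_eq_zsmul]⟩
  · rintro ⟨a, b, rfl⟩
    exact ⟨a, b, by rw [Int.cast_smul_eq_zsmul, Int.cast_smul_eq_zsmul]⟩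

lemma comb_zero (n : ℕ) (a b : ℝ) : (a • e1 + b • vv n) 0 = a + b * cc n := by
  simp [e1, vv]
lemma comb_one (n : ℕ) (a b : ℝ) : (a • e1 + b • vv n) 1 = b * ss n := by
  simp [e1, vv]

lemma normQ (n : ℕ) (a b : ℝ) :
    ‖a • e1 + b • vv n‖ ^ 2 = a ^ 2 + 2 * a * b * cc n + b ^ 2 := by
  rw [norm_sq, comb_zero, comb_one]
  linear_combination b ^ 2 * cc_sq_add_ss_sq n

lemma int_sq_ge_one {a : ℤ} (h : a ≠ 0) : (1 : ℝ) ≤ (a : ℝ) ^ 2 := by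
  have : 1 ≤ a ^ 2 := by
    rcases lt_or_gt_of_ne h with h' | h' <;> nlinarith
  exact_mod_cast this

lemma Q_ge_one {n : ℕ} {a b : ℤ} (h : ¬(a = 0 ∧ b = 0)) :
    (1 : ℝ) ≤ (a : ℝ) ^ 2 + 2 * a * b * cc n + b ^ 2 := by
  have hc1 := cc_pos n
  have hc2 := cc_lt_half n
  by_cases ha : a = 0
  · subst ha
    have hb : b ≠ 0 := by tauto
    have := int_sq_ge_one hb
    push_cast
    linarith
  by_cases hb : b = 0
  · subst hb
    have := int_sq_ge_one ha
    push_cast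
    linarith
  · have h1 := int_sq_ge_one ha
    have h2 := int_sq_ge_one hb
    nlinarith [sq_nonneg ((a : ℝ) + b)]

lemma Q_gt_one {n : ℕ} {a b : ℤ} (ha : a ≠ 0) (hb : b ≠ 0) :
    (1 : ℝ) < (a : ℝ) ^ 2 + 2 * a * b * cc n + b ^ 2 := by
  have hc1 := cc_pos n
  have hc2 := cc_lt_half n
  have h1 := int_sq_ge_one ha
  have h2 := int_sq_ge_one hb
  nlinarith [sq_nonneg ((a : ℝ) + b)]

lemma int_sq_eq_one {a : ℤ} (h : a ^ 2 = 1) : a = 1 ∨ a = -1 := by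
  have : (a - 1) * (a + 1) = 0 := by linear_combination h
  rcases mul_eq_zero.mp this with h' | h' <;> omega

lemma norm_e1 : ‖e1‖ ^ 2 = 1 := by rw [norm_sq]; simp [e1]
lemma norm_vv (n : ℕ) : ‖vv n‖ ^ 2 = 1 := by
  rw [norm_sq]; simpa [vv] using cc_sq_add_ss_sq n

lemma e1_mem (n : ℕ) : e1 ∈ lat n := Submodule.subset_span (by simp)
lemma vv_mem (n : ℕ) : vv n ∈ lat n := Submodule.subset_span (by simp)

/-- Every nonzero lattice point has squared norm at least 1. -/
lemma norm_lb {n : ℕ} {x : EuclideanSpace ℝ (Fin 2)} (hx : x ∈ lat n) (hx0 : x ≠ 0) :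
    (1 : ℝ) ≤ ‖x‖ ^ 2 := by
  obtain ⟨a, b, rfl⟩ := mem_lat_iff.mp hx
  rw [normQ]
  apply Q_ge_one
  rintro ⟨rfl, rfl⟩
  simp at hx0

lemma pMin_lat (n : ℕ) : pMin (lat n : Set (EuclideanSpace ℝ (Fin 2))) = 1 := by
  have hmem : (1 : ℝ) ∈ {r : ℝ | ∃ x ∈ (lat n : Set (EuclideanSpace ℝ (Fin 2))),
      x ≠ 0 ∧ ‖x‖ ^ 2 = r} := ⟨e1, e1_mem n, e1_ne_zero, norm_e1⟩
  have hlb : ∀ r ∈ {r : ℝ | ∃ x ∈ (lat n : Set (EuclideanSpace ℝ (Fin 2))),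
      x ≠ 0 ∧ ‖x‖ ^ 2 = r}, (1:ℝ) ≤ r := by
    rintro r ⟨x, hx, hx0, rfl⟩
    exact norm_lb hx hx0
  exact le_antisymm (csInf_le ⟨1, hlb⟩ hmem) (le_csInf ⟨1, hmem⟩ hlb)

/-- Characterization of minimal vectors. -/
lemma minvec_char {n : ℕ} {x : EuclideanSpace ℝ (Fin 2)} (hx : x ∈ lat n)
    (hn : ‖x‖ ^ 2 = 1) : x = e1 ∨ x = -e1 ∨ x = vv n ∨ x = -(vv n) := by
  obtain ⟨a, b, rfl⟩ := mem_lat_iff.mp hx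
  rw [normQ] at hn
  by_cases ha : a = 0
  · subst ha
    have hb2 : b ^ 2 = 1 := by
      have : ((b : ℝ)) ^ 2 = 1 := by push_cast at hn ⊢; linarith
      exact_mod_cast this
    rcases int_sq_eq_one hb2 with rfl | rfl
    · right; right; left; simp
    · right; right; right; simp
  by_cases hb : b = 0
  · subst hb
    have ha2 : a ^ 2 = 1 := by
      have : ((a : ℝ)) ^ 2 = 1 := by push_cast at hn ⊢; linarith
      exact_mod_cast this
    rcases int_sq_eq_one ha2 with rfl | rfl
    · left; simp
    · right; left; simp
  · exact absurd hn (by have := Q_gt_one (n := n) ha hb; linarith)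

lemma pMinVecs_lat (n : ℕ) :
    pMinVecs (lat n : Set (EuclideanSpace ℝ (Fin 2)))
      = {e1, -e1, vv n, -(vv n)} := by
  ext x
  simp only [pMinVecs, Set.mem_setOf_eq, pMin_lat, Set.mem_insert_iff,
    Set.mem_singleton_iff]
  constructor
  · rintro ⟨hx, hn⟩
    exact minvec_char hx hn
  · rintro (rfl | rfl | rfl | rfl)
    · exact ⟨e1_mem n, norm_e1⟩
    · exact ⟨neg_mem (e1_mem n), by rw [norm_neg]; exact norm_e1⟩
    · exact ⟨vv_mem n, norm_vv n⟩
    · exact ⟨neg_mem (vv_mem n), by rw [norm_neg]; exact norm_vv n⟩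

lemma ne_of_coord {x y : EuclideanSpace ℝ (Fin 2)} (i : Fin 2) (h : x i ≠ y i) :
    x ≠ y := fun e => h (by rw [e])

lemma ncard_lat (n : ℕ) :
    (pMinVecs (lat n : Set (EuclideanSpace ℝ (Fin 2)))).ncard = 4 := by
  have hc := cc_pos n
  have hc2 := cc_lt_half n
  have hs := ss_pos n
  have h1 : e1 ≠ -e1 := ne_of_coord 0 (by simp [e1]; norm_num)
  have h2 : e1 ≠ vv n := ne_of_coord 0 (by simp [e1, vv]; linarith)
  have h3 : e1 ≠ -(vv n) := ne_of_coord 1 (by simp [e1, vv]; linarith)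
  have h4 : -e1 ≠ vv n := ne_of_coord 1 (by simp [e1, vv]; linarith)
  have h5 : -e1 ≠ -(vv n) := ne_of_coord 0 (by simp [e1, vv]; linarith)
  have h6 : vv n ≠ -(vv n) := ne_of_coord 1 (by simp [vv]; linarith)
  rw [pMinVecs_lat]
  rw [Set.ncard_insert_of_notMem (by simp [h1, h2, h3]),
    Set.ncard_insert_of_notMem (by simp [h4, h5]),
    Set.ncard_insert_of_notMem (by simp [h6]),
    Set.ncard_singleton]

lemma span_pair_top_s9 (n : ℕ) :
    Submodule.span ℝ ({e1, vv n} : Set (EuclideanSpace ℝ (Fin 2))) = ⊤ := by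
  have hs := ss_pos n
  rw [eq_top_iff]
  intro x _
  rw [Submodule.mem_span_pair]
  refine ⟨x 0 - x 1 * cc n / ss n, x 1 / ss n, ?_⟩
  ext i
  fin_cases i
  · exact (comb_zero n (x 0 - x 1 * cc n / ss n) (x 1 / ss n)).trans (by field_simp; change _ = ss n * x 0; ring)
  · exact (comb_one n (x 0 - x 1 * cc n / ss n) (x 1 / ss n)).trans (by field_simp; rfl)

lemma lat_full (n : ℕ) :
    Submodule.span ℝ ((lat n : Set (EuclideanSpace ℝ (Fin 2)))) = ⊤ := by
  rw [eq_top_iff, ← span_pair_top_s9 n]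
  apply Submodule.span_mono
  intro x hx
  rcases hx with rfl | hx
  · exact e1_mem n
  · rw [Set.mem_singleton_iff] at hx; subst hx; exact vv_mem n

lemma lat_wr (n : ℕ) : pIsWellRounded (lat n : Set (EuclideanSpace ℝ (Fin 2))) := by
  rw [pIsWellRounded, pMinVecs_lat, eq_top_iff, ← span_pair_top_s9 n]
  apply Submodule.span_mono
  intro x hx
  rcases hx with rfl | hx
  · simp
  · rw [Set.mem_singleton_iff] at hx; subst hx; simp

lemma lat_discrete (n : ℕ) : DiscreteTopology (lat n) := by
  apply DiscreteTopology.of_forall_le_norm (r := 1) one_pos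
  rintro ⟨x, hx⟩ hx0
  have hx0' : x ≠ 0 := by simpa [Submodule.mk_eq_zero] using hx0
  have h := norm_lb hx hx0'
  have hnn : 0 ≤ ‖x‖ := norm_nonneg x
  have : (1:ℝ) ≤ ‖x‖ := by nlinarith
  simpa using this

lemma inner_vals {n : ℕ} {x y : EuclideanSpace ℝ (Fin 2)}
    (hx : x = e1 ∨ x = -e1 ∨ x = vv n ∨ x = -(vv n))
    (hy : y = e1 ∨ y = -e1 ∨ y = vv n ∨ y = -(vv n)) :
    inner ℝ x y = 1 ∨ inner ℝ x y = -1 ∨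
      inner ℝ x y = cc n ∨ inner ℝ x y = -(cc n) := by
  have h := cc_sq_add_ss_sq n
  rcases hx with rfl | rfl | rfl | rfl <;> rcases hy with rfl | rfl | rfl | rfl <;>
    simp only [inner_neg_left, inner_neg_right, neg_neg, inner_formula] <;>
    simp [e1, vv] <;>
    first
      | (left; linear_combination h)
      | (left; linear_combination -h)
      | (right; left; linear_combination h)
      | (right; left; linear_combination -h)
      | (right; right; left; ring)
      | (right; right; right; ring)
      | tauto

lemma not_similar {m n : ℕ} (hmn : m ≠ n) :
    ¬ pSimilar (lat m : Set (EuclideanSpace ℝ (Fin 2)))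
        (lat n : Set (EuclideanSpace ℝ (Fin 2))) := by
  rintro ⟨α, f, hα, hT⟩
  have hα2 : (0:ℝ) < α ^ 2 := by positivity
  have hgnorm : ∀ x : EuclideanSpace ℝ (Fin 2), ‖α • f x‖ ^ 2 = α ^ 2 * ‖x‖ ^ 2 := by
    intro x
    rw [norm_smul, f.norm_map, mul_pow]
    simp [sq_abs]
  -- α² ≥ 1
  have hge : (1:ℝ) ≤ α ^ 2 := by
    have hmem : α • f e1 ∈ (lat n : Set (EuclideanSpace ℝ (Fin 2))) := by
      rw [hT]; exact ⟨e1, e1_mem m, rfl⟩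
    have hne : α • f e1 ≠ 0 := by
      simp [smul_eq_zero, hα, f.map_eq_zero_iff, e1_ne_zero]
    have := norm_lb hmem hne
    rw [hgnorm, norm_e1, mul_one] at this
    exact this
  -- α² ≤ 1
  have hle : α ^ 2 ≤ 1 := by
    have : e1 ∈ (lat n : Set (EuclideanSpace ℝ (Fin 2))) := e1_mem n
    rw [hT] at this
    obtain ⟨y, hy, hgy⟩ := this
    have hgy : α • f y = e1 := hgy
    have hy0 : y ≠ 0 := by
      rintro rfl
      simp at hgy
      exact e1_ne_zero hgy.symm
    have h1 := norm_lb hy hy0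
    have h2 : α ^ 2 * ‖y‖ ^ 2 = 1 := by rw [← hgnorm, hgy, norm_e1]
    nlinarith
  have hα21 : α ^ 2 = 1 := le_antisymm hle hge
  -- e1 and vv n are images of minimal vectors of lat m
  have key : ∀ z : EuclideanSpace ℝ (Fin 2),
      z ∈ (lat n : Set (EuclideanSpace ℝ (Fin 2))) → ‖z‖ ^ 2 = 1 →
      ∃ y, (y = e1 ∨ y = -e1 ∨ y = vv m ∨ y = -(vv m)) ∧ α • f y = z := by
    intro z hz hz1
    rw [hT] at hz
    obtain ⟨y, hy, hgy⟩ := hz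
    have hgy : α • f y = z := hgy
    have hny : ‖y‖ ^ 2 = 1 := by
      have := hgnorm y
      rw [hgy, hz1, hα21, one_mul] at this
      exact this.symm
    exact ⟨y, minvec_char hy hny, hgy⟩
  obtain ⟨y1, hy1, hg1⟩ := key e1 (e1_mem n) norm_e1
  obtain ⟨y2, hy2, hg2⟩ := key (vv n) (vv_mem n) (norm_vv n)
  have hinner : inner ℝ e1 (vv n) = inner ℝ y1 y2 := by
    rw [← hg1, ← hg2, real_inner_smul_left, real_inner_smul_right,
      f.inner_map_map]
    rw [show α * (α * inner ℝ y1 y2) = α ^ 2 * inner ℝ y1 y2 by ring, hα21,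
      one_mul]
  have hval : inner ℝ e1 (vv n) = cc n := by
    rw [inner_formula]; simp [e1, vv]
  have := inner_vals (n := m) hy1 hy2
  rw [← hinner, hval] at this
  have hcp := cc_pos n
  have hch := cc_lt_half n
  have hcp' := cc_pos m
  have hch' := cc_lt_half m
  rcases this with h | h | h | h
  · linarith
  · linarith
  · exact hmn (cc_inj h).symm
  · linarith

/-- There are infinitely many pairwise non-similar well-rounded full-rank lattices
in `ℝ²`, each having exactly 4 minimal vectors. -/
theorem statement9 :
    ∃ F : ℕ → Submodule ℤ (EuclideanSpace ℝ (Fin 2)),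
      (∀ n : ℕ, DiscreteTopology (F n) ∧
        Submodule.span ℝ ((F n : Set (EuclideanSpace ℝ (Fin 2)))) = ⊤ ∧
        pIsWellRounded (F n : Set (EuclideanSpace ℝ (Fin 2))) ∧
        (pMinVecs (F n : Set (EuclideanSpace ℝ (Fin 2)))).ncard = 4) ∧
      ∀ m n : ℕ, m ≠ n →
        ¬ pSimilar (F m : Set (EuclideanSpace ℝ (Fin 2)))
            (F n : Set (EuclideanSpace ℝ (Fin 2))) := by
  exact ⟨lat, fun n => ⟨lat_discrete n, lat_full n, lat_wr n, ncard_lat n⟩,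
    fun m n hmn => not_similar hmn⟩
end

section
/- Let D ≠ 1 be a squarefree integer and K = ℚ(√D). The lattice Λ_D := σ(O_K) ⊂ ℝ² is well-rounded if and only if D = -1 or D = -3. -/
open NumberField

section Aux

open Polynomial NumberField.InfinitePlace

variable {K : Type*} [Field K] [NumberField K] {D : ℤ} {α : K}

private lemma aux_D_ne_zero (hD : Squarefree D) : D ≠ 0 := by
  rintro rfl; exact not_squarefree_zero hD

private lemma aux_irrat (hD : Squarefree D) (hD1 : D ≠ 1) (hα : α ^ 2 = (D : K)) (q : ℚ)
    (h : α = algebraMap ℚ K q) : False := by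
  have hq : q ^ 2 = (D : ℚ) := by
    have h2 : (algebraMap ℚ K) (q ^ 2) = (algebraMap ℚ K) ((D : ℚ)) := by
      rw [map_pow, ← h, hα]
      simp
    exact (algebraMap ℚ K).injective h2
  have hint : IsIntegral ℤ q := by
    have hdeg2 : (C D : Polynomial ℤ).degree < (2 : ℕ) := degree_C_le.trans_lt (by norm_num)
    refine ⟨X ^ 2 - C D, monic_X_pow_sub hdeg2, ?_⟩
    rw [eval₂_sub, eval₂_pow, eval₂_X, eval₂_C]
    simp [hq]
  obtain ⟨m, hm⟩ := IsIntegrallyClosed.isIntegral_iff.mp hint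
  have hm' : (m : ℚ) = q := by rw [← hm]; simp
  have hmD : m ^ 2 = D := by
    have : ((m ^ 2 : ℤ) : ℚ) = ((D : ℤ) : ℚ) := by push_cast [hm']; exact hq
    exact_mod_cast this
  have : IsUnit m := hD m (by rw [← hmD]; exact ⟨1, by ring⟩)
  rcases Int.isUnit_iff.mp this with rfl | rfl <;> omega

private lemma aux_coords (hD : Squarefree D) (hD1 : D ≠ 1)
    (hdeg : Module.finrank ℚ K = 2) (hα : α ^ 2 = (D : K)) (x : K) :
    ∃ q r : ℚ, x = algebraMap ℚ K q + r • α := by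
  have hli : LinearIndependent ℚ ![(1 : K), α] := by
    rw [LinearIndependent.pair_iff]
    intro s t hst
    have h1 : (algebraMap ℚ K) s + (algebraMap ℚ K) t * α = 0 := by
      simpa [Algebra.smul_def] using hst
    rcases eq_or_ne t 0 with rfl | ht
    · refine ⟨?_, rfl⟩
      have : (algebraMap ℚ K) s = 0 := by simpa using h1
      exact (_root_.map_eq_zero _).mp this
    · exfalso
      apply aux_irrat hD hD1 hα (-s / t)
      have ht' : (algebraMap ℚ K) t ≠ 0 := by
        simpa using ht
      rw [map_div₀, map_neg, eq_div_iff ht']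
      linear_combination h1
  have htop : Submodule.span ℚ {(1 : K), α} = ⊤ := by
    have hr : Set.range ![(1 : K), α] = {(1 : K), α} := by
      simp [Matrix.range_cons, Matrix.range_empty, Set.pair_comm]
    apply Submodule.eq_top_of_finrank_eq
    rw [hdeg, ← hr, finrank_span_eq_card hli]
    simp
  have hx : x ∈ Submodule.span ℚ {(1 : K), α} := htop ▸ Submodule.mem_top
  rw [Submodule.mem_span_pair] at hx
  obtain ⟨a, b, hab⟩ := hx
  exact ⟨a, b, by rw [← hab, Algebra.smul_def, mul_one]⟩

private lemma aux_apply {A : Type*} [DivisionRing A] (f : K →+* A) (q r : ℚ) :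
    f (algebraMap ℚ K q + r • α) = (q : A) + (r : A) * f α := by
  rw [map_add, Algebra.smul_def, map_mul]
  rw [show (algebraMap ℚ K q) = ((q : ℚ) : K) from eq_ratCast (algebraMap ℚ K) q,
    show (algebraMap ℚ K r) = ((r : ℚ) : K) from eq_ratCast (algebraMap ℚ K) r,
    map_ratCast, map_ratCast]

private lemma aux_hom_ext (hD : Squarefree D) (hD1 : D ≠ 1)
    (hdeg : Module.finrank ℚ K = 2) (hα : α ^ 2 = (D : K))
    {A : Type*} [DivisionRing A] {f g : K →+* A} (h : f α = g α) : f = g := by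
  ext x
  obtain ⟨q, r, rfl⟩ := aux_coords hD hD1 hdeg hα x
  rw [aux_apply, aux_apply, h]

private lemma aux_emb_sq (hα : α ^ 2 = (D : K)) (f : K →+* ℂ) : (f α) ^ 2 = (D : ℂ) := by
  rw [← map_pow, hα, map_intCast]

private lemma aux_two_embeddings (hD : Squarefree D) (hD1 : D ≠ 1)
    (hdeg : Module.finrank ℚ K = 2) (hα : α ^ 2 = (D : K)) :
    ∃ φ ψ : K →+* ℂ, φ ≠ ψ ∧ ψ α = -(φ α) ∧ (∀ χ : K →+* ℂ, χ = φ ∨ χ = ψ) := by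
  have hcard : Nat.card (K →+* ℂ) = 2 := by
    rw [Nat.card_eq_fintype_card, Embeddings.card K ℂ, hdeg]
  obtain ⟨φ, ψ, hne, huniv⟩ := Nat.card_eq_two_iff.mp hcard
  have hmem : ∀ χ : K →+* ℂ, χ = φ ∨ χ = ψ := by
    intro χ
    have : χ ∈ ({φ, ψ} : Set (K →+* ℂ)) := huniv ▸ Set.mem_univ χ
    simpa using this
  refine ⟨φ, ψ, hne, ?_, hmem⟩
  have h1 := aux_emb_sq hα φ
  have h2 := aux_emb_sq hα ψ
  have h3 : (ψ α - φ α) * (ψ α + φ α) = 0 := by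
    have : ψ α ^ 2 - φ α ^ 2 = 0 := by rw [h1, h2, sub_self]
    linear_combination this
  rcases mul_eq_zero.mp h3 with h | h
  · exact absurd (aux_hom_ext hD hD1 hdeg hα (sub_eq_zero.mp h)).symm hne
  · linear_combination h

private lemma aux_norm_formula (hα : α ^ 2 = (D : K))
    {φ ψ : K →+* ℂ} (hne : φ ≠ ψ) (hψ : ψ α = -(φ α))
    (hmem : ∀ χ : K →+* ℂ, χ = φ ∨ χ = ψ)
    (x : K) (q r : ℚ) (hx : x = algebraMap ℚ K q + r • α) :
    Algebra.norm ℚ x = q ^ 2 - (D : ℚ) * r ^ 2 := by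
  have hprod : (algebraMap ℚ ℂ) (Algebra.norm ℚ x) = φ x * ψ x := by
    classical
    have huniv : (Finset.univ : Finset (K →+* ℂ)) = {φ, ψ} := by
      ext χ
      simp only [Finset.mem_univ, true_iff, Finset.mem_insert, Finset.mem_singleton]
      exact hmem χ
    rw [Algebra.norm_eq_prod_embeddings ℚ ℂ x]
    have he : ∏ f : K →+* ℂ, f x = ∏ σ : K →ₐ[ℚ] ℂ, σ x :=
      Fintype.prod_equiv (RingHom.equivRatAlgHom K ℂ) (fun f => f x) (fun σ => σ x) (fun f => rfl)
    rw [← he, huniv, Finset.prod_pair hne]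
  have hv1 : φ x = (q : ℂ) + (r : ℂ) * φ α := by rw [hx, aux_apply]
  have hv2 : ψ x = (q : ℂ) + (r : ℂ) * -(φ α) := by rw [hx, aux_apply, hψ]
  rw [hv1, hv2] at hprod
  have hsq := aux_emb_sq hα φ
  have hcast : ((Algebra.norm ℚ x : ℚ) : ℂ) = ((q ^ 2 - (D : ℚ) * r ^ 2 : ℚ) : ℂ) := by
    rw [← eq_ratCast (algebraMap ℚ ℂ) (Algebra.norm ℚ x), hprod]
    push_cast
    linear_combination (-((r : ℂ)^2)) * hsq
  exact Rat.cast_injective hcast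

private lemma aux_rat_int_of_isIntegral {c : ℚ} (h : IsIntegral ℤ ((c : ℂ))) :
    ∃ n : ℤ, (n : ℚ) = c := by
  have h2 : IsIntegral ℤ c := by
    rw [show ((c : ℂ)) = algebraMap ℚ ℂ c from (eq_ratCast (algebraMap ℚ ℂ) c).symm] at h
    exact (isIntegral_algebraMap_iff (algebraMap ℚ ℂ).injective).mp h
  obtain ⟨n, hn⟩ := IsIntegrallyClosed.isIntegral_iff.mp h2
  exact ⟨n, by rw [← hn]; simp⟩

private lemma aux_norm_int {φ ψ : K →+* ℂ}
    (hmem : ∀ χ : K →+* ℂ, χ = φ ∨ χ = ψ) (hne : φ ≠ ψ)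
    {x : K} (hx : IsIntegral ℤ x) :
    ∃ n : ℤ, (n : ℚ) = Algebra.norm ℚ x := by
  apply aux_rat_int_of_isIntegral
  have hprod : (algebraMap ℚ ℂ) (Algebra.norm ℚ x) = φ x * ψ x := by
    classical
    have huniv : (Finset.univ : Finset (K →+* ℂ)) = {φ, ψ} := by
      ext χ
      simp only [Finset.mem_univ, true_iff, Finset.mem_insert, Finset.mem_singleton]
      exact hmem χ
    rw [Algebra.norm_eq_prod_embeddings ℚ ℂ x]
    have he : ∏ f : K →+* ℂ, f x = ∏ σ : K →ₐ[ℚ] ℂ, σ x :=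
      Fintype.prod_equiv (RingHom.equivRatAlgHom K ℂ) (fun f => f x) (fun σ => σ x) (fun f => rfl)
    rw [← he, huniv, Finset.prod_pair hne]
  rw [show ((Algebra.norm ℚ x : ℚ) : ℂ) = (algebraMap ℚ ℂ) (Algebra.norm ℚ x) from
    (eq_ratCast (algebraMap ℚ ℂ) _), hprod]
  exact (hx.map φ.toIntAlgHom).mul (hx.map ψ.toIntAlgHom)

private lemma aux_trace_int {φ ψ : K →+* ℂ} (hψ : ψ α = -(φ α))
    {x : K} (hx : IsIntegral ℤ x) (q r : ℚ) (hxqr : x = algebraMap ℚ K q + r • α) :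
    ∃ a : ℤ, (a : ℚ) = 2 * q := by
  apply aux_rat_int_of_isIntegral
  have : ((2 * q : ℚ) : ℂ) = φ x + ψ x := by
    rw [hxqr, aux_apply, aux_apply, hψ]
    push_cast
    ring
  rw [this]
  exact (hx.map φ.toIntAlgHom).add (hx.map ψ.toIntAlgHom)

private lemma aux_sqfree_rat (hD : Squarefree D) (s : ℚ) (k : ℤ)
    (h : (D : ℚ) * s ^ 2 = (k : ℚ)) : ∃ t : ℤ, (t : ℚ) = s := by
  have hD0 : D ≠ 0 := aux_D_ne_zero hD
  have h2 : IsIntegral ℤ ((D : ℚ) * s) := by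
    have hdeg2 : (C (D * k) : Polynomial ℤ).degree < (2 : ℕ) := degree_C_le.trans_lt (by norm_num)
    refine ⟨X ^ 2 - C (D * k), monic_X_pow_sub hdeg2, ?_⟩
    rw [eval₂_sub, eval₂_pow, eval₂_X, eval₂_C]
    have : ((D : ℚ) * s) ^ 2 = ((D * k : ℤ) : ℚ) := by
      push_cast
      linear_combination (D : ℚ) * h
    simp [this]
  obtain ⟨u, hu⟩ := IsIntegrallyClosed.isIntegral_iff.mp h2
  have hu' : (u : ℚ) = (D : ℚ) * s := by rw [← hu]; simp
  have hu2 : u ^ 2 = D * k := by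
    have : ((u ^ 2 : ℤ) : ℚ) = ((D * k : ℤ) : ℚ) := by
      push_cast [hu']
      linear_combination (D : ℚ) * h
    exact_mod_cast this
  have hdvd : D ∣ u := by
    rw [← hD.dvd_pow_iff_dvd (two_ne_zero)]
    exact ⟨k, hu2⟩
  obtain ⟨t, rfl⟩ := hdvd
  refine ⟨t, ?_⟩
  have hDQ : (D : ℚ) ≠ 0 := Int.cast_ne_zero.mpr hD0
  have : (D : ℚ) * t = (D : ℚ) * s := by push_cast at hu'; linear_combination hu'
  exact mul_left_cancel₀ hDQ this

end Aux

section Aux2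

open Polynomial NumberField.InfinitePlace

variable {K : Type*} [Field K] [NumberField K] {D : ℤ} {α : K}

private lemma aux_emb_re_im (hα : α ^ 2 = (D : K)) (f : K →+* ℂ) :
    (f α).re ^ 2 - (f α).im ^ 2 = (D : ℝ) ∧ (f α).re * (f α).im = 0 := by
  have h := aux_emb_sq hα f
  rw [sq, Complex.ext_iff] at h
  simp only [Complex.mul_re, Complex.mul_im, Complex.intCast_re, Complex.intCast_im] at h
  exact ⟨by linear_combination h.1, by linear_combination h.2 / 2⟩

private lemma aux_emb_im_eq_zero (hα : α ^ 2 = (D : K)) (hpos : 0 < D) (f : K →+* ℂ) :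
    (f α).im = 0 := by
  obtain ⟨h1, h2⟩ := aux_emb_re_im hα f
  rcases mul_eq_zero.mp h2 with h | h
  · exfalso
    have hD : (0:ℝ) < (D : ℝ) := by exact_mod_cast hpos
    nlinarith [sq_nonneg (f α).im]
  · exact h

private lemma aux_neg_place (hα : α ^ 2 = (D : K)) (hdeg : Module.finrank ℚ K = 2)
    (hneg : D < 0) :
    ∃ w₀ : InfinitePlace K, w₀.IsComplex ∧ (∀ w : InfinitePlace K, w = w₀) := by
  classical
  have hnoreal : ∀ w : InfinitePlace K, ¬ w.IsReal := by
    intro w hw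
    have hre := isReal_iff.mp hw
    have hconj := NumberField.ComplexEmbedding.isReal_iff.mp hre
    have h2 : (starRingEnd ℂ) (w.embedding α) = w.embedding α := by
      rw [← NumberField.ComplexEmbedding.conjugate_coe_eq, hconj]
    have him : (w.embedding α).im = 0 := Complex.conj_eq_iff_im.mp h2
    obtain ⟨h1, _⟩ := aux_emb_re_im hα w.embedding
    have hD : (D : ℝ) < 0 := by exact_mod_cast hneg
    nlinarith [sq_nonneg (w.embedding α).re]
  have h0 : InfinitePlace.nrRealPlaces K = 0 :=
    Fintype.card_eq_zero_iff.mpr ⟨fun w => hnoreal w.1 w.2⟩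
  have h1 : Fintype.card (InfinitePlace K) = 1 := by
    have h2 := InfinitePlace.card_add_two_mul_card_eq_rank K
    rw [hdeg, h0] at h2
    rw [InfinitePlace.card_eq_nrRealPlaces_add_nrComplexPlaces, h0]
    omega
  obtain ⟨w₀, hw₀⟩ := Fintype.card_eq_one_iff.mp h1
  exact ⟨w₀, InfinitePlace.not_isReal_iff_isComplex.mp (hnoreal w₀), hw₀⟩

private lemma aux_neg_sqNorm {w₀ : InfinitePlace K} (hc : w₀.IsComplex)
    (huniq : ∀ w : InfinitePlace K, w = w₀) (x : K) :
    sqNorm K x = ((|Algebra.norm ℚ x| : ℚ) : ℝ) := by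
  classical
  have huniv : (Finset.univ : Finset (InfinitePlace K)) = {w₀} := by
    ext w
    simp [huniq w]
  have hmult : w₀.mult = 2 := by
    rw [InfinitePlace.mult, if_neg (InfinitePlace.not_isReal_iff_isComplex.mpr hc)]
  have hp := InfinitePlace.prod_eq_abs_norm x
  rw [huniv, Finset.prod_singleton, hmult] at hp
  rw [sqNorm, huniv, Finset.sum_singleton]
  exact_mod_cast hp

private lemma aux_neg_latMin (hα : α ^ 2 = (D : K)) (hdeg : Module.finrank ℚ K = 2)
    (hneg : D < 0) {φ ψ : K →+* ℂ} (hne : φ ≠ ψ)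
    (hmem : ∀ χ : K →+* ℂ, χ = φ ∨ χ = ψ) :
    latMin K (Set.range (algebraMap (𝓞 K) K)) = 1 := by
  obtain ⟨w₀, hc, huniq⟩ := aux_neg_place hα hdeg hneg
  have hmem1 : (1:ℝ) ∈ {r : ℝ | ∃ x ∈ Set.range (algebraMap (𝓞 K) K), x ≠ 0 ∧ sqNorm K x = r} := by
    refine ⟨1, ⟨1, map_one _⟩, one_ne_zero, ?_⟩
    rw [aux_neg_sqNorm hc huniq, map_one]
    norm_num
  have hlb : ∀ y ∈ {r : ℝ | ∃ x ∈ Set.range (algebraMap (𝓞 K) K), x ≠ 0 ∧ sqNorm K x = r},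
      (1:ℝ) ≤ y := by
    rintro y ⟨x, hxS, hx0, rfl⟩
    rw [aux_neg_sqNorm hc huniq]
    obtain ⟨z, hz⟩ := hxS
    have hxint : IsIntegral ℤ x := hz ▸ RingOfIntegers.isIntegral_coe z
    obtain ⟨n, hn⟩ := aux_norm_int hmem hne hxint
    have hn0 : n ≠ 0 := by
      intro h
      exact (Algebra.norm_ne_zero_iff (R := ℚ)).mpr hx0 (by rw [← hn, h]; norm_num)
    rw [← hn]
    have h1 : (1:ℤ) ≤ |n| := Int.one_le_abs hn0
    push_cast
    exact_mod_cast h1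
  rw [latMin]
  exact le_antisymm (csInf_le ⟨1, hlb⟩ hmem1) (le_csInf ⟨1, hmem1⟩ hlb)

private lemma aux_not_wr (hdeg : Module.finrank ℚ K = 2)
    (h : ∀ x ∈ minVecs K (Set.range (algebraMap (𝓞 K) K)), ∃ q : ℚ, x = algebraMap ℚ K q) :
    ¬ IsWellRounded K (Set.range (algebraMap (𝓞 K) K)) := by
  intro hwr
  rw [IsWellRounded] at hwr
  have hone : ∀ q : ℚ, mixedEmbedding K (algebraMap ℚ K q)
      = (q : ℝ) • (1 : mixedEmbedding.mixedSpace K) := by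
    intro q
    have he : (mixedEmbedding K).comp (algebraMap ℚ K)
        = (algebraMap ℝ (mixedEmbedding.mixedSpace K)).comp (algebraMap ℚ ℝ) :=
      Subsingleton.elim _ _
    have h2 := RingHom.congr_fun he q
    simp only [RingHom.coe_comp, Function.comp_apply] at h2
    rw [h2, eq_ratCast (algebraMap ℚ ℝ) q, Algebra.algebraMap_eq_smul_one]
  have hsub : Submodule.span ℝ (mixedEmbedding K '' minVecs K (Set.range (algebraMap (𝓞 K) K)))
      ≤ Submodule.span ℝ {(1 : mixedEmbedding.mixedSpace K)} := by
    rw [Submodule.span_le]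
    rintro v ⟨x, hx, rfl⟩
    obtain ⟨q, rfl⟩ := h x hx
    rw [SetLike.mem_coe, hone]
    exact Submodule.smul_mem _ _ (Submodule.mem_span_singleton_self _)
  have h2 : (2:ℕ) ≤ 1 := by
    calc (2:ℕ) = Module.finrank ℝ (mixedEmbedding.mixedSpace K) := by
          rw [mixedEmbedding.finrank, hdeg]
      _ = Module.finrank ℝ (⊤ : Submodule ℝ (mixedEmbedding.mixedSpace K)) :=
          (finrank_top _ _).symm
      _ ≤ Module.finrank ℝ (Submodule.span ℝ {(1 : mixedEmbedding.mixedSpace K)}) :=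
          Submodule.finrank_mono (hwr ▸ hsub)
      _ = 1 := finrank_span_singleton one_ne_zero
  omega

private lemma aux_quad_int {β : K} (a b : ℤ) (h : β ^ 2 = (a : K) + (b : K) * β) :
    IsIntegral ℤ β := by
  have hdeg2 : (C b * X + C a : Polynomial ℤ).degree < (2 : ℕ) := by
    apply lt_of_le_of_lt (degree_add_le _ _)
    rw [max_lt_iff]
    constructor
    · exact lt_of_le_of_lt (degree_C_mul_X_le _) (by norm_num)
    · exact degree_C_le.trans_lt (by norm_num)
  refine ⟨X ^ 2 - (C b * X + C a), monic_X_pow_sub hdeg2, ?_⟩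
  simp only [eval₂_sub, eval₂_pow, eval₂_add, eval₂_mul, eval₂_C, eval₂_X]
  rw [eq_intCast (algebraMap ℤ K) a, eq_intCast (algebraMap ℤ K) b, h]
  ring

end Aux2

section Aux3

open Polynomial NumberField.InfinitePlace

variable {K : Type*} [Field K] [NumberField K] {D : ℤ} {α : K}

private lemma aux_sq_ne_two (n : ℤ) : n ^ 2 ≠ 2 := by
  intro h
  have h4 : 4 * n ≤ 6 := by nlinarith [sq_nonneg (n - 2)]
  have h5 : -6 ≤ 4 * n := by nlinarith [sq_nonneg (n + 2)]
  have hb1 : -1 ≤ n := by omega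
  have hb2 : n ≤ 1 := by omega
  interval_cases n <;> omega

private lemma aux_wr (hD : Squarefree D) (hD1 : D ≠ 1)
    (hdeg : Module.finrank ℚ K = 2) (hα : α ^ 2 = (D : K)) (hneg : D < 0)
    {φ ψ : K →+* ℂ} (hne : φ ≠ ψ) (hψα : ψ α = -(φ α))
    (hmem : ∀ χ : K →+* ℂ, χ = φ ∨ χ = ψ)
    (β : K) (hβint : IsIntegral ℤ β) (hβnorm : Algebra.norm ℚ β = 1)
    (u v : ℚ) (hv : v ≠ 0) (hαβ : α = algebraMap ℚ K u + v • β) :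
    IsWellRounded K (Set.range (algebraMap (𝓞 K) K)) := by
  obtain ⟨w₀, hc, huniq⟩ := aux_neg_place hα hdeg hneg
  have hmin : latMin K (Set.range (algebraMap (𝓞 K) K)) = 1 :=
    aux_neg_latMin hα hdeg hneg hne hmem
  have h1S : (1:K) ∈ Set.range (algebraMap (𝓞 K) K) := ⟨1, map_one _⟩
  have hβS : β ∈ Set.range (algebraMap (𝓞 K) K) := ⟨⟨β, hβint⟩, rfl⟩
  have h1min : (1:K) ∈ minVecs K (Set.range (algebraMap (𝓞 K) K)) := by
    refine ⟨h1S, ?_⟩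
    rw [aux_neg_sqNorm hc huniq, map_one, hmin]
    norm_num
  have hβmin : β ∈ minVecs K (Set.range (algebraMap (𝓞 K) K)) := by
    refine ⟨hβS, ?_⟩
    rw [aux_neg_sqNorm hc huniq, hβnorm, hmin]
    norm_num
  set wc : {w : InfinitePlace K // w.IsComplex} := ⟨w₀, hc⟩ with hwc
  have himα : (w₀.embedding α).im ≠ 0 := by
    intro h0
    obtain ⟨h1, h2⟩ := aux_emb_re_im hα w₀.embedding
    have hDR : (D : ℝ) < 0 := by exact_mod_cast hneg
    rw [h0] at h1
    nlinarith [sq_nonneg (w₀.embedding α).re]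
  have himβ : (w₀.embedding β).im ≠ 0 := by
    intro h0
    apply himα
    have hval : w₀.embedding α = (u : ℂ) + (v : ℂ) * w₀.embedding β := by
      rw [hαβ, aux_apply]
    rw [hval]
    simp [Complex.add_im, Complex.mul_im, h0]
  have hli : LinearIndependent ℝ ![mixedEmbedding K 1, mixedEmbedding K β] := by
    rw [LinearIndependent.pair_iff]
    intro s t hst
    have key : s • (1:ℂ) + t • (w₀.embedding β) = 0 := by
      have h2 := congrArg (fun p : mixedEmbedding.mixedSpace K => p.2 wc) hst
      simpa [Prod.snd_add, Prod.smul_snd, Pi.add_apply, Pi.smul_apply,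
        mixedEmbedding.mixedEmbedding_apply_isComplex, map_one] using h2
    rw [Complex.real_smul, Complex.real_smul] at key
    have him := congrArg Complex.im key
    have hre := congrArg Complex.re key
    simp only [Complex.add_im, Complex.add_re, Complex.mul_im, Complex.mul_re,
      Complex.ofReal_re, Complex.ofReal_im, Complex.one_re, Complex.one_im,
      Complex.zero_re, Complex.zero_im] at him hre
    have ht : t = 0 := by
      rcases mul_eq_zero.mp (by linarith [him] : t * (w₀.embedding β).im = 0) with h | h
      · exact h
      · exact absurd h himβ
    refine ⟨?_, ht⟩
    rw [ht] at hre
    linarith [hre]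
  have htop2 : Submodule.span ℝ {mixedEmbedding K 1, mixedEmbedding K β} = ⊤ := by
    apply Submodule.eq_top_of_finrank_eq
    have hr : Set.range ![mixedEmbedding K 1, mixedEmbedding K β]
        = {mixedEmbedding K 1, mixedEmbedding K β} := by
      simp only [Matrix.range_cons, Matrix.range_empty, Set.union_empty, Set.singleton_union]
    rw [← hr, finrank_span_eq_card hli, mixedEmbedding.finrank, hdeg]
    simp
  rw [IsWellRounded, eq_top_iff, ← htop2]
  apply Submodule.span_mono
  intro z hz
  simp only [Set.mem_insert_iff, Set.mem_singleton_iff] at hz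
  rcases hz with rfl | rfl
  · exact ⟨1, h1min, rfl⟩
  · exact ⟨β, hβmin, rfl⟩

private lemma aux_neg_minvec (hD : Squarefree D) (hD1 : D ≠ 1)
    (hdeg : Module.finrank ℚ K = 2) (hα : α ^ 2 = (D : K)) (hneg : D < 0)
    (hm1 : D ≠ -1) (hm3 : D ≠ -3) :
    ∀ x ∈ minVecs K (Set.range (algebraMap (𝓞 K) K)), ∃ q : ℚ, x = algebraMap ℚ K q := by
  obtain ⟨φ, ψ, hne, hψα, hmem⟩ := aux_two_embeddings hD hD1 hdeg hα
  obtain ⟨w₀, hc, huniq⟩ := aux_neg_place hα hdeg hneg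
  have hmin : latMin K (Set.range (algebraMap (𝓞 K) K)) = 1 :=
    aux_neg_latMin hα hdeg hneg hne hmem
  rintro x ⟨hxS, hxmin⟩
  rcases eq_or_ne x 0 with rfl | hx0
  · exact ⟨0, by simp⟩
  obtain ⟨q, r, hqr⟩ := aux_coords hD hD1 hdeg hα x
  obtain ⟨z, hz⟩ := hxS
  have hxint : IsIntegral ℤ x := hz ▸ RingOfIntegers.isIntegral_coe z
  rw [hmin] at hxmin
  have habs : |(Algebra.norm ℚ x : ℚ)| = 1 := by
    have hsn := aux_neg_sqNorm hc huniq x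
    rw [hxmin] at hsn
    exact_mod_cast hsn.symm
  have hnval := aux_norm_formula hα hne hψα hmem x q r hqr
  have hnorm1 : Algebra.norm ℚ x = 1 := by
    have hDQ : (D : ℚ) ≤ 0 := by exact_mod_cast hneg.le
    have hge : (0:ℚ) ≤ Algebra.norm ℚ x := by
      rw [hnval]
      nlinarith [sq_nonneg q, sq_nonneg r, mul_nonneg (neg_nonneg.mpr hDQ) (sq_nonneg r)]
    rwa [abs_of_nonneg hge] at habs
  have hq1 : q ^ 2 - (D : ℚ) * r ^ 2 = 1 := hnval.symm.trans hnorm1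
  obtain ⟨a, ha⟩ := aux_trace_int hψα hxint q r hqr
  obtain ⟨s, hsv⟩ := aux_sqfree_rat hD (2*r) (a^2 - 4) (by
    push_cast
    linear_combination (-4 : ℚ) * hq1 + (-(a:ℚ) - 2*q) * ha)
  have hint : D * s ^ 2 = a ^ 2 - 4 := by
    have hc2 : ((D * s ^ 2 : ℤ) : ℚ) = ((a ^ 2 - 4 : ℤ) : ℚ) := by
      push_cast
      rw [hsv]
      push_cast
      linear_combination (-4 : ℚ) * hq1 + (-(a:ℚ) - 2*q) * ha
    exact_mod_cast hc2
  have hs0 : s = 0 := by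
    by_contra hs0
    have hpos : (0:ℤ) < s ^ 2 := by positivity
    have h1 : 1 ≤ s ^ 2 := hpos
    have hDle : -4 ≤ D := by
      nlinarith [sq_nonneg a, mul_nonneg (by linarith : (0:ℤ) ≤ -D) (by linarith : (0:ℤ) ≤ s^2 - 1)]
    have hD2 : D = -2 ∨ D = -4 := by omega
    rcases hD2 with rfl | rfl
    · have h2 : s ^ 2 ≤ 2 := by nlinarith [sq_nonneg a]
      have hb1 : 2 * s ≤ 3 := by nlinarith [sq_nonneg (s - 1)]
      have hb2 : -3 ≤ 2 * s := by nlinarith [sq_nonneg (s + 1)]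
      have hs1 : s = 1 ∨ s = -1 := by omega
      have hsq1 : s ^ 2 = 1 := by rcases hs1 with rfl | rfl <;> norm_num
      have ha2 : a ^ 2 = 2 := by rw [hsq1] at hint; linarith
      exact aux_sq_ne_two a ha2
    · have : IsUnit (2:ℤ) := hD 2 (by norm_num)
      rcases Int.isUnit_iff.mp this with h | h <;> norm_num at h
  refine ⟨q, ?_⟩
  have hr0 : r = 0 := by
    have : ((0:ℤ):ℚ) = 2 * r := by rw [← hs0]; exact hsv
    push_cast at this
    linarith
  rw [hqr, hr0]
  simp

end Aux3

section Aux4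

open Polynomial NumberField.InfinitePlace

variable {K : Type*} [Field K] [NumberField K] {D : ℤ} {α : K}

private lemma aux_pos_minvec (hD : Squarefree D) (hD1 : D ≠ 1)
    (hdeg : Module.finrank ℚ K = 2) (hα : α ^ 2 = (D : K)) (hpos : 0 < D) :
    ∀ x ∈ minVecs K (Set.range (algebraMap (𝓞 K) K)), ∃ q : ℚ, x = algebraMap ℚ K q := by
  classical
  obtain ⟨φ, ψ, hne, hψα, hmem⟩ := aux_two_embeddings hD hD1 hdeg hα
  have hDR : (0:ℝ) < (D : ℝ) := by exact_mod_cast hpos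
  -- all infinite places are real
  have hreal : ∀ w : InfinitePlace K, w.IsReal := by
    intro w
    rw [isReal_iff, NumberField.ComplexEmbedding.isReal_iff]
    apply aux_hom_ext hD hD1 hdeg hα
    rw [NumberField.ComplexEmbedding.conjugate_coe_eq, Complex.conj_eq_iff_im]
    exact aux_emb_im_eq_zero hα hpos w.embedding
  have hcard : Fintype.card (InfinitePlace K) = 2 := by
    have h2 := InfinitePlace.card_add_two_mul_card_eq_rank K
    have h0 : InfinitePlace.nrComplexPlaces K = 0 :=
      Fintype.card_eq_zero_iff.mpr
        ⟨fun w => (InfinitePlace.not_isReal_iff_isComplex.mpr w.2) (hreal w.1)⟩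
    rw [hdeg, h0] at h2
    rw [InfinitePlace.card_eq_nrRealPlaces_add_nrComplexPlaces, h0]
    omega
  have hn2 : Nat.card (InfinitePlace K) = 2 := by rw [Nat.card_eq_fintype_card, hcard]
  obtain ⟨w₁, w₂, hwne, hwuniv⟩ := Nat.card_eq_two_iff.mp hn2
  have hwmem : ∀ w : InfinitePlace K, w = w₁ ∨ w = w₂ := by
    intro w
    have : w ∈ ({w₁, w₂} : Set (InfinitePlace K)) := hwuniv ▸ Set.mem_univ w
    simpa using this
  have hwuniv' : (Finset.univ : Finset (InfinitePlace K)) = {w₁, w₂} := by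
    ext w
    simp only [Finset.mem_univ, true_iff, Finset.mem_insert, Finset.mem_singleton]
    exact hwmem w
  have hsq : ∀ x : K, sqNorm K x = (w₁ x)^2 + (w₂ x)^2 := by
    intro x
    rw [sqNorm, hwuniv', Finset.sum_pair hwne]
  have hprodf : ∀ x : K, (w₁ x) * (w₂ x) = ((|Algebra.norm ℚ x| : ℚ) : ℝ) := by
    intro x
    have hp := InfinitePlace.prod_eq_abs_norm x
    rw [hwuniv', Finset.prod_pair hwne, InfinitePlace.mult, if_pos (hreal w₁),
      InfinitePlace.mult, if_pos (hreal w₂)] at hp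
    simpa using hp
  -- latMin ≤ 2
  have hS1 : (1:K) ∈ Set.range (algebraMap (𝓞 K) K) := ⟨1, map_one _⟩
  have hmem2 : (2:ℝ) ∈ {r : ℝ | ∃ x ∈ Set.range (algebraMap (𝓞 K) K), x ≠ 0 ∧ sqNorm K x = r} :=
    ⟨1, hS1, one_ne_zero, by rw [hsq]; norm_num⟩
  have hlb0 : ∀ y ∈ {r : ℝ | ∃ x ∈ Set.range (algebraMap (𝓞 K) K), x ≠ 0 ∧ sqNorm K x = r},
      (0:ℝ) ≤ y := by
    rintro y ⟨x, _, _, rfl⟩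
    rw [hsq]
    positivity
  have hlm : latMin K (Set.range (algebraMap (𝓞 K) K)) ≤ 2 := csInf_le ⟨0, hlb0⟩ hmem2
  rintro x ⟨hxS, hxmin⟩
  rcases eq_or_ne x 0 with rfl | hx0
  · exact ⟨0, by simp⟩
  obtain ⟨z, hz⟩ := hxS
  have hxint : IsIntegral ℤ x := hz ▸ RingOfIntegers.isIntegral_coe z
  obtain ⟨n, hn⟩ := aux_norm_int hmem hne hxint
  have hn0 : n ≠ 0 := by
    intro h
    exact (Algebra.norm_ne_zero_iff (R := ℚ)).mpr hx0 (by rw [← hn, h]; norm_num)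
  have habs1 : (1:ℝ) ≤ ((|Algebra.norm ℚ x| : ℚ) : ℝ) := by
    rw [← hn]
    have h1 : (1:ℤ) ≤ |n| := Int.one_le_abs hn0
    push_cast
    exact_mod_cast h1
  have hchain : sqNorm K x = 2 ∧ w₁ x = w₂ x := by
    have h1 : 2 * ((|Algebra.norm ℚ x| : ℚ) : ℝ) ≤ sqNorm K x := by
      rw [hsq, ← hprodf]
      nlinarith [sq_nonneg (w₁ x - w₂ x)]
    have h2 : sqNorm K x ≤ 2 := le_of_eq_of_le hxmin hlm
    have heq : sqNorm K x = 2 := le_antisymm h2 (by linarith)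
    have habs_eq : ((|Algebra.norm ℚ x| : ℚ) : ℝ) = 1 := by linarith
    refine ⟨heq, ?_⟩
    have hz2 : (w₁ x - w₂ x)^2 = 0 := by
      have hp := hprodf x
      have hs := hsq x
      nlinarith
    have := pow_eq_zero_iff (n := 2) (by norm_num) |>.mp hz2
    linarith [this]
  obtain ⟨q, r, hqr⟩ := aux_coords hD hD1 hdeg hα x
  -- embedding values are real
  have himφ : (φ α).im = 0 := aux_emb_im_eq_zero hα hpos φ
  set t : ℝ := (φ α).re with htdef
  have ht2 : t^2 = (D:ℝ) := by
    obtain ⟨h1, _⟩ := aux_emb_re_im hα φ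
    rw [himφ] at h1
    linarith
  have ht0 : t ≠ 0 := by
    intro h
    rw [h] at ht2
    nlinarith
  have hφval : φ x = Complex.ofReal ((q:ℝ) + (r:ℝ) * t) := by
    rw [hqr, aux_apply]
    apply Complex.ext <;>
      simp [Complex.add_re, Complex.add_im, Complex.mul_re, Complex.mul_im, himφ, htdef]
  have hψval : ψ x = Complex.ofReal ((q:ℝ) - (r:ℝ) * t) := by
    rw [hqr, aux_apply, hψα]
    apply Complex.ext <;>
      simp [Complex.add_re, Complex.add_im, Complex.mul_re, Complex.mul_im, himφ, htdef] <;>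
      ring
  have hwval : ‖φ x‖ = ‖ψ x‖ := by
    have hc1 : w₁.embedding = φ ∨ w₁.embedding = ψ := hmem _
    have hc2 : w₂.embedding = φ ∨ w₂.embedding = ψ := hmem _
    have hee : w₁.embedding ≠ w₂.embedding := by
      intro h
      apply hwne
      rw [← mk_embedding w₁, ← mk_embedding w₂, h]
    have he1 := (norm_embedding_eq w₁ x).trans hchain.2
    rw [← norm_embedding_eq w₂ x] at he1
    rcases hc1 with h1 | h1 <;> rcases hc2 with h2 | h2
    · exact absurd (h1.trans h2.symm) hee
    · rw [h1, h2] at he1; exact he1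
    · rw [h1, h2] at he1; exact he1.symm
    · exact absurd (h1.trans h2.symm) hee
  have hqrt : (q:ℝ) * r * t = 0 := by
    rw [hφval, hψval] at hwval
    simp only [Complex.norm_real, Real.norm_eq_abs] at hwval
    have h2 : ((q:ℝ) + (r:ℝ)*t)^2 = ((q:ℝ) - (r:ℝ)*t)^2 := by
      rw [← sq_abs ((q:ℝ) + (r:ℝ)*t), ← sq_abs ((q:ℝ) - (r:ℝ)*t), hwval]
    linear_combination h2 / 4
  rcases mul_eq_zero.mp hqrt with hqr0 | ht0'
  swap
  · exact absurd ht0' ht0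
  rcases mul_eq_zero.mp hqr0 with hq0 | hr0
  · -- q = 0 : x = r • α, and sqNorm x = 2 D r² = 2, so x² = 1
    have hq0' : q = 0 := by exact_mod_cast hq0
    have hr0' : r ≠ 0 := by
      intro h
      apply hx0
      rw [hqr, hq0', h]
      simp
    -- sqNorm x = 2 r² t²
    have hsx : sqNorm K x = 2 * (r:ℝ)^2 * (D:ℝ) := by
      have e1 : (w₁ x)^2 + (w₂ x)^2 = ‖φ x‖^2 + ‖ψ x‖^2 := by
        have hc1 : w₁.embedding = φ ∨ w₁.embedding = ψ := hmem _
        have hc2 : w₂.embedding = φ ∨ w₂.embedding = ψ := hmem _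
        have hee : w₁.embedding ≠ w₂.embedding := by
          intro h
          apply hwne
          rw [← mk_embedding w₁, ← mk_embedding w₂, h]
        rw [← norm_embedding_eq w₁ x, ← norm_embedding_eq w₂ x]
        rcases hc1 with h1 | h1 <;> rcases hc2 with h2 | h2
        · exact absurd (h1.trans h2.symm) hee
        · rw [h1, h2]
        · rw [h1, h2]; ring
        · exact absurd (h1.trans h2.symm) hee
      rw [hsq, e1, hφval, hψval]
      simp only [Complex.norm_real, Real.norm_eq_abs, sq_abs]
      rw [hq0']
      push_cast
      nlinarith [ht2]
    have hDr2 : (D:ℚ) * r^2 = 1 := by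
      have : 2 * (r:ℝ)^2 * (D:ℝ) = 2 := by rw [← hsx]; exact hchain.1
      have h2 : ((D:ℚ) * r^2 : ℚ) = (1:ℚ) := by
        have : (((D:ℚ) * r^2 : ℚ) : ℝ) = ((1:ℚ) : ℝ) := by push_cast; linarith
        exact_mod_cast this
      exact h2
    have hx2 : x^2 = 1 := by
      rw [hqr, hq0', map_zero, zero_add, _root_.smul_pow, hα]
      rw [show ((D:ℤ):K) = algebraMap ℚ K ((D:ℚ)) by rw [eq_ratCast]; push_cast; ring]
      rw [Algebra.smul_def, ← map_mul,
        show (r^2 * (D:ℚ) : ℚ) = 1 from by rw [mul_comm]; exact hDr2, map_one]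
    have hfac : (x - 1) * (x + 1) = 0 := by linear_combination hx2
    rcases mul_eq_zero.mp hfac with h | h
    · exact ⟨1, by rw [sub_eq_zero.mp h, map_one]⟩
    · exact ⟨-1, by rw [eq_neg_of_add_eq_zero_left h, map_neg, map_one]⟩
  · have hr0' : r = 0 := by exact_mod_cast hr0
    exact ⟨q, by rw [hqr, hr0']; simp⟩

end Aux4

/-- For a squarefree integer `D ≠ 1` and `K = ℚ(√D)`, the lattice
`Λ_D = σ(O_K) ⊂ ℝ²` is well-rounded if and only if `D = -1` or `D = -3`. -/
theorem statement10 (D : ℤ) (hD : Squarefree D) (hD1 : D ≠ 1)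
    (K : Type*) [Field K] [NumberField K] (hdeg : Module.finrank ℚ K = 2)
    (α : K) (hα : α ^ 2 = (D : K)) :
    IsWellRounded K (Set.range (algebraMap (𝓞 K) K)) ↔ D = -1 ∨ D = -3 := by
  have hD0 : D ≠ 0 := aux_D_ne_zero hD
  by_cases hDm : D = -1 ∨ D = -3
  · refine ⟨fun _ => hDm, fun _ => ?_⟩
    obtain ⟨φ, ψ, hne, hψα, hmem⟩ := aux_two_embeddings hD hD1 hdeg hα
    rcases hDm with rfl | rfl
    · -- D = -1, take β = α
      refine aux_wr hD hD1 hdeg hα (by norm_num) hne hψα hmem α ?_ ?_ 0 1 one_ne_zero ?_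
      · exact aux_quad_int (-1) 0 (by rw [hα]; push_cast; ring)
      · rw [aux_norm_formula hα hne hψα hmem α 0 1 (by simp)]
        push_cast
        ring
      · simp
    · -- D = -3, take β = (1 + α)/2
      refine aux_wr hD hD1 hdeg hα (by norm_num) hne hψα hmem ((1 + α)/2) ?_ ?_ (-1) 2
        two_ne_zero ?_
      · apply aux_quad_int (-1) 1
        have hα' : α^2 = (-3 : K) := by rw [hα]; norm_num
        push_cast
        linear_combination (1/4 : K) * hα'
      · have hqr : (1 + α)/2 = algebraMap ℚ K (1/2) + ((1/2 : ℚ)) • α := by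
          rw [Algebra.smul_def, eq_ratCast]
          push_cast
          ring
        rw [aux_norm_formula hα hne hψα hmem _ (1/2) (1/2) hqr]
        push_cast
        norm_num
      · rw [Algebra.smul_def, eq_ratCast (algebraMap ℚ K) (-1), eq_ratCast (algebraMap ℚ K) 2]
        push_cast
        ring
  · push_neg at hDm
    obtain ⟨hm1, hm3⟩ := hDm
    constructor
    · intro hwr
      exfalso
      rcases lt_or_gt_of_ne hD0 with hneg | hpos
      · exact aux_not_wr hdeg (aux_neg_minvec hD hD1 hdeg hα hneg hm1 hm3) hwr
      · exact aux_not_wr hdeg (aux_pos_minvec hD hD1 hdeg hα hpos) hwr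
    · rintro (rfl | rfl)
      · exact absurd rfl hm1
      · exact absurd rfl hm3
end

section
/- Let K = ℚ(i) or K = ℚ(√(-3)), and let I be any nonzero fractional ideal of O_K. Then the lattice Λ_K(I) = σ(I) ⊂ ℝ² is well-rounded. -/
open NumberField
open scoped nonZeroDivisors
open scoped Pointwise

/-- If every element of a nonempty set `T ⊆ ℝ` has the form `n / c` with `n` a
positive natural number and `c > 0` fixed, then `sInf T` is attained. -/
private lemma attainAux {T : Set ℝ} {c : ℝ} (hc : 0 < c) (hne : T.Nonempty)
    (hT : ∀ t ∈ T, ∃ n : ℕ, 0 < n ∧ t = n / c) : sInf T ∈ T := by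
  obtain ⟨t0, ht0⟩ := hne
  obtain ⟨n0, _, hn0'⟩ := hT t0 ht0
  have hNne : {n : ℕ | (n : ℝ) / c ∈ T}.Nonempty := ⟨n0, show ((n0:ℝ)/c) ∈ T from hn0' ▸ ht0⟩
  set m := sInf {n : ℕ | (n : ℝ) / c ∈ T} with hm
  have hmem : (m : ℝ) / c ∈ T := Nat.sInf_mem hNne
  have hlb : ∀ t ∈ T, (m : ℝ) / c ≤ t := by
    intro t ht
    obtain ⟨n, _, rfl⟩ := hT t ht
    have hmn : m ≤ n := Nat.sInf_le ht
    have hmn' : (m : ℝ) ≤ n := by exact_mod_cast hmn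
    gcongr
  have : sInf T = (m : ℝ) / c :=
    le_antisymm (csInf_le ⟨_, hlb⟩ hmem) (le_csInf ⟨t0, ht0⟩ hlb)
  rw [this]; exact hmem

set_option maxHeartbeats 1000000 in
/-- Let `K = ℚ(i)` or `K = ℚ(√-3)`, and let `I` be a nonzero fractional ideal of
`O_K`. Then the lattice `Λ_K(I) = σ(I) ⊂ ℝ²` is well-rounded. -/
theorem statement12 (K : Type*) [Field K] [NumberField K]
    (hdeg : Module.finrank ℚ K = 2)
    (h : (∃ α : K, α ^ 2 = -1) ∨ (∃ α : K, α ^ 2 = -3))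
    (I : FractionalIdeal (𝓞 K)⁰ K) (hI : I ≠ 0) :
    IsWellRounded K ((I : Submodule (𝓞 K) K) : Set K) := by
  classical
  set S : Set K := ((I : Submodule (𝓞 K) K) : Set K) with hS
  -- K has no real infinite place
  have hreal : ∀ w : InfinitePlace K, ¬ w.IsReal := by
    intro w hw
    set φ := NumberField.InfinitePlace.embedding_of_isReal hw with hφ
    rcases h with ⟨α, hα⟩ | ⟨α, hα⟩
    · have h1 := congrArg φ hα
      rw [map_pow, map_neg, map_one] at h1
      nlinarith [sq_nonneg (φ α)]
    · have h1 := congrArg φ hα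
      rw [map_pow, map_neg, map_ofNat] at h1
      nlinarith [sq_nonneg (φ α)]
  -- there is exactly one infinite place, and it is complex
  have hr0 : NumberField.InfinitePlace.nrRealPlaces K = 0 := by
    rw [NumberField.InfinitePlace.nrRealPlaces, Fintype.card_eq_zero_iff]
    exact ⟨fun w => hreal w.1 w.2⟩
  have hrank := NumberField.InfinitePlace.card_add_two_mul_card_eq_rank K
  rw [hdeg, hr0] at hrank
  have hc1 : NumberField.InfinitePlace.nrComplexPlaces K = 1 := by omega
  have hcard : Fintype.card (InfinitePlace K) = 1 := by
    rw [NumberField.InfinitePlace.card_eq_nrRealPlaces_add_nrComplexPlaces, hr0, hc1]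
  obtain ⟨w₀, hw₀⟩ := Fintype.card_eq_one_iff.mp hcard
  have hw₀c : w₀.IsComplex := NumberField.InfinitePlace.not_isReal_iff_isComplex.mp (hreal w₀)
  have huniv : (Finset.univ : Finset (InfinitePlace K)) = {w₀} := by
    ext w; simp [hw₀ w]
  -- sqNorm via the unique place, and via the norm
  have hsq : ∀ x : K, sqNorm K x = (w₀ x) ^ 2 := by
    intro x; rw [sqNorm, huniv, Finset.sum_singleton]
  have hsqnorm : ∀ x : K, sqNorm K x = |(Algebra.norm ℚ x : ℚ)| := by
    intro x
    have hp := NumberField.InfinitePlace.prod_eq_abs_norm x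
    rw [huniv, Finset.prod_singleton] at hp
    rw [hsq x, ← hp, NumberField.InfinitePlace.mult,
      if_neg (NumberField.InfinitePlace.not_isReal_iff_isComplex.mpr hw₀c)]
  -- I contains a nonzero element
  have hex : ∃ x : K, x ∈ S ∧ x ≠ 0 := by
    by_contra h'
    push_neg at h'
    exact hI (FractionalIdeal.eq_zero_iff.mpr (fun x hx => h' x hx))
  -- the denominator of I, and the scaling constant c
  have hd0 : (algebraMap (𝓞 K) K) (I.den : 𝓞 K) ≠ 0 := by
    have : ((I.den : 𝓞 K) : K) ≠ 0 := by
      exact_mod_cast nonZeroDivisors.coe_ne_zero I.den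
    exact this
  set cq : ℚ := |Algebra.norm ℚ ((algebraMap (𝓞 K) K) (I.den : 𝓞 K))| with hcq
  have hcq0 : 0 < cq := by
    rw [hcq, abs_pos]
    exact (Algebra.norm_ne_zero_iff).mpr hd0
  set c : ℝ := (cq : ℝ) with hcdef
  have hc : 0 < c := by rw [hcdef]; exact_mod_cast hcq0
  -- every nonzero element of I has sqNorm of the form n / c
  have hform : ∀ x : K, x ∈ S → x ≠ 0 → ∃ n : ℕ, 0 < n ∧ sqNorm K x = n / c := by
    intro x hx hx0
    have hdx : I.den • x ∈ I.den • (I : Submodule (𝓞 K) K) :=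
      Submodule.smul_mem_pointwise_smul x I.den _ hx
    rw [FractionalIdeal.den_mul_self_eq_num] at hdx
    obtain ⟨y, hy, hyx⟩ := hdx
    have hsmul : I.den • x = (algebraMap (𝓞 K) K) (I.den : 𝓞 K) * x := by
      rw [Submonoid.smul_def, Algebra.smul_def]
    have hyx' : (algebraMap (𝓞 K) K) y = (algebraMap (𝓞 K) K) (I.den : 𝓞 K) * x := by
      rw [← hsmul]; exact hyx
    have hy0 : (algebraMap (𝓞 K) K) y ≠ 0 := by
      rw [hyx']
      exact mul_ne_zero hd0 hx0
    have hnormy : (Algebra.norm ℤ y : ℚ) = Algebra.norm ℚ ((algebraMap (𝓞 K) K) y) :=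
      Algebra.coe_norm_int y
    have hkey : cq * |(Algebra.norm ℚ x : ℚ)| = |(Algebra.norm ℤ y : ℚ)| := by
      rw [hnormy, hyx', map_mul, abs_mul, hcq]
    have hny0 : Algebra.norm ℤ y ≠ 0 := by
      intro h0
      have hnz : Algebra.norm ℚ ((algebraMap (𝓞 K) K) y) ≠ 0 := (Algebra.norm_ne_zero_iff).mpr hy0
      rw [← hnormy, h0] at hnz
      simp at hnz
    refine ⟨(Algebra.norm ℤ y).natAbs, Int.natAbs_pos.mpr hny0, ?_⟩
    have habs : ((Algebra.norm ℤ y).natAbs : ℚ) = |(Algebra.norm ℤ y : ℚ)| := by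
      simp [Nat.cast_natAbs]
    have hq : |(Algebra.norm ℚ x : ℚ)| = ((Algebra.norm ℤ y).natAbs : ℚ) / cq := by
      rw [habs, ← hkey]
      field_simp
    rw [hsqnorm x]
    rw [hcdef]
    exact_mod_cast congrArg (fun q : ℚ => (q : ℝ)) hq
  -- the minimum is attained at some x₀
  set T : Set ℝ := {r : ℝ | ∃ x ∈ S, x ≠ 0 ∧ sqNorm K x = r} with hT
  have hTne : T.Nonempty := by
    obtain ⟨x, hx, hx0⟩ := hex
    exact ⟨sqNorm K x, ⟨x, hx, hx0, rfl⟩⟩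
  have hTform : ∀ t ∈ T, ∃ n : ℕ, 0 < n ∧ t = n / c := by
    rintro t ⟨x, hx, hx0, rfl⟩
    exact hform x hx hx0
  have hmemT : sInf T ∈ T := attainAux hc hTne hTform
  have hlat : latMin K S = sInf T := by rw [latMin, hT]
  obtain ⟨x₀, hx₀S, hx₀0, hx₀min⟩ := hmemT
  rw [← hlat] at hx₀min
  -- the special unit u
  obtain ⟨u, hu⟩ : ∃ u : K, (u^2 = -1 ∨ u^2 = u - 1) := by
    rcases h with ⟨α, hα⟩ | ⟨α, hα⟩
    · exact ⟨α, Or.inl hα⟩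
    · exact ⟨(1 + α)/2, Or.inr (by linear_combination hα / 4)⟩
  have hu12 : u ^ 12 = 1 := by
    rcases hu with h1 | h2
    · have h4 : u ^ 4 = 1 := by linear_combination (u^2 - 1) * h1
      linear_combination (u^8 + u^4 + 1) * h4
    · have h3 : u ^ 3 = -1 := by linear_combination (u + 1) * h2
      linear_combination (u^9 - u^6 + u^3 - 1) * h3
  have hu0 : u ≠ 0 := by
    intro h0
    rw [h0] at hu12
    simp at hu12
  have hint : IsIntegral ℤ u := by
    refine ⟨Polynomial.X ^ 12 + Polynomial.C (-1), Polynomial.monic_X_pow_add_C _ (by norm_num), ?_⟩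
    simp [hu12]
  have hw₀u : w₀ u = 1 := by
    have h1 : (w₀ u) ^ 12 = 1 := by rw [← map_pow, hu12, map_one]
    have hnn : 0 ≤ w₀ u := apply_nonneg w₀ u
    rcases lt_trichotomy (w₀ u) 1 with hlt | heq | hgt
    · have := pow_lt_one₀ hnn hlt (by norm_num : (12:ℕ) ≠ 0)
      linarith
    · exact heq
    · have := one_lt_pow₀ hgt (by norm_num : (12:ℕ) ≠ 0)
      linarith
  -- u is nonreal at the embedding of w₀
  have hnonreal : ∀ r : ℝ, (NumberField.InfinitePlace.embedding w₀) u ≠ (r : ℂ) := by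
    intro r hr
    rcases hu with h1 | h2
    · have hτ : ((NumberField.InfinitePlace.embedding w₀) u) ^ 2 = -1 := by
        rw [← map_pow, h1, map_neg, map_one]
      rw [hr] at hτ
      have hre : r ^ 2 = -1 := by exact_mod_cast hτ
      nlinarith [sq_nonneg r]
    · have hτ : ((NumberField.InfinitePlace.embedding w₀) u) ^ 2 =
          (NumberField.InfinitePlace.embedding w₀) u - 1 := by
        rw [← map_pow, h2, map_sub, map_one]
      rw [hr] at hτ
      have hre : r ^ 2 = r - 1 := by exact_mod_cast hτ
      nlinarith [sq_nonneg (2*r - 1)]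
  -- u * x₀ is also a minimal vector
  have hux : u * x₀ ∈ S := by
    have hmem : (⟨u, hint⟩ : 𝓞 K) • x₀ ∈ (I : Submodule (𝓞 K) K) :=
      Submodule.smul_mem _ _ hx₀S
    have : (⟨u, hint⟩ : 𝓞 K) • x₀ = u * x₀ := by
      rw [Algebra.smul_def]; rfl
    rwa [this] at hmem
  have hsqu : sqNorm K (u * x₀) = sqNorm K x₀ := by
    rw [hsq, hsq, map_mul, hw₀u, one_mul]
  have hmin1 : x₀ ∈ minVecs K S := ⟨hx₀S, hx₀min⟩
  have hmin2 : u * x₀ ∈ minVecs K S := ⟨hux, by rw [hsqu]; exact hx₀min⟩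
  -- the two minimal vectors are linearly independent
  have hτx₀ : (NumberField.InfinitePlace.embedding w₀) x₀ ≠ 0 :=
    (map_ne_zero _).mpr hx₀0
  have hli : LinearIndependent ℝ ![mixedEmbedding K x₀, mixedEmbedding K (u * x₀)] := by
    rw [LinearIndependent.pair_iff]
    intro s t hst
    have h2 := congrArg (fun p : NumberField.mixedEmbedding.mixedSpace K =>
      p.2 ⟨w₀, hw₀c⟩) hst
    simp only [Prod.snd_add, Prod.smul_snd, Pi.add_apply, Pi.smul_apply,
      NumberField.mixedEmbedding.mixedEmbedding_apply_isComplex, Prod.snd_zero,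
      Pi.zero_apply, Complex.real_smul, map_mul, Prod.snd_mul, Pi.mul_apply] at h2
    have hfac : ((s : ℂ) + (t : ℂ) * (NumberField.InfinitePlace.embedding w₀) u) *
        (NumberField.InfinitePlace.embedding w₀) x₀ = 0 := by
      linear_combination h2
    have hkey := (mul_eq_zero.mp hfac).resolve_right hτx₀
    by_cases ht : t = 0
    · subst ht
      refine ⟨?_, rfl⟩
      simp only [Complex.ofReal_zero, zero_mul, add_zero] at hkey
      exact_mod_cast hkey
    · exfalso
      apply hnonreal (-s / t)
      have ht' : (t : ℂ) ≠ 0 := by exact_mod_cast ht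
      push_cast
      field_simp
      linear_combination hkey
  -- conclude by dimension count
  have hfinr : Module.finrank ℝ (NumberField.mixedEmbedding.mixedSpace K) = 2 := by
    rw [NumberField.mixedEmbedding.finrank, hdeg]
  have hspan2 : Submodule.span ℝ
      (Set.range ![mixedEmbedding K x₀, mixedEmbedding K (u * x₀)]) = ⊤ := by
    apply Submodule.eq_top_of_finrank_eq
    rw [finrank_span_eq_card hli, hfinr]
    simp
  rw [IsWellRounded, eq_top_iff, ← hspan2]
  apply Submodule.span_mono
  rw [Set.range_subset_iff]
  intro i
  fin_cases i
  · exact Set.mem_image_of_mem _ hmin1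
  · exact Set.mem_image_of_mem _ hmin2
end

section
/- Let K be an imaginary quadratic number field with K ≠ ℚ(i) and K ≠ ℚ(√(-3)), and let I be a nonzero principal fractional ideal of O_K. Then the lattice Λ_K(I) = σ(I) ⊂ ℝ² is not well-rounded. -/
open NumberField
open scoped nonZeroDivisors

theorem myCardOne (K : Type*) [Field K] [NumberField K]
    (hdeg : Module.finrank ℚ K = 2) (himag : IsEmpty (K →+* ℝ)) :
    Fintype.card (InfinitePlace K) = 1 := by
  classical
  have h0 : NumberField.InfinitePlace.nrRealPlaces K = 0 := by
    rw [Fintype.card_eq_zero_iff]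
    exact ⟨fun w => himag.elim (InfinitePlace.embedding_of_isReal w.2)⟩
  have h2 := InfinitePlace.card_add_two_mul_card_eq_rank K
  rw [h0, hdeg] at h2
  rw [InfinitePlace.card_eq_nrRealPlaces_add_nrComplexPlaces, h0]
  omega


theorem mySqNorm (K : Type*) [Field K] [NumberField K]
    (hdeg : Module.finrank ℚ K = 2) (himag : IsEmpty (K →+* ℝ)) (x : K) :
    sqNorm K x = |Algebra.norm ℚ x| := by
  obtain ⟨w₀, hw₀⟩ := Fintype.card_eq_one_iff.mp (myCardOne K hdeg himag)
  have hmult : w₀.mult = 2 := by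
    rw [InfinitePlace.mult, if_neg (fun hw => himag.elim (InfinitePlace.embedding_of_isReal hw))]
  have hs : sqNorm K x = (w₀ x) ^ 2 := by
    rw [sqNorm]
    exact Finset.sum_eq_single_of_mem w₀ (Finset.mem_univ _)
      (fun b _ hb => absurd (hw₀ b) hb)
  have hp : (∏ w : InfinitePlace K, w x ^ w.mult) = (w₀ x) ^ 2 := by
    rw [Finset.prod_eq_single_of_mem w₀ (Finset.mem_univ _)
      (fun b _ hb => absurd (hw₀ b) hb), hmult]
  rw [hs, ← hp, InfinitePlace.prod_eq_abs_norm]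

theorem myUnit (K : Type*) [Field K] [NumberField K]
    (hdeg : Module.finrank ℚ K = 2) (himag : IsEmpty (K →+* ℝ))
    (h1 : ¬ ∃ α : K, α ^ 2 = -1) (h3 : ¬ ∃ α : K, α ^ 2 = -3)
    (z : 𝓞 K) (hz : |Algebra.norm ℚ (z : K)| = 1) :
    (z : K) = 1 ∨ (z : K) = -1 := by
  classical
  have hcard : Fintype.card (K →ₐ[ℚ] ℂ) = 2 := by rw [AlgHom.card, hdeg]
  have : Nonempty (K →ₐ[ℚ] ℂ) := Fintype.card_pos_iff.mp (by omega)
  obtain ⟨τ⟩ := this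
  set τ' : K →ₐ[ℚ] ℂ := ((starRingEnd ℂ).comp (τ : K →+* ℂ)).toRatAlgHom with hτ'
  have hτ'app : ∀ x : K, τ' x = starRingEnd ℂ (τ x) := fun x => rfl
  have hne : τ ≠ τ' := by
    intro h
    refine himag.elim (NumberField.ComplexEmbedding.IsReal.embedding (φ := (τ : K →+* ℂ)) ?_)
    rw [NumberField.ComplexEmbedding.isReal_iff]
    ext x
    rw [NumberField.ComplexEmbedding.conjugate_coe_eq]
    exact ((congrFun (congrArg _ h) x).trans (hτ'app x)).symm
  have huniv : (Finset.univ : Finset (K →ₐ[ℚ] ℂ)) = {τ, τ'} := by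
    symm
    apply Finset.eq_univ_of_card
    rw [Finset.card_insert_of_notMem (by simpa using hne), Finset.card_singleton, hcard]
  have htr : ∀ x : K, ((Algebra.trace ℚ K x : ℚ) : ℂ) = τ x + starRingEnd ℂ (τ x) := by
    intro x
    have := trace_eq_sum_embeddings (E := ℂ) (x := x) (K := ℚ) (L := K)
    rwa [huniv, Finset.sum_pair hne, hτ'app, show (algebraMap ℚ ℂ) = (Rat.cast : ℚ → ℂ) from rfl] at this
  have hnm : ∀ x : K, ((Algebra.norm ℚ x : ℚ) : ℂ) = τ x * starRingEnd ℂ (τ x) := by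
    intro x
    have := Algebra.norm_eq_prod_embeddings (E := ℂ) (x := x) (K := ℚ) (L := K)
    rwa [huniv, Finset.prod_pair hne, hτ'app, show (algebraMap ℚ ℂ) = (Rat.cast : ℚ → ℂ) from rfl] at this
  set c : ℂ := τ (z : K) with hc
  have hnz : ((Algebra.norm ℚ ((z : K)) : ℚ) : ℂ) = (Complex.normSq c : ℝ) := by
    rw [hnm, Complex.mul_conj]
  have h0 : ((Algebra.norm ℚ ((z : K)) : ℚ) : ℝ) = Complex.normSq c := by exact_mod_cast hnz
  have hq1 : (Algebra.norm ℚ ((z : K))) = 1 := by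
    have hge : (0:ℝ) ≤ Complex.normSq c := Complex.normSq_nonneg c
    rw [← h0] at hge
    have hge' : (0:ℚ) ≤ Algebra.norm ℚ ((z : K)) := by exact_mod_cast hge
    rwa [abs_of_nonneg hge'] at hz
  have hsq : Complex.normSq c = 1 := by rw [← h0, hq1]; norm_num
  -- z is a unit
  have hu : IsUnit z := by
    rw [NumberField.isUnit_iff_norm, RingOfIntegers.coe_norm, hq1]
    norm_num
  obtain ⟨u, hu⟩ := hu
  set zi : 𝓞 K := ((u⁻¹ : (𝓞 K)ˣ) : 𝓞 K) with hzi
  have hmul : z * zi = 1 := by rw [← hu, hzi]; exact_mod_cast u.mul_inv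
  have hzzi : (z : K) * (zi : K) = 1 := by
    have := congrArg (algebraMap (𝓞 K) K) hmul
    simpa using this
  -- the trace t
  have hcne : c ≠ 0 := by
    intro h; rw [h] at hsq; simp at hsq
  have hcc : c * starRingEnd ℂ c = 1 := by rw [Complex.mul_conj, hsq]; norm_num
  have hconj : starRingEnd ℂ c = c⁻¹ := eq_inv_of_mul_eq_one_right hcc
  have hzic : τ (zi : K) = c⁻¹ := by
    apply eq_inv_of_mul_eq_one_right
    have h' : τ ((z : K) * (zi : K)) = 1 := by rw [hzzi, map_one]
    rw [map_mul] at h'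
    exact h'
  set t : K := (z : K) + (zi : K) with ht
  have htc : τ t = c + c⁻¹ := by rw [ht, map_add, hzic, hc]
  set q : ℚ := Algebra.trace ℚ K t / 2 with hq
  have hqc : (q : ℂ) = c + c⁻¹ := by
    have h2 : ((Algebra.trace ℚ K t : ℚ) : ℂ) = 2 * (c + c⁻¹) := by
      rw [htr, htc, map_add, hconj, map_inv₀, hconj, inv_inv]; ring
    rw [hq]
    push_cast
    rw [h2]; ring
  have htq : t = algebraMap ℚ K q := by
    apply (τ : K →+* ℂ).injective
    show τ t = τ (algebraMap ℚ K q)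
    rw [htc, τ.commutes, show (algebraMap ℚ ℂ) q = (q : ℂ) from rfl, hqc]
  have hint : IsIntegral ℤ t := by
    have := RingOfIntegers.isIntegral_coe (z + zi)
    simpa using this
  have hqint : IsIntegral ℤ q := by
    apply IsIntegral.tower_bot (A := ℚ) (B := K) (algebraMap ℚ K).injective
    rwa [← htq]
  obtain ⟨m, hm⟩ := IsIntegrallyClosed.isIntegral_iff.mp hqint
  have hmq : (m : ℚ) = q := by exact_mod_cast hm
  have habs : ‖c‖ = 1 := by
    have h' := Complex.sq_norm c
    rw [hsq] at h'
    nlinarith [norm_nonneg c]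
  have hb : |(m : ℝ)| ≤ 2 := by
    have h1' : ‖(q : ℂ)‖ ≤ 2 := by
      rw [hqc]
      calc ‖c + c⁻¹‖ ≤ ‖c‖ + ‖c⁻¹‖ := norm_add_le _ _
      _ = 2 := by rw [norm_inv, habs]; norm_num
    have h2' : ((q : ℚ) : ℂ) = ((m : ℤ) : ℂ) := by rw [← hmq]; push_cast; ring
    rw [h2', Complex.norm_intCast] at h1'
    exact h1'
  have hm2 : -2 ≤ m := by
    have h' : (-2 : ℝ) ≤ (m : ℝ) := by cases abs_le.mp hb; linarith
    exact_mod_cast h'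
  have hm2' : m ≤ 2 := by
    have h' : (m : ℝ) ≤ 2 := by cases abs_le.mp hb; linarith
    exact_mod_cast h'
  -- quadratic relation
  have hkey : (z : K) ^ 2 + 1 = (m : K) * (z : K) := by
    have h' : t * (z : K) = (z : K) ^ 2 + 1 := by
      rw [ht]; linear_combination hzzi
    have h'' : t = (m : K) := by
      rw [htq, ← hmq, map_intCast]
    rw [← h'', h']
  interval_cases m
  · -- m = -2 : z = -1
    right
    have h' : ((z : K) + 1) ^ 2 = 0 := by push_cast at hkey ⊢; linear_combination hkey
    have := pow_eq_zero_iff (n := 2) (by norm_num) |>.mp h'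
    linear_combination this
  · exfalso
    exact h3 ⟨2 * (z : K) + 1, by push_cast at hkey ⊢; linear_combination 4 * hkey⟩
  · exfalso
    exact h1 ⟨(z : K), by push_cast at hkey ⊢; linear_combination hkey⟩
  · exfalso
    exact h3 ⟨2 * (z : K) - 1, by push_cast at hkey ⊢; linear_combination 4 * hkey⟩
  · left
    have h' : ((z : K) - 1) ^ 2 = 0 := by push_cast at hkey ⊢; linear_combination hkey
    have := pow_eq_zero_iff (n := 2) (by norm_num) |>.mp h'
    linear_combination this

/-- Let `K` be an imaginary quadratic field with `K ≠ ℚ(i)` and `K ≠ ℚ(√-3)`, and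
let `I` be a nonzero principal fractional ideal of `O_K`. Then the lattice
`Λ_K(I) = σ(I) ⊂ ℝ²` is not well-rounded. -/
theorem statement13 (K : Type*) [Field K] [NumberField K]
    (hdeg : Module.finrank ℚ K = 2) (himag : IsEmpty (K →+* ℝ))
    (h1 : ¬ ∃ α : K, α ^ 2 = -1) (h3 : ¬ ∃ α : K, α ^ 2 = -3)
    (I : FractionalIdeal (𝓞 K)⁰ K) (hI : I ≠ 0)
    (hprinc : (I : Submodule (𝓞 K) K).IsPrincipal) :
    ¬ IsWellRounded K ((I : Submodule (𝓞 K) K) : Set K) := by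
  intro hWR
  haveI := hprinc
  set S : Set K := ((I : Submodule (𝓞 K) K) : Set K) with hS
  set g : K := Submodule.IsPrincipal.generator (I : Submodule (𝓞 K) K) with hgdef
  have hg0 : g ≠ 0 := by
    intro h
    apply hI
    rw [← FractionalIdeal.coeToSubmodule_eq_bot,
      (Submodule.IsPrincipal.eq_bot_iff_generator_eq_zero _)]
    exact h
  have hgnorm : Algebra.norm ℚ g ≠ 0 := by
    rwa [Ne, Algebra.norm_eq_zero_iff]
  have hgS : g ∈ S := Submodule.IsPrincipal.generator_mem _
  have hmemS : ∀ x : K, x ∈ S → ∃ s : 𝓞 K, x = (s : K) * g := by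
    intro x hx
    obtain ⟨s, hs⟩ := (Submodule.IsPrincipal.mem_iff_eq_smul_generator _).mp hx
    exact ⟨s, by rw [hs, Algebra.smul_def]⟩
  -- integer norms are at least 1
  have hnorm1 : ∀ s : 𝓞 K, s ≠ 0 → (1:ℚ) ≤ |Algebra.norm ℚ ((s : K))| := by
    intro s hs
    have h1' : Algebra.norm ℤ s ≠ 0 := Algebra.norm_ne_zero_iff.mpr hs
    have h2' : (1:ℤ) ≤ |Algebra.norm ℤ s| := Int.one_le_abs h1'
    rw [show |Algebra.norm ℚ ((s : K))| = ((|Algebra.norm ℤ s| : ℤ) : ℚ) by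
      rw [← Algebra.coe_norm_int]; push_cast; ring]
    exact_mod_cast h2'
  -- description of the set of norms
  set T : Set ℝ := {r : ℝ | ∃ x ∈ S, x ≠ 0 ∧ sqNorm K x = r} with hT
  have hmemT : sqNorm K g ∈ T := ⟨g, hgS, hg0, rfl⟩
  have hboundT : ∀ r ∈ T, sqNorm K g ≤ r := by
    rintro r ⟨x, hxS, hx0, rfl⟩
    obtain ⟨s, rfl⟩ := hmemS x hxS
    have hs0 : s ≠ 0 := by
      intro h
      apply hx0
      rw [h]; push_cast; ring
    rw [mySqNorm K hdeg himag, mySqNorm K hdeg himag, map_mul, abs_mul]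
    have := hnorm1 s hs0
    have hga : (0:ℚ) ≤ |Algebra.norm ℚ g| := abs_nonneg _
    have : |Algebra.norm ℚ g| ≤ |Algebra.norm ℚ ((s:K))| * |Algebra.norm ℚ g| := by
      nlinarith
    exact_mod_cast this
  have hmin : latMin K S = sqNorm K g := by
    refine le_antisymm (csInf_le ⟨sqNorm K g, hboundT⟩ hmemT) (le_csInf ⟨_, hmemT⟩ hboundT)
  -- classification of minimal vectors
  have hmv : ∀ x ∈ minVecs K S, x = g ∨ x = -g := by
    rintro x ⟨hxS, hxmin⟩
    obtain ⟨s, rfl⟩ := hmemS x hxS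
    rw [hmin] at hxmin
    have hs0 : s ≠ 0 := by
      intro h
      rw [h] at hxmin
      have : sqNorm K ((0:K)) = 0 := by
        rw [mySqNorm K hdeg himag]; simp
      rw [show ((0:𝓞 K):K) * g = 0 by push_cast; ring, this] at hxmin
      rw [mySqNorm K hdeg himag] at hxmin
      have : |Algebra.norm ℚ g| = 0 := by exact_mod_cast hxmin.symm
      exact hgnorm (abs_eq_zero.mp this)
    have hsn : |Algebra.norm ℚ ((s : K))| = 1 := by
      rw [mySqNorm K hdeg himag, mySqNorm K hdeg himag, map_mul, abs_mul] at hxmin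
      have h' : |Algebra.norm ℚ ((s:K))| * |Algebra.norm ℚ g| = |Algebra.norm ℚ g| := by
        exact_mod_cast hxmin
      have hga : |Algebra.norm ℚ g| ≠ 0 := fun h => hgnorm (abs_eq_zero.mp h)
      have h'' : |Algebra.norm ℚ ((s:K))| * |Algebra.norm ℚ g| = 1 * |Algebra.norm ℚ g| := by
        rw [one_mul]; exact h'
      exact mul_right_cancel₀ hga h''
    rcases myUnit K hdeg himag h1 h3 s hsn with h | h
    · left; rw [h, one_mul]
    · right; rw [h]; ring
  -- span argument
  set v := mixedEmbedding K g with hv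
  have hv0 : v ≠ 0 := by
    intro h
    exact hg0 ((mixedEmbedding K).injective (by rw [← hv, h, map_zero]))
  have hsub : mixedEmbedding K '' minVecs K S ⊆ (Submodule.span ℝ {v} : Set _) := by
    rintro _ ⟨x, hx, rfl⟩
    rcases hmv x hx with h | h
    · rw [h]; exact Submodule.mem_span_singleton_self v
    · rw [h, map_neg]
      exact Submodule.neg_mem _ (Submodule.mem_span_singleton_self v)
  have htop : Submodule.span ℝ ({v} : Set _) = ⊤ := by
    rw [eq_top_iff, ← hWR]
    exact Submodule.span_le.mpr hsub
  have hfr := finrank_span_singleton (K := ℝ) hv0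
  rw [htop, finrank_top, NumberField.mixedEmbedding.finrank, hdeg] at hfr
  exact absurd hfr (by norm_num)
end

section
/- Let t ≥ 5 be an odd integer such that D = t² - 4 is squarefree, and let K = ℚ(√D). Then the ℤ-span I of t+2 and ((t+2) - √D)/2 is an ideal of O_K, and the lattice Λ_K(I) = σ(I) ⊂ ℝ² is well-rounded with minimum |Λ_K(I)| = t(t+2). -/
open NumberField

section Helpers2
open Polynomial

variable {K : Type*} [Field K] [NumberField K]

/-- `α` with `α² = t²-4` squarefree is irrational. -/
lemma aux_hirr (t : ℤ) (ht : 5 ≤ t) (hsq : Squarefree (t ^ 2 - 4))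
    (α : K) (hα : α ^ 2 = ((t ^ 2 - 4 : ℤ) : K)) (q : ℚ) : (q : K) ≠ α := by
  intro h
  have hq2 : q ^ 2 = ((t ^ 2 - 4 : ℤ) : ℚ) := by
    have h2 : ((q : K)) ^ 2 = ((t ^ 2 - 4 : ℤ) : K) := by rw [h]; exact hα
    have : (((q ^ 2 : ℚ)) : K) = (((t ^ 2 - 4 : ℤ) : ℚ) : K) := by rw [Rat.cast_pow, Rat.cast_intCast]; exact h2
    exact_mod_cast Rat.cast_injective this
  have hint : IsIntegral ℤ q := by
    refine ⟨X ^ 2 - C (t ^ 2 - 4), monic_X_pow_sub_C _ (by norm_num), ?_⟩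
    simp only [eval₂_sub, eval₂_pow, eval₂_X, eval₂_C]
    rw [hq2]
    simp
  obtain ⟨m, hm⟩ := IsIntegrallyClosed.isIntegral_iff.mp hint
  have hm2 : m ^ 2 = t ^ 2 - 4 := by
    have : ((m ^ 2 : ℤ) : ℚ) = ((t ^ 2 - 4 : ℤ) : ℚ) := by
      push_cast
      rw [show (m : ℚ) = q from hm, hq2]; push_cast; ring
    exact_mod_cast this
  have : IsUnit m := hsq m ⟨1, by linarith [hm2.symm]⟩
  rcases Int.isUnit_iff.mp this with h1 | h1 <;> subst h1 <;> nlinarith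


/-- Every element of `K` is `p + q·α`. -/
lemma aux_rep (hdeg : Module.finrank ℚ K = 2) (α : K) (hirr : ∀ q : ℚ, (q : K) ≠ α)
    (x : K) : ∃ p q : ℚ, x = (p : K) + (q : K) * α := by
  have hli : LinearIndependent ℚ ![(1 : K), α] := by
    rw [LinearIndependent.pair_iff]
    intro s u hsu
    have h1 : (s : K) + (u : K) * α = 0 := by
      rw [Algebra.smul_def, eq_ratCast, Algebra.smul_def, eq_ratCast, mul_one] at hsu
      exact hsu
    by_cases hu : u = 0
    · subst hu
      have : (s : K) = 0 := by push_cast at h1; linear_combination h1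
      exact ⟨by exact_mod_cast this, rfl⟩
    · exfalso
      apply hirr (-s / u)
      have hu' : (u : K) ≠ 0 := by exact_mod_cast hu
      push_cast
      field_simp
      linear_combination -h1
  have hsp : Submodule.span ℚ (Set.range ![(1 : K), α]) = ⊤ :=
    hli.span_eq_top_of_card_eq_finrank (by simp [hdeg])
  have hx : x ∈ Submodule.span ℚ (Set.range ![(1 : K), α]) := by rw [hsp]; trivial
  rw [Submodule.mem_span_range_iff_exists_fun] at hx
  obtain ⟨c, hc⟩ := hx
  refine ⟨c 0, c 1, ?_⟩
  rw [← hc]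
  simp [Fin.sum_univ_two, Algebra.smul_def, eq_ratCast]

/-- Uniqueness of the representation. -/
lemma aux_rep_unique (α : K) (hirr : ∀ q : ℚ, (q : K) ≠ α)
    {p q p' q' : ℚ} (h : (p : K) + (q : K) * α = (p' : K) + (q' : K) * α) :
    p = p' ∧ q = q' := by
  by_cases hq : q = q'
  · subst hq
    have : (p : K) = (p' : K) := by linear_combination h
    exact ⟨by exact_mod_cast this, rfl⟩
  · exfalso
    apply hirr ((p - p') / (q' - q))
    have hqq : ((q' : K) - (q : K)) ≠ 0 := by
      intro hz
      apply hq
      have : (q : K) = (q' : K) := by linear_combination -hz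
      exact_mod_cast this
    push_cast
    field_simp
    linear_combination h


lemma aux_places (t : ℤ) (ht : 5 ≤ t) (hdeg : Module.finrank ℚ K = 2)
    (α : K) (hα : α ^ 2 = ((t ^ 2 - 4 : ℤ) : K)) (hirr : ∀ q : ℚ, (q : K) ≠ α) :
    ∃ (w₁ w₂ : InfinitePlace K) (h₁ : w₁.IsReal) (h₂ : w₂.IsReal),
      w₁ ≠ w₂ ∧ (∀ w : InfinitePlace K, w = w₁ ∨ w = w₂) ∧
      (∀ p q : ℚ, InfinitePlace.embedding_of_isReal h₁ ((p : K) + (q : K) * α)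
          = p + q * Real.sqrt ((t : ℝ) ^ 2 - 4)) ∧
      (∀ p q : ℚ, InfinitePlace.embedding_of_isReal h₂ ((p : K) + (q : K) * α)
          = p - q * Real.sqrt ((t : ℝ) ^ 2 - 4)) := by
  set s : ℝ := Real.sqrt ((t : ℝ) ^ 2 - 4) with hs_def
  have ht' : (5 : ℝ) ≤ (t : ℝ) := by exact_mod_cast ht
  have hDpos : (0 : ℝ) < (t : ℝ) ^ 2 - 4 := by nlinarith
  have hs2 : s ^ 2 = (t : ℝ) ^ 2 - 4 := Real.sq_sqrt hDpos.le
  have hspos : 0 < s := Real.sqrt_pos.mpr hDpos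
  -- every embedding sends α to ±s
  have hval : ∀ φ : K →+* ℂ, φ α = (s : ℂ) ∨ φ α = -(s : ℂ) := by
    intro φ
    have h1 : (φ α) ^ 2 = ((t : ℂ) ^ 2 - 4) := by
      rw [← map_pow, hα, map_intCast]
      push_cast
      ring
    have hsc : ((s : ℝ) : ℂ) ^ 2 = (t : ℂ) ^ 2 - 4 := by
      rw [← Complex.ofReal_pow, hs2]
      push_cast
      ring
    have h2 : (φ α - s) * (φ α + s) = 0 := by linear_combination h1 - hsc
    rcases mul_eq_zero.mp h2 with h | h
    · left; linear_combination h
    · right; linear_combination h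
  -- embeddings agreeing on α are equal
  have hext : ∀ φ ψ : K →+* ℂ, φ α = ψ α → φ = ψ := by
    intro φ ψ hφψ
    ext x
    obtain ⟨p, q, rfl⟩ := aux_rep hdeg α hirr x
    simp only [map_add, map_mul, map_ratCast, hφψ]
  -- every embedding is real
  have hreal : ∀ φ : K →+* ℂ, ComplexEmbedding.IsReal φ := by
    intro φ
    rw [NumberField.ComplexEmbedding.isReal_iff]
    apply hext
    rw [NumberField.ComplexEmbedding.conjugate_coe_eq]
    rcases hval φ with h | h <;> rw [h] <;> simp
  -- there are two embeddings with different values on α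
  have hcard : Fintype.card (K →+* ℂ) = 2 := by
    rw [NumberField.Embeddings.card K ℂ, hdeg]
  obtain ⟨φ₀, ψ₀, hφψ⟩ := Fintype.exists_pair_of_one_lt_card (by rw [hcard]; norm_num)
  have hsne : (s : ℂ) ≠ -(s : ℂ) := by
    intro h
    have : (s : ℂ) = 0 := by linear_combination h / 2
    exact hspos.ne' (by exact_mod_cast this)
  have hex : ∃ φ₁ φ₂ : K →+* ℂ, φ₁ α = (s : ℂ) ∧ φ₂ α = -(s : ℂ) := by
    have hne : φ₀ α ≠ ψ₀ α := fun h => hφψ (hext _ _ h)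
    rcases hval φ₀ with h0 | h0 <;> rcases hval ψ₀ with h1 | h1
    · exact absurd (h0.trans h1.symm) hne
    · exact ⟨φ₀, ψ₀, h0, h1⟩
    · exact ⟨ψ₀, φ₀, h1, h0⟩
    · exact absurd (h0.trans h1.symm) hne
  obtain ⟨φ₁, φ₂, hφ₁, hφ₂⟩ := hex
  have hφne : φ₁ ≠ φ₂ := by
    intro h
    have h2 : φ₁ α = -(s : ℂ) := by rw [h]; exact hφ₂
    exact hsne (hφ₁.symm.trans h2)
  refine ⟨InfinitePlace.mk φ₁, InfinitePlace.mk φ₂, ⟨φ₁, hreal φ₁, rfl⟩, ⟨φ₂, hreal φ₂, rfl⟩,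
    ?_, ?_, ?_, ?_⟩
  · intro h
    rcases InfinitePlace.mk_eq_iff.mp h with h' | h'
    · exact hφne h'
    · rw [NumberField.ComplexEmbedding.isReal_iff.mp (hreal φ₁)] at h'
      exact hφne h'
  · intro w
    have hw := InfinitePlace.mk_embedding w
    rcases hval (InfinitePlace.embedding w) with h | h
    · left
      rw [← hw, hext (InfinitePlace.embedding w) φ₁ (by rw [h, hφ₁])]
    · right
      rw [← hw, hext (InfinitePlace.embedding w) φ₂ (by rw [h, hφ₂])]
  · intro p q
    have h1 : ((InfinitePlace.embedding_of_isReal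
        (⟨φ₁, hreal φ₁, rfl⟩ : (InfinitePlace.mk φ₁).IsReal) ((p : K) + (q : K) * α) : ℝ) : ℂ)
        = ((p + q * s : ℝ) : ℂ) := by
      erw [InfinitePlace.embedding_of_isReal_apply,
        InfinitePlace.embedding_mk_eq_of_isReal (hreal φ₁)]
      simp only [map_add, map_mul, map_ratCast, hφ₁]
      push_cast
      ring
    exact_mod_cast h1
  · intro p q
    have h1 : ((InfinitePlace.embedding_of_isReal
        (⟨φ₂, hreal φ₂, rfl⟩ : (InfinitePlace.mk φ₂).IsReal) ((p : K) + (q : K) * α) : ℝ) : ℂ)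
        = ((p - q * s : ℝ) : ℂ) := by
      erw [InfinitePlace.embedding_of_isReal_apply,
        InfinitePlace.embedding_mk_eq_of_isReal (hreal φ₂)]
      simp only [map_add, map_mul, map_ratCast, hφ₂]
      push_cast
      ring
    exact_mod_cast h1


lemma aux_key_ineq (t a b : ℤ) (ht : 5 ≤ t) (hab : ¬(a = 0 ∧ b = 0)) :
    2 * t ≤ (t + 2) * (2 * a + b) ^ 2 + (t - 2) * b ^ 2 := by
  rcases eq_or_ne b 0 with hb | hb
  · subst hb
    have ha : a ≠ 0 := fun h => hab ⟨h, rfl⟩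
    have h1 : 1 ≤ a ^ 2 := by
      rcases ha.lt_or_gt with h | h <;> nlinarith
    nlinarith
  · have hcase : b = 1 ∨ b = -1 ∨ 4 ≤ b ^ 2 := by
      rcases le_or_gt 2 b with h | h
      · right; right; nlinarith
      · rcases le_or_gt b (-2) with h' | h'
        · right; right; nlinarith
        · interval_cases b
          · right; left; rfl
          · exact absurd rfl hb
          · left; rfl
    rcases hcase with hb1 | hb1 | hb1
    · subst hb1
      have hodd : 2 * a + 1 ≠ 0 := by omega
      have h1 : 1 ≤ (2 * a + 1) ^ 2 := by
        rcases hodd.lt_or_gt with h | h <;> nlinarith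
      nlinarith
    · subst hb1
      have hodd : 2 * a + (-1) ≠ 0 := by omega
      have h1 : 1 ≤ (2 * a + (-1)) ^ 2 := by
        rcases hodd.lt_or_gt with h | h <;> nlinarith
      nlinarith
    · nlinarith [sq_nonneg (2 * a + b)]

/-- `ω = ((t+2) - α)/2` is integral over `ℤ`. -/
lemma aux_omega_integral (t : ℤ) (α : K) (hα : α ^ 2 = ((t ^ 2 - 4 : ℤ) : K)) :
    IsIntegral ℤ ((((t : K) + 2) - α) / 2) := by
  refine ⟨X ^ 2 + (C (-(t + 2)) * X + C (t + 2)), ?_, ?_⟩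
  · exact monic_X_pow_add (lt_of_le_of_lt (degree_linear_le) (by norm_num))
  · push_cast at hα
    simp only [eval₂_add, eval₂_mul, eval₂_pow, eval₂_X, eval₂_C]
    push_cast
    field_simp
    ring_nf
    norm_num
    linear_combination hα

/-- every element of the span is integral over `ℤ`. -/
lemma aux_J_integral (t : ℤ) (α : K) (hα : α ^ 2 = ((t ^ 2 - 4 : ℤ) : K)) (x : K)
    (hx : x ∈ Submodule.span ℤ {((t : K) + 2), (((t : K) + 2) - α) / 2}) :
    IsIntegral ℤ x := by
  refine Submodule.span_induction ?_ isIntegral_zero (fun a b _ _ ha hb => ha.add hb)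
    (fun n a _ ha => ?_) hx
  · intro y hy
    rcases hy with h | h
    · rw [h, show ((t : K) + 2) = algebraMap ℤ K (t + 2) by push_cast; norm_num]
      exact isIntegral_algebraMap
    · rw [Set.mem_singleton_iff] at h
      rw [h]
      exact aux_omega_integral t α hα
  · rw [zsmul_eq_mul, show ((n : K)) = algebraMap ℤ K n from (eq_intCast (algebraMap ℤ K) n).symm]
    exact isIntegral_algebraMap.mul ha


lemma aux_int_coeffs (t : ℤ) (ht : 5 ≤ t) (hodd : Odd t) (hsq : Squarefree (t ^ 2 - 4))
    (hdeg : Module.finrank ℚ K = 2)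
    (α : K) (hα : α ^ 2 = ((t ^ 2 - 4 : ℤ) : K)) (hirr : ∀ q : ℚ, (q : K) ≠ α)
    (x : K) (hx : IsIntegral ℤ x) (p q : ℚ) (hxpq : x = (p : K) + (q : K) * α) :
    ∃ u v : ℤ, (u : ℚ) = 2 * p ∧ (v : ℚ) = 2 * q ∧ u % 2 = v % 2 := by
  rcases eq_or_ne q 0 with hq | hq
  · subst hq
    have hxp : x = algebraMap ℚ K p := by rw [hxpq, eq_ratCast]; push_cast; ring
    have hpint : IsIntegral ℤ p := by
      rw [hxp] at hx
      exact (isIntegral_algebraMap_iff ((algebraMap ℚ K).injective)).mp hx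
    obtain ⟨m, hm⟩ := IsIntegrallyClosed.isIntegral_iff.mp hpint
    refine ⟨2 * m, 0, ?_, by norm_num, by omega⟩
    rw [eq_intCast] at hm
    push_cast
    rw [hm]
  · -- the minimal polynomial of x is X² - 2p X + (p² - q² D)
    set g : ℚ[X] := X ^ 2 + (C (-(2 * p)) * X
      + C (p ^ 2 - q ^ 2 * ((t : ℚ) ^ 2 - 4))) with hg
    have hg_monic : g.Monic :=
      monic_X_pow_add (lt_of_le_of_lt (degree_linear_le) (by norm_num))
    have hg_eval : (Polynomial.aeval x) g = 0 := by
      push_cast at hα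
      rw [hg, hxpq]
      simp only [map_add, map_mul, map_pow, aeval_X, aeval_C, eq_ratCast]
      push_cast
      linear_combination (q : K) ^ 2 * hα
    have hxQ : IsIntegral ℚ x := IsIntegral.of_finite ℚ x
    have hnr : x ∉ (algebraMap ℚ K).range := by
      rintro ⟨c, hc⟩
      apply hirr ((c - p) / q)
      have hq' : (q : K) ≠ 0 := by exact_mod_cast hq
      rw [eq_ratCast] at hc
      push_cast
      field_simp
      linear_combination hc.trans hxpq
    have hmindeg : 2 ≤ (minpoly ℚ x).natDegree := (minpoly.two_le_natDegree_iff hxQ).mpr hnr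
    have hdvd : minpoly ℚ x ∣ g := minpoly.dvd ℚ x hg_eval
    have hgdeg : g.natDegree = 2 := by
      have hdg : g.degree = 2 := by
        rw [hg]
        rw [Polynomial.degree_add_eq_left_of_degree_lt]
        · exact degree_X_pow 2
        · rw [degree_X_pow]
          exact lt_of_le_of_lt (degree_linear_le) (by norm_num)
      exact natDegree_eq_of_degree_eq_some hdg
    have heq : minpoly ℚ x = g := by
      refine Polynomial.eq_of_dvd_of_natDegree_le_of_leadingCoeff hdvd ?_ ?_
      · rw [hgdeg]; exact hmindeg
      · rw [(minpoly.monic hxQ).leadingCoeff, hg_monic.leadingCoeff]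
    have hmap : minpoly ℚ x = (minpoly ℤ x).map (algebraMap ℤ ℚ) :=
      minpoly.isIntegrallyClosed_eq_field_fractions' ℚ hx
    have hc1 : (((minpoly ℤ x).coeff 1 : ℤ) : ℚ) = -(2 * p) := by
      have h := congrArg (fun P : ℚ[X] => P.coeff 1) (hmap.symm.trans heq)
      simp only [hg, coeff_map, coeff_add, coeff_X_pow, coeff_C_mul, coeff_X, coeff_C,
        eq_intCast] at h
      norm_num at h
      exact h
    have hc0 : (((minpoly ℤ x).coeff 0 : ℤ) : ℚ) = p ^ 2 - q ^ 2 * ((t : ℚ) ^ 2 - 4) := by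
      have h := congrArg (fun P : ℚ[X] => P.coeff 0) (hmap.symm.trans heq)
      simp only [hg, coeff_map, coeff_add, coeff_X_pow, coeff_C_mul, coeff_X, coeff_C,
        eq_intCast] at h
      norm_num at h
      exact h
    set u : ℤ := -(minpoly ℤ x).coeff 1 with hu_def
    set N : ℤ := (minpoly ℤ x).coeff 0 with hN_def
    have hu : (u : ℚ) = 2 * p := by push_cast [hu_def]; linarith [hc1]
    have hN : (N : ℚ) = p ^ 2 - q ^ 2 * ((t : ℚ) ^ 2 - 4) := hc0
    set n : ℤ := u ^ 2 - 4 * N with hn_def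
    have hn : (n : ℚ) = (2 * q) ^ 2 * ((t : ℚ) ^ 2 - 4) := by
      push_cast [hn_def]; rw [hu, hN]; ring
    -- 2 q D is an integer
    have hint2 : IsIntegral ℤ (2 * q * ((t : ℚ) ^ 2 - 4)) := by
      refine ⟨X ^ 2 - C (n * (t ^ 2 - 4)), monic_X_pow_sub_C _ (by norm_num), ?_⟩
      simp only [eval₂_sub, eval₂_pow, eval₂_X, eval₂_C]
      rw [eq_intCast (algebraMap ℤ ℚ) (n * (t ^ 2 - 4))]
      push_cast
      linear_combination (4 - (t : ℚ) ^ 2) * hn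
    obtain ⟨m, hm⟩ := IsIntegrallyClosed.isIntegral_iff.mp hint2
    have hD0 : (t ^ 2 - 4 : ℤ) ≠ 0 := by nlinarith
    have hm2 : m ^ 2 = n * (t ^ 2 - 4) := by
      have hm' := hm
      rw [eq_intCast] at hm'
      have : ((m ^ 2 : ℤ) : ℚ) = ((n * (t ^ 2 - 4) : ℤ) : ℚ) := by
        push_cast
        rw [hm', hn]
        ring
      exact_mod_cast this
    have hdvd_m : (t ^ 2 - 4) ∣ m := by
      refine (hsq.dvd_pow_iff_dvd (two_ne_zero)).mp ⟨n, ?_⟩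
      rw [hm2]; ring
    obtain ⟨k, hk⟩ := hdvd_m
    have hv : (k : ℚ) = 2 * q := by
      have hm' := hm
      rw [hk, eq_intCast] at hm'
      have h1 : (((t : ℚ) ^ 2 - 4)) * (k : ℚ) = (((t : ℚ) ^ 2 - 4)) * (2 * q) := by
        push_cast at hm'
        linear_combination hm'
      have hD0' : (((t : ℚ) ^ 2 - 4)) ≠ 0 := by
        have h5 : (5 : ℚ) ≤ (t : ℚ) := by exact_mod_cast ht
        nlinarith
      rcases mul_eq_mul_left_iff.mp h1 with h | h
      · exact h
      · exact absurd h hD0'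
    -- 4 divides u² - k² (t²-4)
    have h4 : (4 : ℤ) ∣ u ^ 2 - k ^ 2 * (t ^ 2 - 4) := by
      refine ⟨N, ?_⟩
      have : ((u ^ 2 - k ^ 2 * (t ^ 2 - 4) : ℤ) : ℚ) = ((4 * N : ℤ) : ℚ) := by
        push_cast [hu, hv, hN]
        ring
      exact_mod_cast this
    obtain ⟨j, hj⟩ := hodd
    refine ⟨u, k, hu, hv, ?_⟩
    rcases Int.even_or_odd u with hU | hU <;> rcases Int.even_or_odd k with hK | hK
    · obtain ⟨a, ha⟩ := hU; obtain ⟨b, hb⟩ := hK; omega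
    · exfalso
      obtain ⟨a, ha⟩ := hU; obtain ⟨b, hb⟩ := hK
      have hexp : u ^ 2 - k ^ 2 * (t ^ 2 - 4) =
          4 * (a ^ 2 - 4 * b ^ 2 * j ^ 2 - 4 * b ^ 2 * j + 3 * b ^ 2 - 4 * b * j ^ 2
            - 4 * b * j + 3 * b - j ^ 2 - j) + 3 := by
        rw [ha, hb, hj]; ring
      rw [hexp] at h4
      omega
    · exfalso
      obtain ⟨a, ha⟩ := hU; obtain ⟨b, hb⟩ := hK
      have hexp : u ^ 2 - k ^ 2 * (t ^ 2 - 4) =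
          4 * (a ^ 2 + a - 4 * b ^ 2 * j ^ 2 - 4 * b ^ 2 * j + 3 * b ^ 2) + 1 := by
        rw [ha, hb, hj]; ring
      rw [hexp] at h4
      omega
    · obtain ⟨a, ha⟩ := hU; obtain ⟨b, hb⟩ := hK; omega


lemma aux_mul_mem (t : ℤ) (ht : 5 ≤ t) (hodd : Odd t) (hsq : Squarefree (t ^ 2 - 4))
    (hdeg : Module.finrank ℚ K = 2)
    (α : K) (hα : α ^ 2 = ((t ^ 2 - 4 : ℤ) : K)) (x : K) (hxint : IsIntegral ℤ x) :
    x * ((t : K) + 2) ∈ Submodule.span ℤ {((t : K) + 2), (((t : K) + 2) - α) / 2} ∧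
    x * ((((t : K) + 2) - α) / 2) ∈ Submodule.span ℤ {((t : K) + 2), (((t : K) + 2) - α) / 2} := by
  have hirr := aux_hirr t ht hsq α hα
  obtain ⟨p, q, hxpq⟩ := aux_rep hdeg α hirr x
  obtain ⟨u, v, hu, hv, hpar⟩ :=
    aux_int_coeffs t ht hodd hsq hdeg α hα hirr x hxint p q hxpq
  obtain ⟨j, hj⟩ := hodd
  obtain ⟨w, hw⟩ : (2 : ℤ) ∣ (u - v) := by omega
  have ht2 : (t : K) = 2 * (j : K) + 1 := by exact_mod_cast hj
  have hα' : α ^ 2 = (2 * (j : K) + 1) ^ 2 - 4 := by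
    rw [← ht2]; push_cast at hα; exact hα
  have hx2 : x = ((v : K) + 2 * (w : K) + (v : K) * α) / 2 := by
    have hu2 : (u : K) = 2 * (p : K) := by
      have h := congrArg (fun r : ℚ => (r : K)) hu
      push_cast at h
      exact h
    have hv2 : (v : K) = 2 * (q : K) := by
      have h := congrArg (fun r : ℚ => (r : K)) hv
      push_cast at h
      exact h
    have huv : (u : K) = (v : K) + 2 * (w : K) := by
      have h := congrArg (fun z : ℤ => (z : K)) hw
      push_cast at h
      linear_combination h
    rw [hxpq, ← huv]
    rw [show (p : K) = (u : K) / 2 by rw [hu2]; ring,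
      show (q : K) = (v : K) / 2 by rw [hv2]; ring]
    ring
  constructor
  · rw [Submodule.mem_span_pair]
    refine ⟨v * (j + 2) + w, -(v * (t + 2)), ?_⟩
    simp only [zsmul_eq_mul]
    push_cast
    rw [ht2, hx2]
    field_simp
    ring
  · rw [Submodule.mem_span_pair]
    refine ⟨v, w - v * (j + 1), ?_⟩
    simp only [zsmul_eq_mul]
    push_cast
    rw [ht2, hx2]
    field_simp
    linear_combination (v : K) * hα'

end Helpers2

/-- Let `t ≥ 5` be an odd integer such that `D = t² - 4` is squarefree, and
`K = ℚ(√D)`. Then the `ℤ`-span `I` of `t+2` and `((t+2) - √D)/2` is an ideal of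
`O_K`, and the lattice `Λ_K(I) ⊂ ℝ²` is well-rounded with minimum `t(t+2)`. -/
theorem statement16 (t : ℤ) (ht : 5 ≤ t) (hodd : Odd t)
    (hsq : Squarefree (t ^ 2 - 4))
    (K : Type*) [Field K] [NumberField K] (hdeg : Module.finrank ℚ K = 2)
    (α : K) (hα : α ^ 2 = ((t ^ 2 - 4 : ℤ) : K)) :
    (∃ I : Ideal (𝓞 K), algebraMap (𝓞 K) K '' (I : Set (𝓞 K)) =
        (Submodule.span ℤ {((t : K) + 2), (((t : K) + 2) - α) / 2} : Set K)) ∧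
    IsWellRounded K
      (Submodule.span ℤ {((t : K) + 2), (((t : K) + 2) - α) / 2} : Set K) ∧
    latMin K (Submodule.span ℤ {((t : K) + 2), (((t : K) + 2) - α) / 2} : Set K) =
      (t : ℝ) * ((t : ℝ) + 2) := by
  classical
  have hirr := aux_hirr t ht hsq α hα
  set ω : K := (((t : K) + 2) - α) / 2 with hω_def
  set g1 : K := (t : K) + 2 with hg1_def
  obtain ⟨w₁, w₂, h₁, h₂, hne, hall, he₁, he₂⟩ := aux_places t ht hdeg α hα hirr
  set s : ℝ := Real.sqrt ((t : ℝ) ^ 2 - 4) with hs_def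
  have ht' : (5 : ℝ) ≤ (t : ℝ) := by exact_mod_cast ht
  have hs2 : s ^ 2 = (t : ℝ) ^ 2 - 4 := Real.sq_sqrt (by nlinarith)
  have hspos : 0 < s := Real.sqrt_pos.mpr (by nlinarith)
  have huniv : ({w₁, w₂} : Finset (InfinitePlace K)) = Finset.univ := by
    apply Finset.eq_univ_iff_forall.mpr
    intro w
    rcases hall w with h | h <;> simp [h]
  have hsqNorm : ∀ p q : ℚ, sqNorm K ((p : K) + (q : K) * α)
      = ((p : ℝ) + (q : ℝ) * s) ^ 2 + ((p : ℝ) - (q : ℝ) * s) ^ 2 := by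
    intro p q
    rw [sqNorm, ← huniv, Finset.sum_pair hne,
      ← InfinitePlace.norm_embedding_of_isReal h₁, ← InfinitePlace.norm_embedding_of_isReal h₂,
      he₁, he₂]
    simp [Real.norm_eq_abs, sq_abs]
  have hlat : ∀ a b : ℤ, (a • g1 + b • ω : K)
      = (((((t : ℚ) + 2) * (2 * a + b) / 2 : ℚ)) : K) + (((-b / 2 : ℚ)) : K) * α := by
    intro a b
    simp only [zsmul_eq_mul, hg1_def, hω_def]
    push_cast
    field_simp
    ring
  have hval : ∀ a b : ℤ, sqNorm K (a • g1 + b • ω)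
      = ((t : ℝ) + 2) * (((t : ℝ) + 2) * (2 * (a : ℝ) + (b : ℝ)) ^ 2
          + ((t : ℝ) - 2) * (b : ℝ) ^ 2) / 2 := by
    intro a b
    rw [hlat a b, hsqNorm]
    push_cast
    linear_combination ((b : ℝ) ^ 2 / 2) * hs2
  have hzero : ∀ a b : ℤ, (a • g1 + b • ω : K) = 0 → a = 0 ∧ b = 0 := by
    intro a b hab
    rw [hlat a b] at hab
    have h0 : ((0 : ℚ) : K) + ((0 : ℚ) : K) * α = 0 := by push_cast; ring
    obtain ⟨hp, hq⟩ := aux_rep_unique α hirr (hab.trans h0.symm)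
    have hb : b = 0 := by
      have h1 : (b : ℚ) = 0 := by
        have := hq
        field_simp at this
        linarith [this]
      exact_mod_cast h1
    subst hb
    refine ⟨?_, rfl⟩
    have htq : ((t : ℚ) + 2) ≠ 0 := by
      have : (5 : ℚ) ≤ (t : ℚ) := by exact_mod_cast ht
      linarith
    have h3 : ((t : ℚ) + 2) * (a : ℚ) = 0 := by linear_combination hp
    rcases mul_eq_zero.mp h3 with h | h
    · exact absurd h htq
    · exact_mod_cast h
  have hωJ : ω ∈ Submodule.span ℤ {g1, ω} := Submodule.subset_span (by simp)
  have hg1J : g1 ∈ Submodule.span ℤ {g1, ω} := Submodule.subset_span (by simp)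
  have hω'J : g1 - ω ∈ Submodule.span ℤ {g1, ω} := Submodule.sub_mem _ hg1J hωJ
  have hω_val : sqNorm K ω = (t : ℝ) * ((t : ℝ) + 2) := by
    have h := hval 0 1
    simp only [zero_smul, zero_add, one_smul] at h
    rw [h]
    push_cast
    ring
  have hω'_val : sqNorm K (g1 - ω) = (t : ℝ) * ((t : ℝ) + 2) := by
    have h := hval 1 (-1)
    simp only [one_smul, neg_smul] at h
    rw [sub_eq_add_neg, h]
    push_cast
    ring
  have hωne : ω ≠ 0 := by
    intro h
    exact one_ne_zero (hzero 0 1 (by simpa using h)).2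
  have hmin : latMin K (Submodule.span ℤ {g1, ω} : Set K) = (t : ℝ) * ((t : ℝ) + 2) := by
    apply IsLeast.csInf_eq
    constructor
    · exact ⟨ω, hωJ, hωne, hω_val⟩
    · rintro r ⟨x, hxJ, hxne, rfl⟩
      rw [SetLike.mem_coe] at hxJ
      obtain ⟨a, b, hab⟩ := Submodule.mem_span_pair.mp hxJ
      rw [← hab, hval a b]
      have hne_ab : ¬(a = 0 ∧ b = 0) := by
        rintro ⟨rfl, rfl⟩
        apply hxne
        rw [← hab]
        simp
      have hk := aux_key_ineq t a b ht hne_ab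
      have hkR : (2 * (t : ℝ)) ≤ ((t : ℝ) + 2) * (2 * (a : ℝ) + (b : ℝ)) ^ 2
          + ((t : ℝ) - 2) * (b : ℝ) ^ 2 := by exact_mod_cast hk
      nlinarith [hkR, ht']
  have hωmin : ω ∈ minVecs K (Submodule.span ℤ {g1, ω} : Set K) :=
    ⟨hωJ, hω_val.trans hmin.symm⟩
  have hω'min : g1 - ω ∈ minVecs K (Submodule.span ℤ {g1, ω} : Set K) :=
    ⟨hω'J, hω'_val.trans hmin.symm⟩
  -- values of the two real embeddings on ω and g1 - ω
  have hωrep : ω = (((((t : ℚ) + 2) / 2 : ℚ)) : K) + (((-1 / 2 : ℚ)) : K) * α := by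
    rw [hω_def]
    push_cast
    ring
  have hω'rep : g1 - ω = (((((t : ℚ) + 2) / 2 : ℚ)) : K) + (((1 / 2 : ℚ)) : K) * α := by
    rw [hω_def, hg1_def]
    push_cast
    ring
  have hx1 : InfinitePlace.embedding_of_isReal h₁ ω = ((t : ℝ) + 2) / 2 - s / 2 := by
    rw [hωrep, he₁]
    push_cast
    ring
  have hy1 : InfinitePlace.embedding_of_isReal h₁ (g1 - ω) = ((t : ℝ) + 2) / 2 + s / 2 := by
    rw [hω'rep, he₁]
    push_cast
    ring
  have hx2 : InfinitePlace.embedding_of_isReal h₂ ω = ((t : ℝ) + 2) / 2 + s / 2 := by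
    rw [hωrep, he₂]
    push_cast
    ring
  have hy2 : InfinitePlace.embedding_of_isReal h₂ (g1 - ω) = ((t : ℝ) + 2) / 2 - s / 2 := by
    rw [hω'rep, he₂]
    push_cast
    ring
  have hWR : IsWellRounded K (Submodule.span ℤ {g1, ω} : Set K) := by
    rw [IsWellRounded]
    have hli : LinearIndependent ℝ ![mixedEmbedding K ω, mixedEmbedding K (g1 - ω)] := by
      rw [LinearIndependent.pair_iff]
      intro c d hcd
      have e1 := congrArg (fun z : NumberField.mixedEmbedding.mixedSpace K => z.1 ⟨w₁, h₁⟩) hcd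
      have e2 := congrArg (fun z : NumberField.mixedEmbedding.mixedSpace K => z.1 ⟨w₂, h₂⟩) hcd
      simp only [Prod.fst_add, Prod.smul_fst, Pi.add_apply, Pi.smul_apply, smul_eq_mul,
        NumberField.mixedEmbedding.mixedEmbedding_apply_isReal, Prod.fst_zero,
        Pi.zero_apply] at e1 e2
      rw [hx1, hy1] at e1
      rw [hx2, hy2] at e2
      have hsum : (c + d) * (((t : ℝ) + 2)) = 0 := by linear_combination e1 + e2
      have hdiff : (c - d) * s = 0 := by linear_combination e2 - e1
      have h1 : c + d = 0 := by
        rcases mul_eq_zero.mp hsum with h | h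
        · exact h
        · nlinarith
      have h2 : c - d = 0 := by
        rcases mul_eq_zero.mp hdiff with h | h
        · exact h
        · exact absurd h hspos.ne'
      constructor <;> linarith
    have hsp : Submodule.span ℝ
        (Set.range ![mixedEmbedding K ω, mixedEmbedding K (g1 - ω)]) = ⊤ :=
      hli.span_eq_top_of_card_eq_finrank
        (by rw [Fintype.card_fin, NumberField.mixedEmbedding.finrank, hdeg])
    apply top_unique
    rw [← hsp]
    apply Submodule.span_mono
    rintro z ⟨i, rfl⟩
    fin_cases i
    · exact ⟨ω, hωmin, rfl⟩
    · exact ⟨g1 - ω, hω'min, rfl⟩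
  -- the ideal
  have hmul : ∀ (r : 𝓞 K) (x : K), x ∈ Submodule.span ℤ {g1, ω} →
      (r : K) * x ∈ Submodule.span ℤ {g1, ω} := by
    intro r x hx
    refine Submodule.span_induction ?_ ?_ ?_ ?_ hx
    · intro y hy
      rcases hy with h | h
      · rw [h]
        exact (aux_mul_mem t ht hodd hsq hdeg α hα (r : K)
          (RingOfIntegers.isIntegral_coe r)).1
      · rw [Set.mem_singleton_iff] at h
        rw [h]
        exact (aux_mul_mem t ht hodd hsq hdeg α hα (r : K)
          (RingOfIntegers.isIntegral_coe r)).2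
    · rw [mul_zero]; exact Submodule.zero_mem _
    · intro a b _ _ ha hb
      rw [mul_add]; exact Submodule.add_mem _ ha hb
    · intro n a _ ha
      rw [mul_smul_comm]; exact Submodule.smul_mem _ n ha
  let I : Ideal (𝓞 K) :=
    { carrier := {r : 𝓞 K | (r : K) ∈ Submodule.span ℤ (insert g1 (Set.singleton ω))},
      add_mem' := fun {a b} ha hb => by
        simp only [Set.mem_setOf_eq, map_add] at *
        exact Submodule.add_mem _ ha hb
      zero_mem' := by
        simp only [Set.mem_setOf_eq, map_zero]
        exact Submodule.zero_mem _
      smul_mem' := fun c x hx => by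
        simp only [Set.mem_setOf_eq, smul_eq_mul, map_mul] at *
        exact hmul c _ hx }
  refine ⟨⟨I, ?_⟩, hWR, hmin⟩
  ext y
  constructor
  · rintro ⟨r, hr, rfl⟩
    exact hr
  · intro hy
    exact ⟨⟨y, aux_J_integral t α hα y hy⟩, hy, rfl⟩
end
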